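/- arXiv:2410.14809 — 5 statements merged into one kernel-verified Lean document; each statement's English description precedes it below -/
import Mathlib

section
/- Let p < 1 and let K ⊆ ℝ be compact. Then cap_p(K) ≥ (cap_p([−1,1])/2) · λ(K), where λ denotes Lebesgue measure on ℝ. In other words, among compact subsets of ℝ of given length, the closed interval minimizes Riesz p-capacity. -/
open MeasureTheory Metric Set ENNReal Filter

noncomputable section

namespace Riesz

variable {E : Type*} [MeasurableSpace E] [PseudoMetricSpace E]

/-- Borel probability measures supported on `K` (i.e. giving full mass to `K`). -/
def probOn (K : Set E) : Set (Measure E) :=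
  {μ | IsProbabilityMeasure μ ∧ μ Kᶜ = 0}

/-- The Riesz `p`-energy `∬ |x-y|^{-p} dμ dμ` of a measure `μ`, valued in `ℝ≥0∞`.
(The kernel `(dist x y)^{-p}`, computed in `ℝ≥0∞`, is `∞` on the diagonal when `p > 0`
and `0` on the diagonal when `p < 0`.) -/
def energyOf (p : ℝ) (μ : Measure E) : ℝ≥0∞ :=
  ∫⁻ z : E × E, (ENNReal.ofReal (dist z.1 z.2)) ^ (-p) ∂(μ.prod μ)

/-- The Riesz `p`-energy of a set `K`, for `p ≠ 0`: a supremum over probability measures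
on `K` when `p < 0`, an infimum when `p > 0`.  (For `K = ∅` this gives `0` when `p < 0`
and `∞` when `p > 0`.) -/
def energy (p : ℝ) (K : Set E) : ℝ≥0∞ :=
  if p < 0 then ⨆ μ ∈ probOn K, energyOf p μ
  else ⨅ μ ∈ probOn K, energyOf p μ

/-- The logarithmic energy `∬ log (1/|x-y|) dμ dμ` of a measure, as an extended real:
the positive part (with value `∞` on the diagonal) minus the negative part. -/
def logEnergyOf (μ : Measure E) : EReal :=
  ((∫⁻ z : E × E, (if dist z.1 z.2 = 0 then ⊤ else
      ENNReal.ofReal (Real.log (1 / dist z.1 z.2))) ∂(μ.prod μ) : ℝ≥0∞) : EReal)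
  - ((∫⁻ z : E × E, ENNReal.ofReal (Real.log (dist z.1 z.2)) ∂(μ.prod μ) : ℝ≥0∞) : EReal)

/-- The logarithmic energy of a set `K`: infimum over probability measures on `K`. -/
def logEnergy (K : Set E) : EReal :=
  ⨅ μ ∈ probOn K, logEnergyOf μ

/-- The Riesz `p`-capacity of a set: `V_p(K)^{-1/p}` for `p ≠ 0`, and the logarithmic
capacity `exp(-V_log(K))` for `p = 0`. -/
def cap (p : ℝ) (K : Set E) : ℝ :=
  if p = 0 then
    (if logEnergy K = ⊤ then 0 else Real.exp (-(logEnergy K).toReal))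
  else ((energy p K).toReal) ^ (-1 / p)

/-- `μ` is a `p`-equilibrium measure of `K`: a probability measure on `K` whose
`p`-energy attains the optimal `p`-energy of `K`. -/
def IsEquilibrium (p : ℝ) (K : Set E) (μ : Measure E) : Prop :=
  μ ∈ probOn K ∧ energyOf p μ = energy p K

/-- A set `Z` has inner `p`-capacity zero: every compact subset has `p`-capacity zero. -/
def InnerCapZero (p : ℝ) (Z : Set E) : Prop :=
  ∀ Z' ⊆ Z, IsCompact Z' → cap p Z' = 0

end Riesz

end

noncomputable section CapAux
namespace CapAux

open MeasureTheory Metric Set ENNReal Filter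

/-- cumulative length function -/
def fK (K : Set ℝ) (x : ℝ) : ℝ := (volume (K ∩ Set.Iic x)).toReal

/-- clamped quantile parameter -/
def cK (K : Set ℝ) (t : ℝ) : ℝ := min ((t+1) * (volume K).toReal / 2) ((volume K).toReal)

/-- quantile map -/
def gK (K : Set ℝ) (t : ℝ) : ℝ := sInf {x ∈ K | cK K t ≤ fK K x}

variable {K : Set ℝ}

lemma fK_nonneg (x : ℝ) : 0 ≤ fK K x := ENNReal.toReal_nonneg

lemma volKfin (hK : IsCompact K) : volume (K ∩ Set.Iic x) ≠ ⊤ :=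
  ((measure_mono Set.inter_subset_left).trans_lt hK.measure_lt_top).ne

lemma fK_mono (hK : IsCompact K) : Monotone (fK K) := by
  intro x y hxy
  exact ENNReal.toReal_le_toReal (volKfin hK) (volKfin hK) |>.mpr
    (measure_mono (Set.inter_subset_inter_right _ (Set.Iic_subset_Iic.mpr hxy)))

lemma fK_lip (hK : IsCompact K) {x y : ℝ} (hxy : x ≤ y) : fK K y ≤ fK K x + (y - x) := by
  have hsub : K ∩ Set.Iic y ⊆ (K ∩ Set.Iic x) ∪ Set.Ioc x y := by
    rintro z ⟨hzK, hz⟩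
    rcases le_or_gt z x with h | h
    · exact Or.inl ⟨hzK, h⟩
    · exact Or.inr ⟨h, hz⟩
  have := (measure_mono hsub).trans (measure_union_le (μ := volume) _ _)
  have h2 : volume (Set.Ioc x y) = ENNReal.ofReal (y - x) := by
    simp [Real.volume_Ioc]
  rw [h2] at this
  have := ENNReal.toReal_le_toReal (volKfin hK)
      (by simp [ENNReal.add_ne_top, (volKfin hK)]) |>.mpr this
  rw [ENNReal.toReal_add (volKfin hK) (by simp)] at this
  simpa [fK, ENNReal.toReal_ofReal (by linarith : (0:ℝ) ≤ y - x)] using this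

lemma fK_lipschitz (hK : IsCompact K) : LipschitzWith 1 (fK K) := by
  apply LipschitzWith.of_dist_le_mul
  intro x y
  simp only [Real.dist_eq, NNReal.coe_one, one_mul]
  rcases le_total x y with h | h
  · rw [abs_sub_comm, abs_of_nonneg (by linarith [fK_mono hK h] : (0:ℝ) ≤ fK K y - fK K x),
      abs_sub_comm, abs_of_nonneg (by linarith : (0:ℝ) ≤ y - x)]
    linarith [fK_lip hK h]
  · rw [abs_of_nonneg (by linarith [fK_mono hK h] : (0:ℝ) ≤ fK K x - fK K y),
      abs_of_nonneg (by linarith : (0:ℝ) ≤ x - y)]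
    linarith [fK_lip hK h]

lemma fK_continuous (hK : IsCompact K) : Continuous (fK K) := (fK_lipschitz hK).continuous



lemma fK_sSup (hK : IsCompact K) : fK K (sSup K) = (volume K).toReal := by
  have : K ∩ Set.Iic (sSup K) = K := by
    apply Set.inter_eq_self_of_subset_left
    exact fun x hx => le_csSup hK.bddAbove hx
  rw [fK, this]

lemma cK_le (t : ℝ) : cK K t ≤ (volume K).toReal := min_le_right _ _

lemma setK_nonempty (hK : IsCompact K) (hne : K.Nonempty) (t : ℝ) : {x ∈ K | cK K t ≤ fK K x}.Nonempty :=
  ⟨sSup K, hK.sSup_mem hne, by rw [fK_sSup hK]; exact cK_le t⟩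

lemma setK_compact (hK : IsCompact K) (t : ℝ) : IsCompact {x ∈ K | cK K t ≤ fK K x} := by
  apply hK.of_isClosed_subset ?_ (Set.sep_subset _ _)
  exact hK.isClosed.inter (isClosed_le continuous_const (fK_continuous hK))

lemma gK_mem (hK : IsCompact K) (hne : K.Nonempty) (t : ℝ) : gK K t ∈ {x ∈ K | cK K t ≤ fK K x} :=
  (setK_compact hK t).sInf_mem (setK_nonempty hK hne t)

lemma gK_mem_K (hK : IsCompact K) (hne : K.Nonempty) (t : ℝ) : gK K t ∈ K := (gK_mem hK hne t).1

lemma fK_gK_ge (hK : IsCompact K) (hne : K.Nonempty) (t : ℝ) : cK K t ≤ fK K (gK K t) := (gK_mem hK hne t).2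

lemma gK_mono (hK : IsCompact K) (hne : K.Nonempty) : Monotone (gK K) := by
  intro s t hst
  apply csInf_le_csInf (hK.bddBelow.mono (Set.sep_subset _ _)) (setK_nonempty hK hne t)
  intro x hx
  exact ⟨hx.1, le_trans (min_le_min (by nlinarith [ENNReal.toReal_nonneg (a := volume K)]) le_rfl) hx.2⟩

end CapAux
end CapAux
noncomputable section CapAux2
namespace CapAux
open MeasureTheory Metric Set ENNReal Filter

variable {K : Set ℝ}

lemma cK_nonneg {t : ℝ} (ht : -1 ≤ t) : 0 ≤ cK K t := by
  have hL : (0:ℝ) ≤ (volume K).toReal := ENNReal.toReal_nonneg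
  refine le_min (by nlinarith) hL

lemma fK_gK_le (hK : IsCompact K) (hne : K.Nonempty) {t : ℝ} (ht : -1 ≤ t) :
    fK K (gK K t) ≤ cK K t := by
  set c := cK K t with hc
  set x₀ := gK K t with hx₀
  have hc0 : 0 ≤ c := cK_nonneg ht
  have key : ∀ x ∈ K, x < x₀ → fK K x < c := by
    intro x hxK hxlt
    by_contra h
    push_neg at h
    have : x₀ ≤ x := csInf_le (hK.bddBelow.mono (Set.sep_subset _ _)) ⟨hxK, h⟩
    linarith
  by_cases hS : (K ∩ Set.Iio x₀).Nonempty
  · set y := sSup (K ∩ Set.Iio x₀) with hy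
    have hbdd : BddAbove (K ∩ Set.Iio x₀) := hK.bddAbove.mono Set.inter_subset_left
    have hyK : y ∈ K := by
      have h1 : y ∈ closure (K ∩ Set.Iio x₀) := csSup_mem_closure hS hbdd
      have h2 : closure (K ∩ Set.Iio x₀) ⊆ K :=
        closure_minimal Set.inter_subset_left hK.isClosed
      exact h2 h1
    have hyle : y ≤ x₀ := csSup_le hS (fun x hx => hx.2.le)
    rcases eq_or_lt_of_le hyle with heq | hlt
    · -- cluster case : points of K approach x₀ from below
      refine le_of_forall_pos_le_add ?_
      intro ε hε
      obtain ⟨x, hxS, hxgt⟩ := exists_lt_of_lt_csSup hS (by linarith : y - ε < y)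
      have hxlt : x < x₀ := hxS.2
      have := fK_lip hK hxlt.le    -- fK x₀ ≤ fK x + (x₀ - x)
      have hfx := key x hxS.1 hxlt
      linarith [fK_lip hK hxlt.le, heq.le, heq.ge]
    · -- gap case
      have hgap : K ∩ Set.Ioo y x₀ = ∅ := by
        ext z; simp only [Set.mem_inter_iff, Set.mem_Ioo, Set.mem_empty_iff_false,
          iff_false, not_and, and_imp]
        intro hzK hzy
        by_contra hlt2
        have : z ≤ y := le_csSup hbdd ⟨hzK, hlt2⟩
        linarith
      have hsub : K ∩ Set.Iic x₀ ⊆ (K ∩ Set.Iic y) ∪ {x₀} := by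
        rintro z ⟨hzK, hz⟩
        rcases lt_or_eq_of_le (Set.mem_Iic.mp hz) with h | h
        · rcases le_or_gt z y with h2 | h2
          · exact Or.inl ⟨hzK, h2⟩
          · exact absurd (show z ∈ K ∩ Set.Ioo y x₀ from ⟨hzK, h2, h⟩) (by simp [hgap])
        · exact Or.inr (by simp [h])
      have hmeas : volume (K ∩ Set.Iic x₀) ≤ volume (K ∩ Set.Iic y) := by
        calc volume (K ∩ Set.Iic x₀) ≤ volume ((K ∩ Set.Iic y) ∪ {x₀}) := measure_mono hsub
        _ ≤ volume (K ∩ Set.Iic y) + volume ({x₀} : Set ℝ) := measure_union_le _ _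
        _ = volume (K ∩ Set.Iic y) := by simp
      have h3 : fK K x₀ ≤ fK K y :=
        (ENNReal.toReal_le_toReal (volKfin hK) (volKfin hK)).mpr hmeas
      exact h3.trans (key y hyK hlt).le
  · -- no points below x₀
    have hsub : K ∩ Set.Iic x₀ ⊆ {x₀} := by
      rintro z ⟨hzK, hz⟩
      rcases lt_or_eq_of_le (Set.mem_Iic.mp hz) with h | h
      · exact absurd (show z ∈ K ∩ Set.Iio x₀ from ⟨hzK, h⟩)
          (by rw [Set.not_nonempty_iff_eq_empty] at hS; simp [hS])
      · simp [h]
    have : volume (K ∩ Set.Iic x₀) = 0 :=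
      le_antisymm ((measure_mono hsub).trans (by simp)) zero_le
    have h0 : fK K x₀ = 0 := by rw [fK, this]; simp
    rw [h0]; exact hc0

lemma gK_expand_le (hK : IsCompact K) (hne : K.Nonempty) {s t : ℝ}
    (hs : s ∈ Set.Icc (-1:ℝ) 1) (ht : t ∈ Set.Icc (-1:ℝ) 1) (hst : s ≤ t) :
    (volume K).toReal / 2 * (t - s) ≤ gK K t - gK K s := by
  have hL : (0:ℝ) ≤ (volume K).toReal := ENNReal.toReal_nonneg
  have h1 := fK_gK_ge hK hne t
  have h2 := fK_gK_le hK hne hs.1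
  have h3 := fK_lip hK (gK_mono hK hne hst)
  have hcs : cK K s = (s+1) * (volume K).toReal / 2 := min_eq_left (by nlinarith [hs.2])
  have hct : cK K t = (t+1) * (volume K).toReal / 2 := min_eq_left (by nlinarith [ht.2])
  rw [hcs] at h2; rw [hct] at h1
  nlinarith

lemma gK_expand (hK : IsCompact K) (hne : K.Nonempty) {s t : ℝ}
    (hs : s ∈ Set.Icc (-1:ℝ) 1) (ht : t ∈ Set.Icc (-1:ℝ) 1) :
    (volume K).toReal / 2 * dist s t ≤ dist (gK K s) (gK K t) := by
  rcases le_total s t with h | h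
  · have := gK_expand_le hK hne hs ht h
    have hg := gK_mono hK hne h
    rw [Real.dist_eq, Real.dist_eq, abs_sub_comm s t, abs_of_nonneg (by linarith : (0:ℝ) ≤ t - s),
      abs_sub_comm, abs_of_nonneg (by linarith : (0:ℝ) ≤ gK K t - gK K s)]
    exact this
  · have := gK_expand_le hK hne ht hs h
    have hg := gK_mono hK hne h
    rw [Real.dist_eq, Real.dist_eq, abs_of_nonneg (by linarith : (0:ℝ) ≤ s - t),
      abs_of_nonneg (by linarith : (0:ℝ) ≤ gK K s - gK K t)]
    exact this

lemma gK_measurable (hK : IsCompact K) (hne : K.Nonempty) : Measurable (gK K) :=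
  (gK_mono hK hne).measurable

end CapAux
end CapAux2
noncomputable section CapAux3
namespace CapAux
open MeasureTheory Metric Set ENNReal Filter

variable {K : Set ℝ}

lemma map_probOn (hK : IsCompact K) (hne : K.Nonempty) {μ : Measure ℝ}
    (hμ : μ ∈ Riesz.probOn (Set.Icc (-1:ℝ) 1)) :
    Measure.map (gK K) μ ∈ Riesz.probOn K := by
  haveI := hμ.1
  refine ⟨Measure.isProbabilityMeasure_map (gK_measurable hK hne).aemeasurable, ?_⟩
  rw [Measure.map_apply (gK_measurable hK hne) hK.isClosed.measurableSet.compl]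
  have h0 : gK K ⁻¹' Kᶜ = ∅ := by
    ext t
    simp [gK_mem_K hK hne t]
  simp [h0]

lemma prod_ae {μ : Measure ℝ} [IsProbabilityMeasure μ] {S : Set ℝ} (h : μ Sᶜ = 0) :
    ∀ᵐ z : ℝ × ℝ ∂(μ.prod μ), z.1 ∈ S ∧ z.2 ∈ S := by
  rw [MeasureTheory.ae_iff]
  have hnull : (μ.prod μ) ((Sᶜ ×ˢ (Set.univ : Set ℝ)) ∪ ((Set.univ : Set ℝ) ×ˢ Sᶜ)) = 0 := by
    refine le_antisymm ((measure_union_le _ _).trans ?_) zero_le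
    rw [Measure.prod_prod, Measure.prod_prod, h]
    simp
  refine measure_mono_null (fun z hz => ?_) hnull
  simp only [Set.mem_setOf_eq, not_and_or] at hz
  rcases hz with hz | hz
  · exact Or.inl ⟨hz, Set.mem_univ _⟩
  · exact Or.inr ⟨Set.mem_univ _, hz⟩

lemma measurable_riesz_kernel (p : ℝ) :
    Measurable fun z : ℝ × ℝ => (ENNReal.ofReal (dist z.1 z.2)) ^ (-p) :=
  ENNReal.continuous_rpow_const.measurable.comp measurable_dist.ennreal_ofReal

lemma measurable_logpos_kernel :
    Measurable fun z : ℝ × ℝ => (if dist z.1 z.2 = 0 then (⊤ : ℝ≥0∞) else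
      ENNReal.ofReal (Real.log (1 / dist z.1 z.2))) := by
  apply Measurable.ite (measurable_dist (measurableSet_singleton (0:ℝ))) measurable_const
  exact ((measurable_const.div measurable_dist).log).ennreal_ofReal

lemma measurable_logneg_kernel :
    Measurable fun z : ℝ × ℝ => ENNReal.ofReal (Real.log (dist z.1 z.2)) :=
  measurable_dist.log.ennreal_ofReal

lemma lintegral_map_prod (hK : IsCompact K) (hne : K.Nonempty) (μ : Measure ℝ) [SFinite μ]
    {F : ℝ × ℝ → ℝ≥0∞} (hF : Measurable F) :
    ∫⁻ z, F z ∂((Measure.map (gK K) μ).prod (Measure.map (gK K) μ)) =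
      ∫⁻ z : ℝ × ℝ, F (gK K z.1, gK K z.2) ∂(μ.prod μ) := by
  have hg := gK_measurable hK hne
  rw [Measure.map_prod_map _ _ hg hg, lintegral_map hF (hg.prodMap hg)]
  rfl

end CapAux
end CapAux3
noncomputable section CapAux4
namespace CapAux
open MeasureTheory Metric Set ENNReal Filter

variable {K : Set ℝ}

lemma rpow_anti {x y : ℝ≥0∞} (hxy : x ≤ y) {r : ℝ} (hr : r ≤ 0) : y ^ r ≤ x ^ r := by
  have h : ∀ z : ℝ≥0∞, z ^ r = (z ^ (-r))⁻¹ := fun z => by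
    rw [← ENNReal.rpow_neg, neg_neg]
  rw [h x, h y]
  exact ENNReal.inv_le_inv.mpr (ENNReal.rpow_le_rpow hxy (neg_nonneg.mpr hr))

lemma nonempty_of_vol (hL : 0 < (volume K).toReal) : K.Nonempty := by
  rcases Set.eq_empty_or_nonempty K with h | h
  · simp [h] at hL
  · exact h

lemma diam_ge (hK : IsCompact K) (hL : 0 < (volume K).toReal) :
    (volume K).toReal ≤ diam K := by
  have hne := nonempty_of_vol hL
  have hab : sInf K ≤ sSup K := csInf_le_csSup hne hK.bddBelow hK.bddAbove
  have h1 : K ⊆ Set.Icc (sInf K) (sSup K) := fun x hx =>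
    ⟨csInf_le hK.bddBelow hx, le_csSup hK.bddAbove hx⟩
  have h2 : (volume K).toReal ≤ sSup K - sInf K := by
    have hm := measure_mono (μ := volume) h1
    rw [Real.volume_Icc] at hm
    have h3 := ENNReal.toReal_mono ENNReal.ofReal_ne_top hm
    rwa [ENNReal.toReal_ofReal (by linarith)] at h3
  refine h2.trans ?_
  calc sSup K - sInf K ≤ |sSup K - sInf K| := le_abs_self _
  _ ≤ diam K := by
      rw [← Real.dist_eq]
      exact dist_le_diam_of_mem hK.isBounded (hK.sSup_mem hne) (hK.sInf_mem hne)

lemma energyOf_le_diam {p : ℝ} (hp : p < 0) {S : Set ℝ} (hb : Bornology.IsBounded S)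
    {μ : Measure ℝ} (hμ : μ ∈ Riesz.probOn S) :
    Riesz.energyOf p μ ≤ (ENNReal.ofReal (diam S)) ^ (-p) := by
  haveI := hμ.1
  rw [Riesz.energyOf]
  calc ∫⁻ z : ℝ × ℝ, (ENNReal.ofReal (dist z.1 z.2)) ^ (-p) ∂(μ.prod μ)
      ≤ ∫⁻ _ : ℝ × ℝ, (ENNReal.ofReal (diam S)) ^ (-p) ∂(μ.prod μ) := by
        refine lintegral_mono_ae ?_
        filter_upwards [prod_ae hμ.2] with z hz
        exact ENNReal.rpow_le_rpow (ENNReal.ofReal_le_ofReal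
          (dist_le_diam_of_mem hb hz.1 hz.2)) (by linarith)
  _ = (ENNReal.ofReal (diam S)) ^ (-p) := by rw [lintegral_const]; simp

lemma energyOf_ge_diam {p : ℝ} (hp : 0 < p) {S : Set ℝ} (hb : Bornology.IsBounded S)
    {μ : Measure ℝ} (hμ : μ ∈ Riesz.probOn S) :
    (ENNReal.ofReal (diam S)) ^ (-p) ≤ Riesz.energyOf p μ := by
  haveI := hμ.1
  rw [Riesz.energyOf]
  calc (ENNReal.ofReal (diam S)) ^ (-p)
      = ∫⁻ _ : ℝ × ℝ, (ENNReal.ofReal (diam S)) ^ (-p) ∂(μ.prod μ) := by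
        rw [lintegral_const]; simp
  _ ≤ ∫⁻ z : ℝ × ℝ, (ENNReal.ofReal (dist z.1 z.2)) ^ (-p) ∂(μ.prod μ) := by
        refine lintegral_mono_ae ?_
        filter_upwards [prod_ae hμ.2] with z hz
        exact rpow_anti (ENNReal.ofReal_le_ofReal
          (dist_le_diam_of_mem hb hz.1 hz.2)) (by linarith)

lemma energyOf_map_le (hK : IsCompact K) (hL : 0 < (volume K).toReal) {p : ℝ} (hp : 0 < p)
    {μ : Measure ℝ} (hμ : μ ∈ Riesz.probOn (Set.Icc (-1:ℝ) 1)) :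
    Riesz.energyOf p (Measure.map (gK K) μ) ≤
      (ENNReal.ofReal ((volume K).toReal / 2)) ^ (-p) * Riesz.energyOf p μ := by
  haveI := hμ.1
  have hne := nonempty_of_vol hL
  rw [Riesz.energyOf, Riesz.energyOf,
    lintegral_map_prod hK hne μ (measurable_riesz_kernel p),
    ← lintegral_const_mul _ (measurable_riesz_kernel p)]
  refine lintegral_mono_ae ?_
  filter_upwards [prod_ae hμ.2] with z hz
  have hd := gK_expand hK hne hz.1 hz.2
  calc (ENNReal.ofReal (dist (gK K z.1) (gK K z.2))) ^ (-p)
      ≤ (ENNReal.ofReal ((volume K).toReal / 2 * dist z.1 z.2)) ^ (-p) :=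
        rpow_anti (ENNReal.ofReal_le_ofReal hd) (by linarith)
  _ = (ENNReal.ofReal ((volume K).toReal / 2) * ENNReal.ofReal (dist z.1 z.2)) ^ (-p) := by
        rw [ENNReal.ofReal_mul (by positivity)]
  _ = (ENNReal.ofReal ((volume K).toReal / 2)) ^ (-p) *
        (ENNReal.ofReal (dist z.1 z.2)) ^ (-p) :=
        ENNReal.mul_rpow_of_ne_top ENNReal.ofReal_ne_top ENNReal.ofReal_ne_top _

lemma energyOf_map_ge (hK : IsCompact K) (hL : 0 < (volume K).toReal) {p : ℝ} (hp : p < 0)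
    {μ : Measure ℝ} (hμ : μ ∈ Riesz.probOn (Set.Icc (-1:ℝ) 1)) :
    (ENNReal.ofReal ((volume K).toReal / 2)) ^ (-p) * Riesz.energyOf p μ ≤
      Riesz.energyOf p (Measure.map (gK K) μ) := by
  haveI := hμ.1
  have hne := nonempty_of_vol hL
  rw [Riesz.energyOf, Riesz.energyOf,
    lintegral_map_prod hK hne μ (measurable_riesz_kernel p),
    ← lintegral_const_mul _ (measurable_riesz_kernel p)]
  refine lintegral_mono_ae ?_
  filter_upwards [prod_ae hμ.2] with z hz
  have hd := gK_expand hK hne hz.1 hz.2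
  calc (ENNReal.ofReal ((volume K).toReal / 2)) ^ (-p) *
        (ENNReal.ofReal (dist z.1 z.2)) ^ (-p)
      = (ENNReal.ofReal ((volume K).toReal / 2) * ENNReal.ofReal (dist z.1 z.2)) ^ (-p) :=
        (ENNReal.mul_rpow_of_ne_top ENNReal.ofReal_ne_top ENNReal.ofReal_ne_top _).symm
  _ = (ENNReal.ofReal ((volume K).toReal / 2 * dist z.1 z.2)) ^ (-p) := by
        rw [ENNReal.ofReal_mul (by positivity)]
  _ ≤ (ENNReal.ofReal (dist (gK K z.1) (gK K z.2))) ^ (-p) :=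
        ENNReal.rpow_le_rpow (ENNReal.ofReal_le_ofReal hd) (by linarith)

end CapAux
end CapAux4
noncomputable section CapAux5
namespace CapAux
open MeasureTheory Metric Set ENNReal Filter

variable {K : Set ℝ}

lemma rpow_ne_top {x : ℝ≥0∞} (h0 : x ≠ 0) (ht : x ≠ ⊤) (r : ℝ) : x ^ r ≠ ⊤ := by
  rcases le_or_gt 0 r with h | h
  · exact ENNReal.rpow_ne_top_of_nonneg h ht
  · have : x ^ r = (x ^ (-r))⁻¹ := by rw [← ENNReal.rpow_neg, neg_neg]
    rw [this]
    exact ENNReal.inv_ne_top.mpr (ENNReal.rpow_pos (pos_iff_ne_zero.mpr h0) ht).ne'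

lemma energy_le (hK : IsCompact K) (hL : 0 < (volume K).toReal) {p : ℝ} (hp : 0 < p) :
    Riesz.energy p K ≤
      (ENNReal.ofReal ((volume K).toReal / 2)) ^ (-p) * Riesz.energy p (Set.Icc (-1:ℝ) 1) := by
  have hne := nonempty_of_vol hL
  set C' := (ENNReal.ofReal ((volume K).toReal / 2)) ^ (-p) with hC'
  have hC0 : C' ≠ 0 := (ENNReal.rpow_pos (ENNReal.ofReal_pos.mpr (by linarith))
    ENNReal.ofReal_ne_top).ne'
  have hCt : C' ≠ ⊤ := rpow_ne_top (ENNReal.ofReal_pos.mpr (by linarith)).ne'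
    ENNReal.ofReal_ne_top _
  rw [Riesz.energy, if_neg (not_lt.mpr hp.le), Riesz.energy, if_neg (not_lt.mpr hp.le)]
  rw [mul_comm, ← ENNReal.div_le_iff_le_mul (Or.inl hC0) (Or.inl hCt)]
  refine le_iInf₂ fun μ hμ => ?_
  rw [ENNReal.div_le_iff_le_mul (Or.inl hC0) (Or.inl hCt)]
  calc ⨅ ν ∈ Riesz.probOn K, Riesz.energyOf p ν
      ≤ Riesz.energyOf p (Measure.map (gK K) μ) := iInf₂_le _ (map_probOn hK hne hμ)
  _ ≤ C' * Riesz.energyOf p μ := energyOf_map_le hK hL hp hμ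
  _ = Riesz.energyOf p μ * C' := mul_comm _ _

lemma energy_ge (hK : IsCompact K) (hL : 0 < (volume K).toReal) {p : ℝ} (hp : p < 0) :
    (ENNReal.ofReal ((volume K).toReal / 2)) ^ (-p) * Riesz.energy p (Set.Icc (-1:ℝ) 1) ≤
      Riesz.energy p K := by
  have hne := nonempty_of_vol hL
  rw [Riesz.energy, if_pos hp, Riesz.energy, if_pos hp]
  rw [ENNReal.mul_iSup]
  refine iSup_le fun μ => ?_
  rw [ENNReal.mul_iSup]
  refine iSup_le fun hμ => ?_
  exact (energyOf_map_ge hK hL hp hμ).trans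
    (le_iSup₂ (f := fun ν _ => Riesz.energyOf p ν) (Measure.map (gK K) μ) (map_probOn hK hne hμ))

lemma energy_pos (hK : IsCompact K) (hL : 0 < (volume K).toReal) {p : ℝ} (hp : 0 < p) :
    (ENNReal.ofReal (diam K)) ^ (-p) ≤ Riesz.energy p K := by
  rw [Riesz.energy, if_neg (not_lt.mpr hp.le)]
  exact le_iInf₂ fun μ hμ => energyOf_ge_diam hp hK.isBounded hμ

lemma energy_bdd (hK : IsCompact K) {p : ℝ} (hp : p < 0) :
    Riesz.energy p K ≤ (ENNReal.ofReal (diam K)) ^ (-p) := by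
  rw [Riesz.energy, if_pos hp]
  exact iSup₂_le fun μ hμ => energyOf_le_diam hp hK.isBounded hμ

lemma halfpow (L : ℝ) (hL : 0 < L) {p : ℝ} (hp : p ≠ 0) :
    ((L / 2) ^ (-p)) ^ (-1 / p) = L / 2 := by
  rw [← Real.rpow_mul (by positivity)]
  have : (-p) * (-1 / p) = 1 := by field_simp
  rw [this, Real.rpow_one]

lemma constant_toReal (L : ℝ) (hL : 0 < L) (p : ℝ) :
    ((ENNReal.ofReal (L / 2)) ^ (-p)).toReal = (L / 2) ^ (-p) := by
  rw [← ENNReal.toReal_rpow, ENNReal.toReal_ofReal (by positivity)]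

end CapAux
end CapAux5
noncomputable section CapAux6
namespace CapAux
open MeasureTheory Metric Set ENNReal Filter

variable {K : Set ℝ}

lemma cap_nonneg (p : ℝ) (S : Set ℝ) : 0 ≤ Riesz.cap p S := by
  rw [Riesz.cap]
  split_ifs
  · exact le_refl 0
  · exact (Real.exp_pos _).le
  · exact Real.rpow_nonneg ENNReal.toReal_nonneg _

lemma cap_pos_case (hK : IsCompact K) (hL : 0 < (volume K).toReal) {p : ℝ} (hp : 0 < p) :
    Riesz.cap p (Set.Icc (-1:ℝ) 1) / 2 * (volume K).toReal ≤ Riesz.cap p K := by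
  set L := (volume K).toReal with hLdef
  have hpne : p ≠ 0 := hp.ne'
  have hrne : -1 / p ≠ 0 := div_ne_zero (by norm_num) hpne
  rw [Riesz.cap, if_neg hpne, Riesz.cap, if_neg hpne]
  set VI := Riesz.energy p (Set.Icc (-1:ℝ) 1) with hVIdef
  set VK := Riesz.energy p K with hVKdef
  by_cases hVI : VI = ⊤
  · rw [hVI]
    simp only [ENNReal.toReal_top, Real.zero_rpow hrne, zero_div, zero_mul]
    exact Real.rpow_nonneg ENNReal.toReal_nonneg _
  · have hle := energy_le hK hL hp
    have hCt : (ENNReal.ofReal (L / 2)) ^ (-p) ≠ ⊤ :=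
      rpow_ne_top (ENNReal.ofReal_pos.mpr (by linarith)).ne' ENNReal.ofReal_ne_top _
    have hRt : (ENNReal.ofReal (L / 2)) ^ (-p) * VI ≠ ⊤ := ENNReal.mul_ne_top hCt hVI
    have hVKt : VK ≠ ⊤ := (hle.trans_lt (lt_top_iff_ne_top.mpr hRt)).ne
    have hVK0 : VK ≠ 0 := by
      intro h
      have h2 := energy_pos hK hL hp
      rw [← hVKdef, h] at h2
      have hd : 0 < diam K := lt_of_lt_of_le hL (diam_ge hK hL)
      have h3 := le_antisymm h2 zero_le
      exact absurd h3 (ENNReal.rpow_pos (ENNReal.ofReal_pos.mpr hd) ENNReal.ofReal_ne_top).ne'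
    have htr : VK.toReal ≤ (((ENNReal.ofReal (L / 2)) ^ (-p)) * VI).toReal :=
      ENNReal.toReal_mono hRt hle
    have h1 : ((((ENNReal.ofReal (L / 2)) ^ (-p)) * VI).toReal) ^ (-1 / p) ≤
        VK.toReal ^ (-1 / p) :=
      Real.rpow_le_rpow_of_nonpos (ENNReal.toReal_pos hVK0 hVKt) htr
        (div_nonpos_of_nonpos_of_nonneg (by norm_num) hp.le)
    have e : ((((ENNReal.ofReal (L / 2)) ^ (-p)) * VI).toReal) ^ (-1 / p) =
        VI.toReal ^ (-1 / p) / 2 * L := by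
      rw [ENNReal.toReal_mul, constant_toReal L hL p,
        Real.mul_rpow (by positivity) ENNReal.toReal_nonneg, halfpow L hL hpne]
      ring
    rw [← e]
    exact h1

lemma cap_neg_case (hK : IsCompact K) (hL : 0 < (volume K).toReal) {p : ℝ} (hp : p < 0) :
    Riesz.cap p (Set.Icc (-1:ℝ) 1) / 2 * (volume K).toReal ≤ Riesz.cap p K := by
  set L := (volume K).toReal with hLdef
  have hpne : p ≠ 0 := hp.ne
  rw [Riesz.cap, if_neg hpne, Riesz.cap, if_neg hpne]
  set VI := Riesz.energy p (Set.Icc (-1:ℝ) 1) with hVIdef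
  set VK := Riesz.energy p K with hVKdef
  have hVKt : VK ≠ ⊤ :=
    ((energy_bdd hK hp).trans_lt
      (ENNReal.rpow_lt_top_of_nonneg (by linarith) ENNReal.ofReal_ne_top)).ne
  have hge := energy_ge hK hL hp
  have htr : (((ENNReal.ofReal (L / 2)) ^ (-p)) * VI).toReal ≤ VK.toReal :=
    ENNReal.toReal_mono hVKt hge
  have hr : (0:ℝ) ≤ -1 / p := by
    rw [le_div_iff_of_neg hp]
    simp
  have h1 : ((((ENNReal.ofReal (L / 2)) ^ (-p)) * VI).toReal) ^ (-1 / p) ≤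
      VK.toReal ^ (-1 / p) :=
    Real.rpow_le_rpow ENNReal.toReal_nonneg htr hr
  have e : ((((ENNReal.ofReal (L / 2)) ^ (-p)) * VI).toReal) ^ (-1 / p) =
      VI.toReal ^ (-1 / p) / 2 * L := by
    rw [ENNReal.toReal_mul, constant_toReal L hL p,
      Real.mul_rpow (by positivity) ENNReal.toReal_nonneg, halfpow L hL hpne]
    ring
  rw [← e]
  exact h1

end CapAux
end CapAux6
noncomputable section CapAux7
namespace CapAux
open MeasureTheory Metric Set ENNReal Filter

variable {K : Set ℝ}

/-- positive part of the log kernel -/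
def posk (d : ℝ) : ℝ≥0∞ := if d = 0 then ⊤ else ENNReal.ofReal (Real.log (1/d))

/-- negative part of the log kernel -/
def negk (d : ℝ) : ℝ≥0∞ := ENNReal.ofReal (Real.log d)

lemma ofReal_max0 (x : ℝ) : ENNReal.ofReal x = ENNReal.ofReal (max x 0) := by
  rcases le_total x 0 with h | h
  · rw [ENNReal.ofReal_of_nonpos h, max_eq_right h, ENNReal.ofReal_zero]
  · rw [max_eq_left h]

lemma toReal_ofReal_max (x : ℝ) : (ENNReal.ofReal x).toReal = max x 0 := by
  rw [ofReal_max0 x, ENNReal.toReal_ofReal (le_max_right x 0)]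

lemma max_neg_eq (x : ℝ) : max (-x) 0 = max x 0 - x := by
  rcases le_total x 0 with h | h
  · rw [max_eq_left (by linarith), max_eq_right h]; ring
  · rw [max_eq_right (by linarith), max_eq_left h]; ring

lemma log_pointwise {L d d' : ℝ} (hL : 0 < L) (hd : 0 < d) (hdd : L/2 * d ≤ d') :
    max (Real.log (1/d')) 0 + max (Real.log d) 0 + max (-(Real.log (2/L))) 0 ≤
      max (Real.log (1/d)) 0 + max (Real.log d') 0 + max (Real.log (2/L)) 0 := by
  have hd' : 0 < d' := lt_of_lt_of_le (by positivity) hdd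
  have h1 : Real.log (1/d') = -Real.log d' := by rw [one_div, Real.log_inv]
  have h2 : Real.log (1/d) = -Real.log d := by rw [one_div, Real.log_inv]
  have h3 : Real.log d ≤ Real.log d' + Real.log (2/L) := by
    have hdle : d ≤ d' * (2/L) := by
      rw [← mul_div_assoc, le_div_iff₀ hL]
      nlinarith [hdd]
    calc Real.log d ≤ Real.log (d' * (2/L)) := Real.log_le_log hd hdle
    _ = Real.log d' + Real.log (2/L) := Real.log_mul hd'.ne' (by positivity)
  rw [h1, h2, max_neg_eq (Real.log d'), max_neg_eq (Real.log d),
    max_neg_eq (Real.log (2/L))]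
  linarith

lemma log_pointwise_ennreal {L : ℝ} (hL : 0 < L) {d d' : ℝ} (hd0 : 0 ≤ d)
    (hdd : L/2 * d ≤ d') :
    posk d' + negk d + ENNReal.ofReal (-(Real.log (2/L))) ≤
      posk d + negk d' + ENNReal.ofReal (Real.log (2/L)) := by
  rcases hd0.eq_or_lt with h | hd
  · have : posk d = ⊤ := by rw [posk, if_pos h.symm]
    rw [this, top_add, top_add]
    exact le_top
  · have hd' : 0 < d' := lt_of_lt_of_le (by positivity) hdd
    rw [posk, posk, if_neg hd'.ne', if_neg hd.ne', negk, negk]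
    rw [ofReal_max0 (Real.log (1/d')), ofReal_max0 (Real.log d),
      ofReal_max0 (-(Real.log (2/L))), ofReal_max0 (Real.log (1/d)),
      ofReal_max0 (Real.log d'), ofReal_max0 (Real.log (2/L)),
      ← ENNReal.ofReal_add (le_max_right _ _) (le_max_right _ _),
      ← ENNReal.ofReal_add (by positivity) (le_max_right _ _),
      ← ENNReal.ofReal_add (le_max_right _ _) (le_max_right _ _),
      ← ENNReal.ofReal_add (by positivity) (le_max_right _ _)]
    exact ENNReal.ofReal_le_ofReal (log_pointwise hL hd hdd)

lemma measurable_posk_pair : Measurable fun z : ℝ × ℝ => posk (dist z.1 z.2) :=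
  measurable_logpos_kernel

lemma measurable_negk_pair : Measurable fun z : ℝ × ℝ => negk (dist z.1 z.2) :=
  measurable_logneg_kernel

lemma measurable_pair_g (hK : IsCompact K) (hne : K.Nonempty) :
    Measurable fun z : ℝ × ℝ => (gK K z.1, gK K z.2) :=
  ((gK_measurable hK hne).comp measurable_fst).prodMk
    ((gK_measurable hK hne).comp measurable_snd)

lemma neg_part_le {S : Set ℝ} (hb : Bornology.IsBounded S) {μ : Measure ℝ}
    (hμ : μ ∈ Riesz.probOn S) :
    ∫⁻ z : ℝ × ℝ, negk (dist z.1 z.2) ∂(μ.prod μ) ≤ ENNReal.ofReal (Real.log (diam S)) := by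
  haveI := hμ.1
  calc ∫⁻ z : ℝ × ℝ, negk (dist z.1 z.2) ∂(μ.prod μ)
      ≤ ∫⁻ _ : ℝ × ℝ, ENNReal.ofReal (Real.log (diam S)) ∂(μ.prod μ) := by
        refine lintegral_mono_ae ?_
        filter_upwards [prod_ae hμ.2] with z hz
        rw [negk]
        rcases (dist_nonneg (x := z.1) (y := z.2)).eq_or_lt with h | h
        · rw [← h, Real.log_zero, ENNReal.ofReal_zero]
          exact zero_le
        · exact ENNReal.ofReal_le_ofReal
            (Real.log_le_log h (dist_le_diam_of_mem hb hz.1 hz.2))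
  _ = ENNReal.ofReal (Real.log (diam S)) := by rw [lintegral_const]; simp

lemma coe_ennreal_fin {x : ℝ≥0∞} (hx : x ≠ ⊤) : (x : EReal) = ((x.toReal : ℝ) : EReal) := by
  conv_lhs => rw [← ENNReal.ofReal_toReal hx]
  rw [EReal.coe_ennreal_ofReal, max_eq_left ENNReal.toReal_nonneg]

end CapAux
end CapAux7
noncomputable section CapAux8
namespace CapAux
open MeasureTheory Metric Set ENNReal Filter

variable {K : Set ℝ}

lemma lintegral_split {μ : Measure ℝ} [IsProbabilityMeasure μ]
    {F G : ℝ × ℝ → ℝ≥0∞} (hF : Measurable F) (hG : Measurable G) (C₀ : ℝ≥0∞) :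
    ∫⁻ z, (F z + G z + C₀) ∂(μ.prod μ) =
      (∫⁻ z, F z ∂(μ.prod μ)) + (∫⁻ z, G z ∂(μ.prod μ)) + C₀ := by
  rw [lintegral_add_right _ measurable_const, lintegral_add_right _ hG, lintegral_const,
    measure_univ, mul_one]

lemma logEnergyOf_map_le (hK : IsCompact K) (hL : 0 < (volume K).toReal)
    {μ : Measure ℝ} (hμ : μ ∈ Riesz.probOn (Set.Icc (-1:ℝ) 1)) :
    Riesz.logEnergyOf (Measure.map (gK K) μ) ≤
      Riesz.logEnergyOf μ + ((Real.log (2 / (volume K).toReal) : ℝ) : EReal) := by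
  haveI := hμ.1
  have hne := nonempty_of_vol hL
  set L := (volume K).toReal with hLdef
  set c := Real.log (2 / L) with hcdef
  set PK := ∫⁻ z : ℝ × ℝ, posk (dist (gK K z.1) (gK K z.2)) ∂(μ.prod μ) with hPK
  set NK := ∫⁻ z : ℝ × ℝ, negk (dist (gK K z.1) (gK K z.2)) ∂(μ.prod μ) with hNK
  set PI := ∫⁻ z : ℝ × ℝ, posk (dist z.1 z.2) ∂(μ.prod μ) with hPI
  set NI := ∫⁻ z : ℝ × ℝ, negk (dist z.1 z.2) ∂(μ.prod μ) with hNI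
  have hgmeas := measurable_pair_g hK hne
  have hPKm : Measurable fun z : ℝ × ℝ => posk (dist (gK K z.1) (gK K z.2)) :=
    measurable_posk_pair.comp hgmeas
  have hNKm : Measurable fun z : ℝ × ℝ => negk (dist (gK K z.1) (gK K z.2)) :=
    measurable_negk_pair.comp hgmeas
  have heq1 : Riesz.logEnergyOf (Measure.map (gK K) μ) = (PK : EReal) - (NK : EReal) := by
    rw [Riesz.logEnergyOf]
    congr 1
    · congr 1
      exact lintegral_map_prod hK hne μ measurable_logpos_kernel
    · congr 1
      exact lintegral_map_prod hK hne μ measurable_logneg_kernel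
  have heq2 : Riesz.logEnergyOf μ = (PI : EReal) - (NI : EReal) := rfl
  -- finiteness of the negative parts
  have hNKfin : NK ≠ ⊤ := by
    have : NK ≤ ENNReal.ofReal (Real.log (diam K)) := by
      rw [hNK]
      have := neg_part_le (S := K) hK.isBounded (map_probOn hK hne hμ)
      calc ∫⁻ z : ℝ × ℝ, negk (dist (gK K z.1) (gK K z.2)) ∂(μ.prod μ)
          = ∫⁻ z : ℝ × ℝ, negk (dist z.1 z.2)
              ∂((Measure.map (gK K) μ).prod (Measure.map (gK K) μ)) :=
            (lintegral_map_prod hK hne μ measurable_logneg_kernel).symm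
      _ ≤ _ := this
    exact (this.trans_lt ENNReal.ofReal_lt_top).ne
  have hNIfin : NI ≠ ⊤ :=
    ((neg_part_le (S := Set.Icc (-1:ℝ) 1) (isBounded_Icc (-1:ℝ) 1) hμ).trans_lt
      ENNReal.ofReal_lt_top).ne
  -- main integral inequality
  have key : PK + NI + ENNReal.ofReal (-c) ≤ PI + NK + ENNReal.ofReal c := by
    calc PK + NI + ENNReal.ofReal (-c)
        = ∫⁻ z : ℝ × ℝ, (posk (dist (gK K z.1) (gK K z.2)) + negk (dist z.1 z.2) +
            ENNReal.ofReal (-c)) ∂(μ.prod μ) :=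
          (lintegral_split hPKm measurable_negk_pair _).symm
    _ ≤ ∫⁻ z : ℝ × ℝ, (posk (dist z.1 z.2) + negk (dist (gK K z.1) (gK K z.2)) +
          ENNReal.ofReal c) ∂(μ.prod μ) := by
        refine lintegral_mono_ae ?_
        filter_upwards [prod_ae hμ.2] with z hz
        exact log_pointwise_ennreal hL dist_nonneg (gK_expand hK hne hz.1 hz.2)
    _ = PI + NK + ENNReal.ofReal c := lintegral_split measurable_posk_pair hNKm _
  rw [heq1, heq2]
  by_cases hPIfin : PI = ⊤
  · rw [hPIfin, coe_ennreal_fin hNIfin, EReal.coe_ennreal_top, EReal.top_sub_coe,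
      EReal.top_add_coe]
    exact le_top
  · have hPKfin : PK ≠ ⊤ := by
      have h0 : PK ≤ PK + NI + ENNReal.ofReal (-c) :=
        le_add_right (le_add_right le_rfl)
      have h1 : PK ≤ PI + NK + ENNReal.ofReal c := le_trans h0 key
      exact (h1.trans_lt (by
        refine ENNReal.add_lt_top.mpr ⟨ENNReal.add_lt_top.mpr ⟨?_, ?_⟩, ENNReal.ofReal_lt_top⟩
        · exact lt_top_iff_ne_top.mpr hPIfin
        · exact lt_top_iff_ne_top.mpr hNKfin)).ne
    -- convert everything to real numbers
    have hsum1 : (PK + NI + ENNReal.ofReal (-c)).toReal =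
        PK.toReal + NI.toReal + max (-c) 0 := by
      rw [ENNReal.toReal_add (ENNReal.add_ne_top.mpr ⟨hPKfin, hNIfin⟩) ENNReal.ofReal_ne_top,
        ENNReal.toReal_add hPKfin hNIfin, toReal_ofReal_max]
    have hsum2 : (PI + NK + ENNReal.ofReal c).toReal =
        PI.toReal + NK.toReal + max c 0 := by
      rw [ENNReal.toReal_add (ENNReal.add_ne_top.mpr ⟨hPIfin, hNKfin⟩) ENNReal.ofReal_ne_top,
        ENNReal.toReal_add hPIfin hNKfin, toReal_ofReal_max]
    have key' : PK.toReal + NI.toReal + max (-c) 0 ≤ PI.toReal + NK.toReal + max c 0 := by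
      rw [← hsum1, ← hsum2]
      exact ENNReal.toReal_mono (by
        refine (ENNReal.add_lt_top.mpr ⟨ENNReal.add_lt_top.mpr ⟨?_, ?_⟩, ?_⟩).ne
        · exact lt_top_iff_ne_top.mpr hPIfin
        · exact lt_top_iff_ne_top.mpr hNKfin
        · exact ENNReal.ofReal_lt_top) key
    rw [coe_ennreal_fin hPKfin, coe_ennreal_fin hNKfin, coe_ennreal_fin hPIfin,
      coe_ennreal_fin hNIfin, ← EReal.coe_sub, ← EReal.coe_sub, ← EReal.coe_add]
    rw [EReal.coe_le_coe_iff]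
    have := max_neg_eq c
    linarith

lemma logEnergy_le (hK : IsCompact K) (hL : 0 < (volume K).toReal) :
    Riesz.logEnergy K ≤ Riesz.logEnergy (Set.Icc (-1:ℝ) 1) +
      ((Real.log (2 / (volume K).toReal) : ℝ) : EReal) := by
  have hne := nonempty_of_vol hL
  set c : EReal := ((Real.log (2 / (volume K).toReal) : ℝ) : EReal) with hc
  rw [← EReal.sub_le_iff_le_add (by left; exact EReal.coe_ne_bot _)
    (by left; exact EReal.coe_ne_top _)]
  refine le_iInf₂ fun μ hμ => ?_
  rw [EReal.sub_le_iff_le_add (by left; exact EReal.coe_ne_bot _)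
    (by left; exact EReal.coe_ne_top _)]
  calc Riesz.logEnergy K ≤ Riesz.logEnergyOf (Measure.map (gK K) μ) :=
        iInf₂_le _ (map_probOn hK hne hμ)
  _ ≤ Riesz.logEnergyOf μ + c := logEnergyOf_map_le hK hL hμ

end CapAux
end CapAux8
noncomputable section CapAux9
namespace CapAux
open MeasureTheory Metric Set ENNReal Filter

variable {K : Set ℝ}

lemma logEnergyOf_ge {S : Set ℝ} (hb : Bornology.IsBounded S) {μ : Measure ℝ}
    (hμ : μ ∈ Riesz.probOn S) :
    -((ENNReal.ofReal (Real.log (diam S)) : ℝ≥0∞) : EReal) ≤ Riesz.logEnergyOf μ := by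
  have hN := neg_part_le hb hμ
  have h0 : Riesz.logEnergyOf μ =
      ((∫⁻ z : ℝ × ℝ, posk (dist z.1 z.2) ∂(μ.prod μ) : ℝ≥0∞) : EReal) -
      ((∫⁻ z : ℝ × ℝ, negk (dist z.1 z.2) ∂(μ.prod μ) : ℝ≥0∞) : EReal) := rfl
  rw [h0]
  calc -((ENNReal.ofReal (Real.log (diam S)) : ℝ≥0∞) : EReal)
      ≤ -((∫⁻ z : ℝ × ℝ, negk (dist z.1 z.2) ∂(μ.prod μ) : ℝ≥0∞) : EReal) :=
        EReal.neg_le_neg_iff.mpr (EReal.coe_ennreal_le_coe_ennreal_iff.mpr hN)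
  _ = (0 : EReal) - _ := by rw [sub_eq_add_neg, zero_add]
  _ ≤ _ := EReal.sub_le_sub (EReal.coe_ennreal_nonneg _) le_rfl

lemma logEnergy_ge {S : Set ℝ} (hb : Bornology.IsBounded S) :
    -((ENNReal.ofReal (Real.log (diam S)) : ℝ≥0∞) : EReal) ≤ Riesz.logEnergy S :=
  le_iInf₂ fun _ hμ => logEnergyOf_ge hb hμ

lemma logEnergy_ne_bot {S : Set ℝ} (hb : Bornology.IsBounded S) :
    Riesz.logEnergy S ≠ ⊥ := by
  intro h
  have h2 := logEnergy_ge hb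
  rw [h, le_bot_iff, coe_ennreal_fin ENNReal.ofReal_ne_top, ← EReal.coe_neg] at h2
  exact EReal.coe_ne_bot _ h2

lemma cap_zero_case (hK : IsCompact K) (hL : 0 < (volume K).toReal) :
    Riesz.cap 0 (Set.Icc (-1:ℝ) 1) / 2 * (volume K).toReal ≤ Riesz.cap 0 K := by
  set L := (volume K).toReal with hLdef
  set c := Real.log (2 / L) with hcdef
  rw [Riesz.cap, if_pos rfl, Riesz.cap, if_pos rfl]
  set VI := Riesz.logEnergy (Set.Icc (-1:ℝ) 1) with hVIdef
  set VK := Riesz.logEnergy K with hVKdef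
  by_cases hVI : VI = ⊤
  · rw [if_pos hVI, zero_div, zero_mul]
    split_ifs
    · exact le_rfl
    · exact (Real.exp_pos _).le
  · rw [if_neg hVI]
    have hVIbot : VI ≠ ⊥ := logEnergy_ne_bot (isBounded_Icc (-1:ℝ) 1)
    have hVKbot : VK ≠ ⊥ := logEnergy_ne_bot hK.isBounded
    have hle : VK ≤ VI + (c : EReal) := logEnergy_le hK hL
    set vI := VI.toReal with hvIdef
    have hVIcoe : ((vI : ℝ) : EReal) = VI := EReal.coe_toReal hVI hVIbot
    have hVKtop : VK ≠ ⊤ := by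
      intro h
      rw [h, ← hVIcoe, ← EReal.coe_add, top_le_iff] at hle
      exact EReal.coe_ne_top _ hle
    rw [if_neg hVKtop]
    have htoR : VK.toReal ≤ vI + c := by
      have h2 := EReal.toReal_le_toReal hle hVKbot
        (by rw [← hVIcoe, ← EReal.coe_add]; exact EReal.coe_ne_top _)
      rwa [← hVIcoe, ← EReal.coe_add, EReal.toReal_coe] at h2
    have hexpc : Real.exp (-c) = L / 2 := by
      rw [hcdef, ← Real.log_inv, inv_div, Real.exp_log (by positivity)]
    calc Real.exp (-vI) / 2 * L = Real.exp (-vI) * Real.exp (-c) := by rw [hexpc]; ring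
    _ = Real.exp (-(vI + c)) := by rw [← Real.exp_add]; ring_nf
    _ ≤ Real.exp (-VK.toReal) := Real.exp_le_exp.mpr (by linarith)

end CapAux
end CapAux9
/-- Among compact subsets of `ℝ` of given length, the closed interval minimizes Riesz
`p`-capacity: for `p < 1`, `cap_p(K) ≥ (cap_p([-1,1])/2) ⬝ λ(K)`. -/
theorem statement0 (p : ℝ) (hp : p < 1) (K : Set ℝ) (hK : IsCompact K) :
    Riesz.cap p K ≥ (Riesz.cap p (Set.Icc (-1 : ℝ) 1) / 2) * (volume K).toReal := by
  rcases eq_or_lt_of_le (ENNReal.toReal_nonneg (a := volume K)) with hL | hL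
  · rw [← hL, mul_zero]
    exact CapAux.cap_nonneg p K
  · rcases lt_trichotomy p 0 with h | h | h
    · exact CapAux.cap_neg_case hK hL h
    · rw [h]
      exact CapAux.cap_zero_case hK hL
    · exact CapAux.cap_pos_case hK hL h
end

section
/- Let p ≤ −1 and q ≤ −1. If K ⊆ ℝ is compact and contains more than one point, then cap_q(K)/cap_p(K) = 2^{1/q − 1/p}. -/
open MeasureTheory Metric Set ENNReal Filter

lemma lintegral_dist_le (μ : Measure ℝ) [IsProbabilityMeasure μ] (a b : ℝ)
    (hμ : μ (Set.Icc a b)ᶜ = 0) :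
    ∫⁻ z : ℝ × ℝ, ENNReal.ofReal (dist z.1 z.2) ∂(μ.prod μ) ≤ ENNReal.ofReal (b - a) / 2 := by
  have hmeasS : MeasurableSet {q : (ℝ × ℝ) × ℝ | min q.1.1 q.1.2 < q.2 ∧ q.2 ≤ max q.1.1 q.1.2} := by
    exact (measurableSet_lt ((measurable_fst.fst).min (measurable_fst.snd)) measurable_snd).inter
      (measurableSet_le measurable_snd ((measurable_fst.fst).max (measurable_fst.snd)))
  have h1 : ∀ z : ℝ × ℝ, ENNReal.ofReal (dist z.1 z.2)
      = ∫⁻ t, Set.indicator (Set.Ioc (min z.1 z.2) (max z.1 z.2)) 1 t := by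
    intro z
    rw [lintegral_indicator_one measurableSet_Ioc, Real.volume_Ioc, max_sub_min_eq_abs,
      Real.dist_eq, abs_sub_comm]
  have hswap : ∫⁻ z : ℝ × ℝ, ENNReal.ofReal (dist z.1 z.2) ∂(μ.prod μ)
      = ∫⁻ t, ∫⁻ z : ℝ × ℝ, Set.indicator (Set.Ioc (min z.1 z.2) (max z.1 z.2)) 1 t ∂(μ.prod μ) := by
    simp_rw [h1]
    refine lintegral_lintegral_swap ?_
    have : (Function.uncurry fun (z : ℝ × ℝ) (t : ℝ) =>
        Set.indicator (Set.Ioc (min z.1 z.2) (max z.1 z.2)) (1 : ℝ → ℝ≥0∞) t)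
        = Set.indicator {q : (ℝ × ℝ) × ℝ | min q.1.1 q.1.2 < q.2 ∧ q.2 ≤ max q.1.1 q.1.2} 1 := by
      funext q
      simp [Function.uncurry, Set.indicator_apply, Set.mem_Ioc]
    rw [this]
    exact (measurable_one.indicator hmeasS).aemeasurable
  rw [hswap]
  have hinner : ∀ t : ℝ, ∫⁻ z : ℝ × ℝ, Set.indicator (Set.Ioc (min z.1 z.2) (max z.1 z.2)) 1 t ∂(μ.prod μ)
      = μ (Set.Iio t) * μ (Set.Ici t) + μ (Set.Ici t) * μ (Set.Iio t) := by
    intro t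
    have hset : (fun z : ℝ × ℝ => Set.indicator (Set.Ioc (min z.1 z.2) (max z.1 z.2)) (1 : ℝ → ℝ≥0∞) t)
        = Set.indicator ((Set.Iio t ×ˢ Set.Ici t) ∪ (Set.Ici t ×ˢ Set.Iio t)) 1 := by
      funext z
      have hiff : (min z.1 z.2 < t ∧ t ≤ max z.1 z.2) ↔
          (z ∈ (Set.Iio t ×ˢ Set.Ici t) ∪ (Set.Ici t ×ˢ Set.Iio t)) := by
        simp only [Set.mem_union, Set.mem_prod, Set.mem_Iio, Set.mem_Ici]
        constructor
        · rintro ⟨h1', h2'⟩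
          rcases le_total z.1 z.2 with h | h
          · left; constructor <;> [simpa [min_eq_left h] using h1'; simpa [max_eq_right h] using h2']
          · right; constructor <;> [simpa [max_eq_left h] using h2'; simpa [min_eq_right h] using h1']
        · rintro (⟨h1', h2'⟩ | ⟨h1', h2'⟩)
          · exact ⟨lt_of_le_of_lt (min_le_left _ _) h1', le_trans h2' (le_max_right _ _)⟩
          · exact ⟨lt_of_le_of_lt (min_le_right _ _) h2', le_trans h1' (le_max_left _ _)⟩
      simp only [Set.indicator_apply, Set.mem_Ioc, hiff, Pi.one_apply]
    have hdisj : Disjoint (Set.Iio t ×ˢ Set.Ici t) (Set.Ici t ×ˢ Set.Iio t) := by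
      rw [Set.disjoint_left]
      rintro ⟨x, y⟩ ⟨hx, -⟩ ⟨hx', -⟩
      exact absurd (Set.mem_Ici.1 hx') (not_le.2 (Set.mem_Iio.1 hx))
    rw [hset, lintegral_indicator_one
      (((measurableSet_Iio.prod measurableSet_Ici)).union (measurableSet_Ici.prod measurableSet_Iio)),
      measure_union hdisj (measurableSet_Ici.prod measurableSet_Iio), Measure.prod_prod,
      Measure.prod_prod]
  simp_rw [hinner]
  have hbound : ∀ t : ℝ, μ (Set.Iio t) * μ (Set.Ici t) + μ (Set.Ici t) * μ (Set.Iio t)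
      ≤ Set.indicator (Set.Ioc a b) (fun _ => ENNReal.ofReal (1/2)) t := by
    intro t
    by_cases ht : t ∈ Set.Ioc a b
    · rw [Set.indicator_of_mem ht]
      have hF : μ (Set.Iio t) ≠ ∞ := measure_ne_top μ _
      have hG : μ (Set.Ici t) ≠ ∞ := measure_ne_top μ _
      have hsum : μ (Set.Iio t) + μ (Set.Ici t) = 1 := by
        have := measure_add_measure_compl (μ := μ) (measurableSet_Iio (a := t))
        rwa [compl_Iio, measure_univ] at this
      set f := (μ (Set.Iio t)).toReal
      set g := (μ (Set.Ici t)).toReal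
      have hf0 : 0 ≤ f := ENNReal.toReal_nonneg
      have hg0 : 0 ≤ g := ENNReal.toReal_nonneg
      have hfg : f + g = 1 := by
        rw [← ENNReal.toReal_add hF hG, hsum]; simp
      have hprod : f * g + g * f ≤ 1/2 := by nlinarith [sq_nonneg (f - g)]
      calc μ (Set.Iio t) * μ (Set.Ici t) + μ (Set.Ici t) * μ (Set.Iio t)
          = ENNReal.ofReal (f * g + g * f) := by
            rw [ENNReal.ofReal_add (by positivity) (by positivity),
              ENNReal.ofReal_mul hf0, ENNReal.ofReal_mul hg0,
              ENNReal.ofReal_toReal hF, ENNReal.ofReal_toReal hG]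
        _ ≤ ENNReal.ofReal (1/2) := ENNReal.ofReal_le_ofReal hprod
    · rw [Set.indicator_of_notMem ht]
      rcases not_and_or.1 ht with h | h
      · have h' : t ≤ a := not_lt.1 (by simpa [Set.mem_Ioc] using h)
        have : μ (Set.Iio t) = 0 := measure_mono_null
          (fun x hx => by simp only [Set.mem_compl_iff, Set.mem_Icc, not_and_or, not_le]
                          exact Or.inl (lt_of_lt_of_le hx h')) hμ
        simp [this]
      · have h' : b < t := not_le.1 h
        have : μ (Set.Ici t) = 0 := measure_mono_null
          (fun x hx => by simp only [Set.mem_compl_iff, Set.mem_Icc, not_and_or, not_le]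
                          exact Or.inr (lt_of_lt_of_le h' hx)) hμ
        simp [this]
  calc ∫⁻ t, μ (Set.Iio t) * μ (Set.Ici t) + μ (Set.Ici t) * μ (Set.Iio t)
      ≤ ∫⁻ t, Set.indicator (Set.Ioc a b) (fun _ => ENNReal.ofReal (1/2)) t :=
        lintegral_mono hbound
    _ = ENNReal.ofReal (1/2) * volume (Set.Ioc a b) := lintegral_indicator_const measurableSet_Ioc _
    _ ≤ ENNReal.ofReal (b - a) / 2 := by
        rw [Real.volume_Ioc, ← ENNReal.ofReal_mul (by norm_num)]
        rw [ENNReal.div_eq_inv_mul]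
        have : (2 : ℝ≥0∞)⁻¹ = ENNReal.ofReal (1/2) := by
          rw [ENNReal.ofReal_div_of_pos (by norm_num)]
          norm_num
        rw [this, ← ENNReal.ofReal_mul (by norm_num)]

lemma energy_eq_aux (s : ℝ) (hs : 1 ≤ s) (K : Set ℝ) (hK : IsCompact K) (hK2 : K.Nontrivial) :
    Riesz.energy (-s) K = ENNReal.ofReal (sSup K - sInf K) ^ s / 2 := by
  have hne : K.Nonempty := hK2.nonempty
  set a := sInf K with ha_def
  set b := sSup K with hb_def
  have ha : a ∈ K := hK.sInf_mem hne
  have hb : b ∈ K := hK.sSup_mem hne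
  have hKsub : K ⊆ Set.Icc a b := fun x hx =>
    ⟨csInf_le hK.bddBelow hx, le_csSup hK.bddAbove hx⟩
  have hab : a < b := by
    obtain ⟨x, hx, y, hy, hxy⟩ := hK2
    rcases eq_or_lt_of_le (csInf_le hK.bddBelow hx |>.trans (le_csSup hK.bddAbove hx)) with h | h
    · exfalso
      have hxa : x = a := le_antisymm (by
          have := le_csSup hK.bddAbove hx; rw [← h] at this; exact this) (csInf_le hK.bddBelow hx)
      have hya : y = a := le_antisymm (by
          have := le_csSup hK.bddAbove hy; rw [← h] at this; exact this) (csInf_le hK.bddBelow hy)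
      exact hxy (hxa.trans hya.symm)
    · exact h
  have hd : (0:ℝ) < b - a := sub_pos.2 hab
  have hKm : MeasurableSet K := hK.isClosed.measurableSet
  set D : ℝ≥0∞ := ENNReal.ofReal (b - a) ^ s with hD_def
  have hspos : (0:ℝ) < s := by linarith
  have hf : Measurable (fun z : ℝ × ℝ => (ENNReal.ofReal (dist z.1 z.2)) ^ s) := by
    exact (ENNReal.continuous_rpow_const.comp
      (ENNReal.continuous_ofReal.comp continuous_dist)).measurable
  rw [Riesz.energy, if_pos (by linarith : (-s) < 0)]
  apply le_antisymm
  · -- upper bound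
    refine iSup₂_le fun μ hμ => ?_
    obtain ⟨hprob, hμK⟩ := hμ
    haveI := hprob
    have hμIcc : μ (Set.Icc a b)ᶜ = 0 :=
      measure_mono_null (Set.compl_subset_compl.2 hKsub) hμK
    have hprodK : (μ.prod μ) ((K ×ˢ K)ᶜ) = 0 := by
      rw [Set.compl_prod_eq_union]
      refine le_antisymm (le_trans (measure_union_le _ _) ?_) (zero_le)
      rw [Measure.prod_prod, Measure.prod_prod, hμK]
      simp
    have hae : ∀ᵐ z : ℝ × ℝ ∂(μ.prod μ), z ∈ K ×ˢ K := by
      rw [MeasureTheory.ae_iff]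
      exact hprodK
    rw [Riesz.energyOf]
    simp only [neg_neg]
    calc ∫⁻ z : ℝ × ℝ, (ENNReal.ofReal (dist z.1 z.2)) ^ s ∂(μ.prod μ)
        ≤ ∫⁻ z : ℝ × ℝ, ENNReal.ofReal (b - a) ^ (s - 1) * ENNReal.ofReal (dist z.1 z.2) ∂(μ.prod μ) := by
          refine lintegral_mono_ae (hae.mono fun z hz => ?_)
          obtain ⟨hz1, hz2⟩ := hz
          have hdistle : dist z.1 z.2 ≤ b - a :=
            Real.dist_le_of_mem_Icc (hKsub hz1) (hKsub hz2)
          have hdist0 : (0:ℝ) ≤ dist z.1 z.2 := dist_nonneg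
          rw [ENNReal.ofReal_rpow_of_nonneg hdist0 hspos.le,
            ENNReal.ofReal_rpow_of_nonneg hd.le (by linarith : (0:ℝ) ≤ s - 1),
            ← ENNReal.ofReal_mul (by positivity)]
          apply ENNReal.ofReal_le_ofReal
          calc dist z.1 z.2 ^ s = dist z.1 z.2 ^ (s - 1) * dist z.1 z.2 := by
                rcases eq_or_lt_of_le hdist0 with h0 | h0
                · rw [← h0, Real.zero_rpow hspos.ne', mul_zero]
                · have hsplit : dist z.1 z.2 ^ (s - 1) * dist z.1 z.2 ^ (1:ℝ)
                      = dist z.1 z.2 ^ s := by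
                    rw [← Real.rpow_add h0]; norm_num
                  rw [← hsplit, Real.rpow_one]
            _ ≤ (b - a) ^ (s - 1) * dist z.1 z.2 :=
                mul_le_mul_of_nonneg_right
                  (Real.rpow_le_rpow hdist0 hdistle (by linarith)) hdist0
      _ = ENNReal.ofReal (b - a) ^ (s - 1) * ∫⁻ z : ℝ × ℝ, ENNReal.ofReal (dist z.1 z.2) ∂(μ.prod μ) :=
          lintegral_const_mul _ ((measurable_fst.dist measurable_snd).ennreal_ofReal)
      _ ≤ ENNReal.ofReal (b - a) ^ (s - 1) * (ENNReal.ofReal (b - a) / 2) := by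
          gcongr
          exact lintegral_dist_le μ a b hμIcc
      _ = D / 2 := by
          rw [mul_div_assoc', hD_def]
          congr 1
          have hsplit : ENNReal.ofReal (b - a) ^ (s - 1) * ENNReal.ofReal (b - a) ^ (1:ℝ)
              = ENNReal.ofReal (b - a) ^ s := by
            rw [← ENNReal.rpow_add _ _ (ENNReal.ofReal_pos.2 hd).ne' ENNReal.ofReal_ne_top]
            norm_num
          rw [← hsplit, ENNReal.rpow_one]
  · -- lower bound via two-point measure
    set μ₀ : Measure ℝ := (2:ℝ≥0∞)⁻¹ • (Measure.dirac a + Measure.dirac b) with hμ₀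
    have hprob : IsProbabilityMeasure μ₀ := by
      constructor
      rw [hμ₀, Measure.smul_apply, Measure.add_apply,
        Measure.dirac_apply_of_mem (Set.mem_univ a),
        Measure.dirac_apply_of_mem (Set.mem_univ b), smul_eq_mul, one_add_one_eq_two,
        ENNReal.inv_mul_cancel two_ne_zero ENNReal.ofNat_ne_top]
    have hμ₀K : μ₀ Kᶜ = 0 := by
      rw [hμ₀]
      simp only [Measure.smul_apply, Measure.add_apply, smul_eq_mul]
      rw [Measure.dirac_apply' _ hKm.compl, Measure.dirac_apply' _ hKm.compl]
      simp [ha, hb]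
    haveI := hprob
    have hmem : μ₀ ∈ Riesz.probOn K := ⟨hprob, hμ₀K⟩
    have hcalc : Riesz.energyOf (-s) μ₀ = D / 2 := by
      rw [Riesz.energyOf]
      simp only [neg_neg]
      rw [MeasureTheory.lintegral_prod _ hf.aemeasurable]
      rw [hμ₀]
      simp only [lintegral_smul_measure, lintegral_add_measure, lintegral_dirac]
      have h0 : ∀ x : ℝ, (ENNReal.ofReal (dist x x)) ^ s = 0 := by
        intro x; simp [ENNReal.zero_rpow_of_pos hspos]
      have hDab : (ENNReal.ofReal (dist a b)) ^ s = D ∧ (ENNReal.ofReal (dist b a)) ^ s = D := by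
        constructor <;>
        · rw [hD_def]
          congr 2
          rw [Real.dist_eq]
          first
          | rw [abs_sub_comm, abs_of_pos hd]
          | rw [abs_of_pos hd]
      rw [h0 a, h0 b, hDab.1, hDab.2, zero_add, add_zero, ENNReal.div_eq_inv_mul]
      congr 1
      rw [← two_mul, smul_eq_mul, ← mul_assoc, ENNReal.mul_inv_cancel two_ne_zero ENNReal.ofNat_ne_top, one_mul]
    calc D / 2 = Riesz.energyOf (-s) μ₀ := hcalc.symm
      _ ≤ ⨆ μ ∈ Riesz.probOn K, Riesz.energyOf (-s) μ := le_biSup _ hmem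

lemma cap_eq_aux (p : ℝ) (hp : p ≤ -1) (K : Set ℝ) (hK : IsCompact K) (hK2 : K.Nontrivial) :
    Riesz.cap p K = (sSup K - sInf K) * (2 : ℝ) ^ (1 / p) := by
  have hp0 : p < 0 := by linarith
  have hs1 : 1 ≤ -p := by linarith
  have hs0 : (0:ℝ) < -p := by linarith
  have hd : (0:ℝ) < sSup K - sInf K := by
    obtain ⟨x, hx, y, hy, hxy⟩ := hK2
    rcases lt_trichotomy x y with h | h | h
    · have := csInf_le hK.bddBelow hx
      have := le_csSup hK.bddAbove hy
      linarith
    · exact absurd h hxy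
    · have := csInf_le hK.bddBelow hy
      have := le_csSup hK.bddAbove hx
      linarith
  set d := sSup K - sInf K with hd_def
  have henergy := energy_eq_aux (-p) hs1 K hK hK2
  rw [neg_neg] at henergy
  rw [Riesz.cap, if_neg hp0.ne, henergy]
  have htoReal : ((ENNReal.ofReal d ^ (-p) / 2 : ℝ≥0∞)).toReal = d ^ (-p) / 2 := by
    rw [ENNReal.toReal_div, ← ENNReal.toReal_rpow, ENNReal.toReal_ofReal hd.le]
    norm_num
  rw [htoReal]
  have h2 : (0:ℝ) ≤ 2 := by norm_num
  rw [Real.div_rpow (Real.rpow_nonneg hd.le _) h2]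
  have h1 : (d ^ (-p)) ^ (-1 / p) = d := by
    rw [← Real.rpow_mul hd.le]
    have : -p * (-1 / p) = 1 := by field_simp [hp0.ne]
    rw [this, Real.rpow_one]
  rw [h1]
  have h2' : (2:ℝ) ^ (-1 / p) = ((2:ℝ) ^ (1 / p))⁻¹ := by
    rw [← Real.rpow_neg h2]
    congr 1
    ring
  rw [h2', div_eq_mul_inv, inv_inv]


/-- For `p, q ≤ -1` and compact `K ⊆ ℝ` with more than one point,
`cap_q(K)/cap_p(K) = 2^(1/q - 1/p)`. -/
theorem statement3 (p q : ℝ) (hp : p ≤ -1) (hq : q ≤ -1)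
    (K : Set ℝ) (hK : IsCompact K) (hK2 : K.Nontrivial) :
    Riesz.cap q K / Riesz.cap p K = (2 : ℝ) ^ (1 / q - 1 / p) := by
  have hd : (0:ℝ) < sSup K - sInf K := by
    obtain ⟨x, hx, y, hy, hxy⟩ := hK2
    rcases lt_trichotomy x y with h | h | h
    · have := csInf_le hK.bddBelow hx
      have := le_csSup hK.bddAbove hy
      linarith
    · exact absurd h hxy
    · have := csInf_le hK.bddBelow hy
      have := le_csSup hK.bddAbove hx
      linarith
  rw [cap_eq_aux p hp K hK hK2, cap_eq_aux q hq K hK hK2,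
    mul_div_mul_left _ _ hd.ne', ← Real.rpow_sub (by norm_num : (0:ℝ) < 2)]
end

section
/- Let −1 < p < 0. For every compact set K ⊆ ℝ containing more than one point, cap_p(K) ≥ 2^{1/p} · diam(K), with equality if and only if K consists of exactly two points. Consequently, for q ≤ −1, the ratio cap_q(K)/cap_p(K) is at most 2^{1/q − 1/p}, with equality if and only if K contains exactly two points. -/
open MeasureTheory Metric Set ENNReal Filter

noncomputable section AuxProof

open MeasureTheory Metric Set ENNReal NNReal

namespace RieszAux

lemma meas_ker (s : ℝ) : Measurable fun z : ℝ × ℝ => (ENNReal.ofReal (dist z.1 z.2)) ^ s :=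
  (measurable_fst.dist measurable_snd).ennreal_ofReal.pow_const s

lemma ennreal_amgm (x y : ℝ≥0∞) : 4 * (x * y) ≤ x ^ 2 + 4 * y ^ 2 := by
  rcases eq_or_ne x ⊤ with rfl | hx
  · rcases eq_or_ne y 0 with rfl | hy
    · simp
    · have : ⊤ ^ 2 = (⊤ : ℝ≥0∞) := by simp [ENNReal.top_pow]
      rw [this]; exact le_top.trans (le_add_right le_rfl)
  rcases eq_or_ne y ⊤ with rfl | hy
  · rcases eq_or_ne x 0 with rfl | hx0
    · simp
    · have : (4:ℝ≥0∞) * ⊤ ^ 2 = ⊤ := by simp [ENNReal.top_pow]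
      exact le_add_left (le_of_eq this.symm) |>.trans' le_top
  lift x to ℝ≥0 using hx
  lift y to ℝ≥0 using hy
  have key : (4:ℝ≥0) * (x * y) ≤ x ^ 2 + 4 * y ^ 2 := by
    refine NNReal.coe_le_coe.mp ?_; push_cast; nlinarith [sq_nonneg ((x:ℝ) - 2*y)]
  exact_mod_cast key

lemma ennreal_amgm2 (x y : ℝ≥0∞) : 4 * (x * y) ≤ (x + y) ^ 2 := by
  rcases eq_or_ne x ⊤ with rfl | hx
  · rcases eq_or_ne y 0 with rfl | hy
    · simp
    · have : (⊤ + y) ^ 2 = (⊤:ℝ≥0∞) := by simp [ENNReal.top_pow]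
      rw [this]; exact le_top
  rcases eq_or_ne y ⊤ with rfl | hy
  · rcases eq_or_ne x 0 with rfl | hx0
    · simp
    · have : (x + ⊤) ^ 2 = (⊤:ℝ≥0∞) := by simp [ENNReal.top_pow]
      rw [this]; exact le_top
  lift x to ℝ≥0 using hx
  lift y to ℝ≥0 using hy
  have key : (4:ℝ≥0) * (x * y) ≤ (x + y) ^ 2 := by
    refine NNReal.coe_le_coe.mp ?_; push_cast; nlinarith [sq_nonneg ((x:ℝ) - y)]
  exact_mod_cast key


lemma lintegral_two_point (α β : ℝ≥0∞) (a b : ℝ) (g : ℝ → ℝ≥0∞) :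
    ∫⁻ x, g x ∂(α • Measure.dirac a + β • Measure.dirac b) = α * g a + β * g b := by
  simp [lintegral_add_measure, lintegral_smul_measure, lintegral_dirac]

lemma lintegral_three_point (α β γ : ℝ≥0∞) (a b c : ℝ) (g : ℝ → ℝ≥0∞) :
    ∫⁻ x, g x ∂(α • Measure.dirac a + β • Measure.dirac b + γ • Measure.dirac c)
      = α * g a + β * g b + γ * g c := by
  simp [lintegral_add_measure, lintegral_smul_measure, lintegral_dirac]

lemma energyOf_iterated (p : ℝ) (μ : Measure ℝ) [SFinite μ] :
    Riesz.energyOf p μ = ∫⁻ x, ∫⁻ y, (ENNReal.ofReal (dist x y)) ^ (-p) ∂μ ∂μ :=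
  MeasureTheory.lintegral_prod _ (meas_ker (-p)).aemeasurable

lemma energyOf_two_point {p : ℝ} (hp : p < 0) (α β : ℝ≥0∞) (a b : ℝ) :
    Riesz.energyOf p (α • Measure.dirac a + β • Measure.dirac b)
      = (α * β + β * α) * (ENNReal.ofReal (dist a b)) ^ (-p) := by
  have hs : (0:ℝ) < -p := by linarith
  have hzero : ∀ x : ℝ, (ENNReal.ofReal (dist x x)) ^ (-p) = 0 := by
    intro x; simp [ENNReal.zero_rpow_of_pos hs]
  rw [energyOf_iterated]
  rw [lintegral_two_point]
  rw [lintegral_two_point, lintegral_two_point]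
  rw [hzero, hzero]
  have : dist b a = dist a b := dist_comm b a
  rw [this]
  ring

lemma energyOf_three_point {p : ℝ} (hp : p < 0) (α β γ : ℝ≥0∞) (a b c : ℝ) :
    Riesz.energyOf p (α • Measure.dirac a + β • Measure.dirac b + γ • Measure.dirac c)
      = (α * β + β * α) * (ENNReal.ofReal (dist a b)) ^ (-p)
        + (α * γ + γ * α) * (ENNReal.ofReal (dist a c)) ^ (-p)
        + (β * γ + γ * β) * (ENNReal.ofReal (dist b c)) ^ (-p) := by
  have hs : (0:ℝ) < -p := by linarith
  have hzero : ∀ x : ℝ, (ENNReal.ofReal (dist x x)) ^ (-p) = 0 := by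
    intro x; simp [ENNReal.zero_rpow_of_pos hs]
  rw [energyOf_iterated]
  rw [lintegral_three_point]
  rw [lintegral_three_point, lintegral_three_point, lintegral_three_point]
  rw [hzero, hzero, hzero]
  rw [dist_comm b a, dist_comm c a, dist_comm c b]
  ring

lemma prod_ae_mem {μ : Measure ℝ} [SFinite μ] {A : Set ℝ} (h : μ Aᶜ = 0) :
    ∀ᵐ z ∂(μ.prod μ), z.1 ∈ A ∧ z.2 ∈ A := by
  rw [MeasureTheory.ae_iff]
  refine measure_mono_null (fun z hz => ?_) (?_ : μ.prod μ ((Aᶜ ×ˢ univ) ∪ (univ ×ˢ Aᶜ)) = 0)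
  · simp only [mem_setOf_eq, not_and_or] at hz
    rcases hz with h1 | h2
    · exact Or.inl ⟨h1, trivial⟩
    · exact Or.inr ⟨trivial, h2⟩
  · refine le_antisymm ((measure_union_le _ _).trans ?_) (zero_le)
    simp [Measure.prod_prod, h]

lemma energyOf_le_const {p : ℝ} (hp : p < 0) {K : Set ℝ} (hKb : Bornology.IsBounded K)
    {μ : Measure ℝ} (hμ : μ ∈ Riesz.probOn K) :
    Riesz.energyOf p μ ≤ ENNReal.ofReal ((Metric.diam K) ^ (-p)) := by
  haveI : IsProbabilityMeasure μ := hμ.1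
  have hae := prod_ae_mem (μ := μ) hμ.2
  have hb : ∀ᵐ z ∂(μ.prod μ), (ENNReal.ofReal (dist z.1 z.2)) ^ (-p)
      ≤ ENNReal.ofReal ((Metric.diam K) ^ (-p)) := by
    filter_upwards [hae] with z hz
    rw [ENNReal.ofReal_rpow_of_nonneg dist_nonneg (by linarith : (0:ℝ) ≤ -p)]
    exact ENNReal.ofReal_le_ofReal
      (Real.rpow_le_rpow dist_nonneg (dist_le_diam_of_mem hKb hz.1 hz.2) (by linarith))
  calc Riesz.energyOf p μ ≤ ∫⁻ _ : ℝ × ℝ, ENNReal.ofReal ((Metric.diam K) ^ (-p)) ∂(μ.prod μ) :=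
        lintegral_mono_ae hb
  _ = ENNReal.ofReal ((Metric.diam K) ^ (-p)) := by simp

lemma isProb_two_point : IsProbabilityMeasure
    ((2:ℝ≥0∞)⁻¹ • Measure.dirac (0:ℝ) + (2:ℝ≥0∞)⁻¹ • Measure.dirac 0) := by
  constructor; simp [ENNReal.inv_two_add_inv_two]

lemma twoPointMeasure_mem_probOn {K : Set ℝ} {a b : ℝ} (ha : a ∈ K) (hb : b ∈ K) :
    ((2:ℝ≥0∞)⁻¹ • Measure.dirac a + (2:ℝ≥0∞)⁻¹ • Measure.dirac b) ∈ Riesz.probOn K := by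
  constructor
  · constructor
    simp [ENNReal.inv_two_add_inv_two]
  · have h1 : Measure.dirac a Kᶜ = 0 := by
      simp [Measure.dirac_apply, Set.indicator_apply, ha]
    have h2 : Measure.dirac b Kᶜ = 0 := by
      simp [Measure.dirac_apply, Set.indicator_apply, hb]
    simp [h1, h2]

lemma le_energy {p : ℝ} (hp : p < 0) {K : Set ℝ} {a b : ℝ} (ha : a ∈ K) (hb : b ∈ K) :
    (ENNReal.ofReal (dist a b)) ^ (-p) / 2 ≤ Riesz.energy p K := by
  set μ₀ := ((2:ℝ≥0∞)⁻¹ • Measure.dirac a + (2:ℝ≥0∞)⁻¹ • Measure.dirac b) with hμ₀def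
  have hmem := twoPointMeasure_mem_probOn (K := K) ha hb
  have hE : Riesz.energyOf p μ₀ = (ENNReal.ofReal (dist a b)) ^ (-p) / 2 := by
    rw [hμ₀def, energyOf_two_point hp]
    rw [ENNReal.div_eq_inv_mul]
    congr 1
    rw [← two_mul, ← mul_assoc, ENNReal.mul_inv_cancel (by norm_num) (by norm_num), one_mul]
  rw [Riesz.energy, if_pos hp]
  exact le_iSup₂_of_le μ₀ hmem (le_of_eq hE.symm)

lemma measure_two_point_rep {μ : Measure ℝ} {a b : ℝ}
    (h : IsProbabilityMeasure μ) (h0 : μ ({a, b} : Set ℝ)ᶜ = 0) (hab : a ≠ b) :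
    μ = μ {a} • Measure.dirac a + μ {b} • Measure.dirac b ∧ μ {a} + μ {b} = 1 := by
  have hmem : ∀ᵐ x ∂μ, x ∈ ({a, b} : Set ℝ) := by
    rw [MeasureTheory.ae_iff]
    exact h0
  have h1 : μ.restrict {a, b} = μ := Measure.restrict_eq_self_of_ae_mem hmem
  have h2 : ({a, b} : Set ℝ) = {a} ∪ {b} := rfl
  have h3 : μ.restrict ({a} ∪ {b} : Set ℝ)
      = μ {a} • Measure.dirac a + μ {b} • Measure.dirac b := by
    rw [Measure.restrict_union (by simpa using hab) (measurableSet_singleton b),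
      Measure.restrict_singleton, Measure.restrict_singleton]
  have hrep : μ = μ {a} • Measure.dirac a + μ {b} • Measure.dirac b := by
    calc μ = μ.restrict {a, b} := h1.symm
    _ = μ.restrict ({a} ∪ {b}) := by rw [h2]
    _ = μ {a} • Measure.dirac a + μ {b} • Measure.dirac b := h3
  refine ⟨hrep, ?_⟩
  have := congrArg (fun ν : Measure ℝ => ν Set.univ) hrep
  simpa [measure_univ] using this.symm

lemma energy_two_point_le {p : ℝ} (hp : p < 0) {a b : ℝ} (hab : a ≠ b) :
    Riesz.energy p ({a, b} : Set ℝ) ≤ (ENNReal.ofReal (dist a b)) ^ (-p) / 2 := by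
  rw [Riesz.energy, if_pos hp]
  refine iSup₂_le fun μ hμ => ?_
  obtain ⟨hrep, hsum⟩ := measure_two_point_rep hμ.1 hμ.2 hab
  set α := μ {a}; set β := μ {b}
  have hE : Riesz.energyOf p μ = (α * β + β * α) * (ENNReal.ofReal (dist a b)) ^ (-p) := by
    rw [hrep] at *
    exact energyOf_two_point hp α β a b
  rw [hE]
  have h4 : 4 * (α * β) ≤ 1 := by
    have := ennreal_amgm2 α β
    rwa [hsum, one_pow] at this
  have hαβ : α * β ≤ 4⁻¹ := by
    rw [ENNReal.le_inv_iff_mul_le]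
    calc α * β * 4 = 4 * (α * β) := by ring
    _ ≤ 1 := h4
  have h2 : α * β + β * α ≤ 2⁻¹ := by
    calc α * β + β * α = 2 * (α * β) := by ring
    _ ≤ 2 * 4⁻¹ := by exact mul_le_mul_right hαβ 2
    _ = 2⁻¹ := by
        rw [show (4:ℝ≥0∞) = 2 * 2 by norm_num, ENNReal.mul_inv (by norm_num) (by norm_num),
          ← mul_assoc, ENNReal.mul_inv_cancel (by norm_num) (by norm_num), one_mul]
  calc (α * β + β * α) * (ENNReal.ofReal (dist a b)) ^ (-p)
      ≤ 2⁻¹ * (ENNReal.ofReal (dist a b)) ^ (-p) := mul_le_mul_left h2 _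
  _ = (ENNReal.ofReal (dist a b)) ^ (-p) / 2 := by rw [ENNReal.div_eq_inv_mul]

lemma real_kernel_le {s : ℝ} (hs : 1 ≤ s) {a b x y : ℝ} (hx : x ∈ Set.Icc a b)
    (hy : y ∈ Set.Icc a b) : |x - y| ^ s ≤ (b - a) ^ (s - 1) * |x - y| := by
  rcases eq_or_lt_of_le (abs_nonneg (x - y)) with h0 | hpos
  · rw [← h0, Real.zero_rpow (by linarith : s ≠ 0)]
    simp
  · have habs : |x - y| ≤ b - a := by
      rw [abs_sub_le_iff]
      constructor <;> [linarith [hx.1, hx.2, hy.1, hy.2]; linarith [hx.1, hx.2, hy.1, hy.2]]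
    calc |x - y| ^ s = |x - y| ^ ((s - 1) + 1) := by norm_num
    _ = |x - y| ^ (s - 1) * |x - y| := by rw [Real.rpow_add hpos, Real.rpow_one]
    _ ≤ (b - a) ^ (s - 1) * |x - y| :=
        mul_le_mul_of_nonneg_right
          (Real.rpow_le_rpow (abs_nonneg _) habs (by linarith)) (abs_nonneg _)

lemma real_quad_le {a b x y : ℝ} (hx : x ∈ Set.Icc a b) (hy : y ∈ Set.Icc a b) :
    (b - a) * |x - y| + 2 * ((x - a) * (y - a)) ≤ (b - a) * ((x - a) + (y - a)) := by
  obtain ⟨hx1, hx2⟩ := hx; obtain ⟨hy1, hy2⟩ := hy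
  rcases abs_cases (x - y) with ⟨h, _⟩ | ⟨h, _⟩ <;> rw [h] <;> nlinarith

lemma energyOf_le_of_one_le {q : ℝ} (hq : q ≤ -1) {a b : ℝ} (hab : a < b)
    {μ : Measure ℝ} (hprob : IsProbabilityMeasure μ) (hsupp : μ (Set.Icc a b)ᶜ = 0) :
    Riesz.energyOf q μ ≤ ENNReal.ofReal ((b - a) ^ (-q)) / 2 := by
  set s : ℝ := -q with hs_def
  have hs : 1 ≤ s := by simp [hs_def]; linarith
  have hd : (0:ℝ) < b - a := by linarith
  set D : ℝ≥0∞ := ENNReal.ofReal (b - a) with hD_def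
  set T : ℝ≥0∞ := ∫⁻ x, ENNReal.ofReal (x - a) ∂μ with hT_def
  set J : ℝ≥0∞ := ∫⁻ z : ℝ × ℝ, ENNReal.ofReal |z.1 - z.2| ∂(μ.prod μ) with hJ_def
  have hae1 : ∀ᵐ x ∂μ, x ∈ Set.Icc a b := by
    rw [MeasureTheory.ae_iff]; exact hsupp
  have hae2 : ∀ᵐ z ∂(μ.prod μ), z.1 ∈ Set.Icc a b ∧ z.2 ∈ Set.Icc a b := prod_ae_mem hsupp
  have hmeas_abs : Measurable fun z : ℝ × ℝ => ENNReal.ofReal |z.1 - z.2| :=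
    ((measurable_fst.sub measurable_snd).abs).ennreal_ofReal
  have hmeas_sub : Measurable fun x : ℝ => ENNReal.ofReal (x - a) :=
    (measurable_id.sub measurable_const).ennreal_ofReal
  have hm1 : Measurable fun z : ℝ × ℝ => ENNReal.ofReal (z.1 - a) :=
    (measurable_fst.sub measurable_const).ennreal_ofReal
  have hm2 : Measurable fun z : ℝ × ℝ => ENNReal.ofReal (z.2 - a) :=
    (measurable_snd.sub measurable_const).ennreal_ofReal
  have hDne : D ≠ ⊤ := ENNReal.ofReal_ne_top
  have hD0 : D ≠ 0 := by
    rw [hD_def]; exact (ENNReal.ofReal_pos.2 hd).ne'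
  have hTD : T ≤ D := by
    rw [hT_def, hD_def]
    calc ∫⁻ x, ENNReal.ofReal (x - a) ∂μ ≤ ∫⁻ _, ENNReal.ofReal (b - a) ∂μ := by
          refine lintegral_mono_ae ?_
          filter_upwards [hae1] with x hx
          exact ENNReal.ofReal_le_ofReal (by linarith [hx.2])
    _ = ENNReal.ofReal (b - a) := by simp
  have hTne : T ≠ ⊤ := (hTD.trans_lt hDne.lt_top).ne
  -- Step 1
  have hstep1 : Riesz.energyOf q μ ≤ ENNReal.ofReal ((b - a) ^ (s - 1)) * J := by
    rw [Riesz.energyOf, hJ_def, ← lintegral_const_mul _ hmeas_abs]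
    refine lintegral_mono_ae ?_
    filter_upwards [hae2] with z hz
    rw [ENNReal.ofReal_rpow_of_nonneg dist_nonneg (by linarith : (0:ℝ) ≤ -q)]
    rw [← ENNReal.ofReal_mul (Real.rpow_nonneg (by linarith : (0:ℝ) ≤ b - a) _)]
    refine ENNReal.ofReal_le_ofReal ?_
    rw [Real.dist_eq]
    exact real_kernel_le hs hz.1 hz.2
  -- marginal integrals
  have hTfst : ∫⁻ z : ℝ × ℝ, ENNReal.ofReal (z.1 - a) ∂(μ.prod μ) = T := by
    have := MeasureTheory.lintegral_prod_mul (μ := μ) (ν := μ)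
      (f := fun x => ENNReal.ofReal (x - a)) (g := fun _ => (1:ℝ≥0∞))
      hmeas_sub.aemeasurable aemeasurable_const
    simpa using this
  have hTsnd : ∫⁻ z : ℝ × ℝ, ENNReal.ofReal (z.2 - a) ∂(μ.prod μ) = T := by
    have := MeasureTheory.lintegral_prod_mul (μ := μ) (ν := μ)
      (f := fun _ => (1:ℝ≥0∞)) (g := fun x => ENNReal.ofReal (x - a))
      aemeasurable_const hmeas_sub.aemeasurable
    simpa using this
  have hT2 : ∫⁻ z : ℝ × ℝ, ENNReal.ofReal (z.1 - a) * ENNReal.ofReal (z.2 - a) ∂(μ.prod μ)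
      = T * T :=
    MeasureTheory.lintegral_prod_mul hmeas_sub.aemeasurable hmeas_sub.aemeasurable
  -- Step 2
  have hstep2 : D * J + 2 * (T * T) ≤ 2 * (D * T) := by
    have hL : D * J + 2 * (T * T)
        = ∫⁻ z : ℝ × ℝ, (D * ENNReal.ofReal |z.1 - z.2|
            + 2 * (ENNReal.ofReal (z.1 - a) * ENNReal.ofReal (z.2 - a))) ∂(μ.prod μ) := by
      rw [lintegral_add_left (hmeas_abs.const_mul D)]
      rw [lintegral_const_mul _ hmeas_abs, lintegral_const_mul (f := fun z : ℝ × ℝ => ENNReal.ofReal (z.1 - a) * ENNReal.ofReal (z.2 - a)) _ (hm1.mul hm2)]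
      rw [hT2, hJ_def]
    have hR : ∫⁻ z : ℝ × ℝ, D * (ENNReal.ofReal (z.1 - a) + ENNReal.ofReal (z.2 - a)) ∂(μ.prod μ)
        = 2 * (D * T) := by
      rw [lintegral_const_mul (f := fun z : ℝ × ℝ => ENNReal.ofReal (z.1 - a) + ENNReal.ofReal (z.2 - a)) _ (hm1.add hm2)]
      rw [lintegral_add_left hm1, hTfst, hTsnd]
      ring
    rw [hL, ← hR]
    refine lintegral_mono_ae ?_
    filter_upwards [hae2] with z hz
    have h1 : (0:ℝ) ≤ z.1 - a := by linarith [hz.1.1]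
    have h2 : (0:ℝ) ≤ z.2 - a := by linarith [hz.2.1]
    calc D * ENNReal.ofReal |z.1 - z.2| + 2 * (ENNReal.ofReal (z.1 - a) * ENNReal.ofReal (z.2 - a))
        = ENNReal.ofReal ((b - a) * |z.1 - z.2| + 2 * ((z.1 - a) * (z.2 - a))) := by
          rw [hD_def, ← ENNReal.ofReal_mul hd.le, ← ENNReal.ofReal_mul h1,
            show (2:ℝ≥0∞) = ENNReal.ofReal 2 by simp,
            ← ENNReal.ofReal_mul (by norm_num : (0:ℝ) ≤ 2),
            ← ENNReal.ofReal_add (by positivity) (by positivity)]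
    _ ≤ ENNReal.ofReal ((b - a) * ((z.1 - a) + (z.2 - a))) :=
          ENNReal.ofReal_le_ofReal (real_quad_le hz.1 hz.2)
    _ = D * (ENNReal.ofReal (z.1 - a) + ENNReal.ofReal (z.2 - a)) := by
          rw [hD_def, ← ENNReal.ofReal_add h1 h2, ← ENNReal.ofReal_mul hd.le]
  -- combine
  have hamgm := ennreal_amgm D T
  rw [pow_two, pow_two] at hamgm
  have h5 : 2 * (D * J) + 4 * (T * T) ≤ D * D + 4 * (T * T) := by
    calc 2 * (D * J) + 4 * (T * T) = 2 * (D * J + 2 * (T * T)) := by ring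
    _ ≤ 2 * (2 * (D * T)) := mul_le_mul_right hstep2 2
    _ = 4 * (D * T) := by ring
    _ ≤ D * D + 4 * (T * T) := hamgm
  have h6 : 2 * (D * J) ≤ D * D :=
    (ENNReal.add_le_add_iff_right (by
      exact ENNReal.mul_ne_top (by norm_num) (ENNReal.mul_ne_top hTne hTne))).1 h5
  have hJD : J ≤ D / 2 := by
    have h2D0 : (2:ℝ≥0∞) * D ≠ 0 := by
      simp [hD0]
    have h2Dt : (2:ℝ≥0∞) * D ≠ ⊤ := ENNReal.mul_ne_top (by norm_num) hDne
    rw [← ENNReal.mul_le_mul_iff_right h2D0 h2Dt]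
    calc 2 * D * J = 2 * (D * J) := by ring
    _ ≤ D * D := h6
    _ = 2 * D * (D / 2) := by
        rw [mul_comm (2:ℝ≥0∞) D, mul_assoc, ENNReal.mul_div_cancel (by norm_num) (by norm_num)]
  calc Riesz.energyOf q μ ≤ ENNReal.ofReal ((b - a) ^ (s - 1)) * J := hstep1
  _ ≤ ENNReal.ofReal ((b - a) ^ (s - 1)) * (D / 2) := mul_le_mul_right hJD _
  _ = ENNReal.ofReal ((b - a) ^ (-q)) / 2 := by
      rw [hD_def, ← mul_div_assoc, ← ENNReal.ofReal_mul (Real.rpow_nonneg hd.le _)]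
      congr 2
      rw [show (-q : ℝ) = (s - 1) + 1 by rw [hs_def]; ring, Real.rpow_add hd, Real.rpow_one]

lemma energy_le_of_le_neg_one {q : ℝ} (hq : q ≤ -1) {K : Set ℝ} {a b : ℝ} (hab : a < b)
    (hKs : K ⊆ Set.Icc a b) :
    Riesz.energy q K ≤ ENNReal.ofReal ((b - a) ^ (-q)) / 2 := by
  rw [Riesz.energy, if_pos (by linarith : q < 0)]
  refine iSup₂_le fun μ hμ => ?_
  exact energyOf_le_of_one_le hq hab hμ.1
    (measure_mono_null (Set.compl_subset_compl.2 hKs) hμ.2)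

lemma rpow_strict_subadd {s : ℝ} (hs0 : 0 < s) (hs1 : s < 1) {u v : ℝ}
    (hu : 0 < u) (hv : 0 < v) : (u + v) ^ s < u ^ s + v ^ s := by
  have huv : 0 < u + v := by linarith
  have key : ∀ w : ℝ, 0 < w → w < u + v → (u + v) ^ (s - 1) < w ^ (s - 1) := fun w hw hlt =>
    Real.rpow_lt_rpow_of_neg hw hlt (by linarith)
  have hsplit : ∀ w : ℝ, 0 < w → w ^ s = w * w ^ (s - 1) := by
    intro w hw
    have h := Real.rpow_add hw 1 (s - 1)
    rw [Real.rpow_one, show (1:ℝ) + (s - 1) = s by ring] at h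
    exact h
  have h1 : (u + v) ^ s = u * (u + v) ^ (s - 1) + v * (u + v) ^ (s - 1) := by
    rw [hsplit _ huv]; ring
  have h2 : u * (u + v) ^ (s - 1) < u * u ^ (s - 1) :=
    mul_lt_mul_of_pos_left (key u hu (by linarith)) hu
  have h3 : v * (u + v) ^ (s - 1) < v * v ^ (s - 1) :=
    mul_lt_mul_of_pos_left (key v hv (by linarith)) hv
  have h4 : u * u ^ (s - 1) = u ^ s := (hsplit _ hu).symm
  have h5 : v * v ^ (s - 1) = v ^ s := (hsplit _ hv).symm
  calc (u + v) ^ s = u * (u + v) ^ (s - 1) + v * (u + v) ^ (s - 1) := h1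
  _ < u * u ^ (s - 1) + v * v ^ (s - 1) := add_lt_add h2 h3
  _ = u ^ s + v ^ s := by rw [h4, h5]

lemma energy_gt_of_three {p : ℝ} (hp1 : -1 < p) (hp2 : p < 0) {K : Set ℝ} {a b c : ℝ}
    (ha : a ∈ K) (hb : b ∈ K) (hc : c ∈ K) (hac : a < c) (hcb : c < b) :
    ENNReal.ofReal ((b - a) ^ (-p)) / 2 < Riesz.energy p K := by
  set s : ℝ := -p with hs_def
  have hs0 : (0:ℝ) < s := by rw [hs_def]; linarith
  have hs1 : s < 1 := by rw [hs_def]; linarith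
  have hu : (0:ℝ) < c - a := by linarith
  have hv : (0:ℝ) < b - c := by linarith
  have hd : (0:ℝ) < b - a := by linarith
  set t : ℝ := (b - a) ^ s with ht_def
  set A : ℝ := (c - a) ^ s + (b - c) ^ s with hA_def
  have ht : 0 < t := Real.rpow_pos_of_pos hd _
  have hA : t < A := by
    rw [ht_def, hA_def, show b - a = (c - a) + (b - c) by ring]
    exact rpow_strict_subadd hs0 hs1 hu hv
  set B : ℝ := A - t / 2 with hB_def
  have hB : 0 < B := by rw [hB_def]; linarith
  set ε : ℝ := (A - t) / (2 * B) with hε_def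
  have hε : 0 < ε := by
    rw [hε_def]
    exact div_pos (by linarith) (by linarith)
  have hε1 : ε < 1 := by
    rw [hε_def, div_lt_one (by linarith)]
    rw [hB_def]; linarith
  have hεB : ε * B = (A - t) / 2 := by
    rw [hε_def]
    field_simp
  have hw : (0:ℝ) ≤ (1 - ε) / 2 := by linarith
  set μ₃ : Measure ℝ := ENNReal.ofReal ((1 - ε) / 2) • Measure.dirac a
      + ENNReal.ofReal ((1 - ε) / 2) • Measure.dirac b
      + ENNReal.ofReal ε • Measure.dirac c with hμ₃_def
  have hprob : IsProbabilityMeasure μ₃ := by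
    constructor
    rw [hμ₃_def]
    simp only [Measure.add_apply, Measure.smul_apply, smul_eq_mul,
      MeasureTheory.measure_univ, mul_one]
    rw [← ENNReal.ofReal_add hw hw, ← ENNReal.ofReal_add (by linarith) hε.le]
    rw [show (1 - ε) / 2 + (1 - ε) / 2 + ε = 1 by ring]
    simp
  have hsupp : μ₃ Kᶜ = 0 := by
    have h1 : Measure.dirac a Kᶜ = 0 := by
      simp [Measure.dirac_apply, Set.indicator_apply, ha]
    have h2 : Measure.dirac b Kᶜ = 0 := by
      simp [Measure.dirac_apply, Set.indicator_apply, hb]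
    have h3 : Measure.dirac c Kᶜ = 0 := by
      simp [Measure.dirac_apply, Set.indicator_apply, hc]
    simp [hμ₃_def, h1, h2, h3]
  -- compute the energy of μ₃
  have hdab : dist a b = b - a := by rw [Real.dist_eq, abs_sub_comm, abs_of_pos hd]
  have hdac : dist a c = c - a := by rw [Real.dist_eq, abs_sub_comm, abs_of_pos hu]
  have hdbc : dist b c = b - c := by rw [Real.dist_eq, abs_of_pos hv]
  have hker : ∀ x : ℝ, 0 < x → (ENNReal.ofReal x) ^ (-p) = ENNReal.ofReal (x ^ s) := by
    intro x hx
    rw [ENNReal.ofReal_rpow_of_nonneg hx.le (by linarith : (0:ℝ) ≤ -p), hs_def]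
  have hcomb : ∀ x y z : ℝ, 0 ≤ x → 0 ≤ y → 0 ≤ z →
      (ENNReal.ofReal x + ENNReal.ofReal y) * ENNReal.ofReal z
        = ENNReal.ofReal ((x + y) * z) := by
    intro x y z hx hy hz
    rw [← ENNReal.ofReal_add hx hy, ← ENNReal.ofReal_mul (by linarith)]
  have hww : (0:ℝ) ≤ (1 - ε) / 2 * ((1 - ε) / 2) := mul_nonneg hw hw
  have hwe : (0:ℝ) ≤ (1 - ε) / 2 * ε := mul_nonneg hw hε.le
  have hew : (0:ℝ) ≤ ε * ((1 - ε) / 2) := mul_nonneg hε.le hw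
  have hEcalc : Riesz.energyOf p μ₃
      = ENNReal.ofReal ((1 - ε)^2 / 2 * t + ε * (1 - ε) * A) := by
    rw [hμ₃_def, energyOf_three_point hp2, hdab, hdac, hdbc,
      hker _ hd, hker _ hu, hker _ hv]
    rw [← ENNReal.ofReal_mul hw, ← ENNReal.ofReal_mul hw, ← ENNReal.ofReal_mul hε.le]
    rw [hcomb _ _ _ hww hww (Real.rpow_nonneg hd.le _),
      hcomb _ _ _ hwe hew (Real.rpow_nonneg hu.le _),
      hcomb _ _ _ hwe hew (Real.rpow_nonneg hv.le _)]
    rw [← ENNReal.ofReal_add (mul_nonneg (by linarith) (Real.rpow_nonneg hd.le _))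
        (mul_nonneg (by linarith) (Real.rpow_nonneg hu.le _)),
      ← ENNReal.ofReal_add (add_nonneg (mul_nonneg (by linarith) (Real.rpow_nonneg hd.le _))
        (mul_nonneg (by linarith) (Real.rpow_nonneg hu.le _)))
        (mul_nonneg (by linarith) (Real.rpow_nonneg hv.le _))]
    congr 1
    rw [ht_def, hA_def]
    ring
  have hreal : t / 2 < (1 - ε)^2 / 2 * t + ε * (1 - ε) * A := by
    have hid : (1 - ε)^2 / 2 * t + ε * (1 - ε) * A - t / 2 = ε * (A - t) - ε * (ε * B) := by
      rw [hB_def]; ring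
    rw [hεB] at hid
    have hpos : 0 < ε * (A - t) - ε * ((A - t) / 2) := by
      have : ε * (A - t) - ε * ((A - t) / 2) = ε * (A - t) / 2 := by ring
      rw [this]
      exact div_pos (mul_pos hε (by linarith)) (by norm_num)
    linarith
  have hlt : ENNReal.ofReal ((b - a) ^ (-p)) / 2 < Riesz.energyOf p μ₃ := by
    rw [hEcalc]
    have hbound : ENNReal.ofReal ((b - a) ^ (-p)) / 2 = ENNReal.ofReal (t / 2) := by
      rw [ENNReal.ofReal_div_of_pos (by norm_num : (0:ℝ) < 2), ht_def, hs_def]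
      norm_num
    rw [hbound]
    exact (ENNReal.ofReal_lt_ofReal_iff ((half_pos ht).trans hreal)).2 hreal
  refine hlt.trans_le ?_
  rw [Riesz.energy, if_pos hp2]
  exact le_iSup₂_of_le μ₃ ⟨hprob, hsupp⟩ le_rfl

lemma ofReal_div_two (x : ℝ) : ENNReal.ofReal x / 2 = ENNReal.ofReal (x / 2) := by
  rw [ENNReal.ofReal_div_of_pos (by norm_num : (0:ℝ) < 2)]
  norm_num

lemma cap_formula_aux {r d : ℝ} (hr : r < 0) (hd : 0 < d) :
    (d ^ (-r) / 2) ^ (1 / (-r)) = 2 ^ (1 / r) * d := by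
  have hs : (0:ℝ) < -r := by linarith
  rw [div_eq_mul_inv, Real.mul_rpow (Real.rpow_nonneg hd.le _) (by norm_num),
    ← Real.rpow_mul hd.le, mul_one_div, div_self hs.ne', Real.rpow_one,
    Real.inv_rpow (by norm_num : (0:ℝ) ≤ 2), ← Real.rpow_neg (by norm_num : (0:ℝ) ≤ 2)]
  rw [show -(1 / (-r)) = 1 / r by rw [div_neg]; ring]
  ring

lemma cap_eq_of_energy {r : ℝ} (hr : r < 0) {K : Set ℝ} {d : ℝ} (hd : 0 < d)
    (hE : Riesz.energy r K = ENNReal.ofReal (d ^ (-r) / 2)) :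
    Riesz.cap r K = 2 ^ (1 / r) * d := by
  rw [Riesz.cap, if_neg hr.ne, hE, ENNReal.toReal_ofReal (by positivity),
    show (-1 : ℝ) / r = 1 / (-r) by rw [neg_div, div_neg],
    cap_formula_aux hr hd]

end RieszAux

end AuxProof

/-- For `-1 < p < 0` and compact `K ⊆ ℝ` with more than one point:
`cap_p(K) ≥ 2^(1/p)·diam K`, with equality iff `K` has exactly two points; hence for
`q ≤ -1` the ratio `cap_q(K)/cap_p(K)` is at most `2^(1/q-1/p)`, with equality iff `K`
has exactly two points. -/

theorem statement4 (p : ℝ) (hp1 : -1 < p) (hp2 : p < 0)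
    (K : Set ℝ) (hK : IsCompact K) (hK2 : K.Nontrivial) :
    Riesz.cap p K ≥ (2 : ℝ) ^ (1 / p) * Metric.diam K ∧
    (Riesz.cap p K = (2 : ℝ) ^ (1 / p) * Metric.diam K ↔
      ∃ a b : ℝ, a ≠ b ∧ K = {a, b}) ∧
    ∀ q : ℝ, q ≤ -1 →
      Riesz.cap q K / Riesz.cap p K ≤ (2 : ℝ) ^ (1 / q - 1 / p) ∧
      (Riesz.cap q K / Riesz.cap p K = (2 : ℝ) ^ (1 / q - 1 / p) ↔
        ∃ a b : ℝ, a ≠ b ∧ K = {a, b}) := by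
  classical
  open RieszAux in
  obtain ⟨x₀, hx₀, y₀, hy₀, hxy₀⟩ := hK2
  have hne : K.Nonempty := ⟨x₀, hx₀⟩
  set a := sInf K with ha_def
  set b := sSup K with hb_def
  have ha : a ∈ K := hK.sInf_mem hne
  have hb : b ∈ K := hK.sSup_mem hne
  have hsub : K ⊆ Set.Icc a b := fun x hx =>
    ⟨csInf_le hK.bddBelow hx, le_csSup hK.bddAbove hx⟩
  have hab : a < b := by
    rcases lt_or_ge x₀ y₀ with h | h
    · exact lt_of_le_of_lt (hsub hx₀).1 (h.trans_le (hsub hy₀).2)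
    · have h' : y₀ < x₀ := lt_of_le_of_ne h (Ne.symm hxy₀)
      exact lt_of_le_of_lt (hsub hy₀).1 (h'.trans_le (hsub hx₀).2)
  have hd : (0:ℝ) < b - a := by linarith
  have hdiam : Metric.diam K = b - a := by
    refine le_antisymm ((Metric.diam_mono hsub (Metric.isBounded_Icc a b)).trans_eq
      (Real.diam_Icc hab.le)) ?_
    have h1 := Metric.dist_le_diam_of_mem hK.isBounded hb ha
    rw [Real.dist_eq, abs_of_pos hd] at h1
    exact h1
  have hker : ∀ r : ℝ, r < 0 →
      (ENNReal.ofReal (dist a b)) ^ (-r) = ENNReal.ofReal ((b - a) ^ (-r)) := by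
    intro r hr
    rw [Real.dist_eq, abs_sub_comm, abs_of_pos hd,
      ENNReal.ofReal_rpow_of_nonneg hd.le (by linarith : (0:ℝ) ≤ -r)]
  set E := Riesz.energy p K with hE_def
  have hElb : ENNReal.ofReal ((b - a) ^ (-p) / 2) ≤ E := by
    rw [← RieszAux.ofReal_div_two, ← hker p hp2]
    exact RieszAux.le_energy hp2 ha hb
  have hEub : E ≤ ENNReal.ofReal ((b - a) ^ (-p)) := by
    rw [hE_def, Riesz.energy, if_pos hp2]
    refine iSup₂_le fun μ hμ => ?_
    have h2 := RieszAux.energyOf_le_const hp2 hK.isBounded hμ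
    rwa [hdiam] at h2
  have hEtop : E ≠ ⊤ := (hEub.trans_lt ENNReal.ofReal_lt_top).ne
  set e := E.toReal with he_def
  have heE : E = ENNReal.ofReal e := (ENNReal.ofReal_toReal hEtop).symm
  have he0 : (0:ℝ) ≤ e := ENNReal.toReal_nonneg
  have helb : (b - a) ^ (-p) / 2 ≤ e := by
    rw [heE] at hElb
    exact (ENNReal.ofReal_le_ofReal_iff he0).1 hElb
  have hexp : (-1 : ℝ) / p = 1 / (-p) := by rw [neg_div, div_neg]
  have hcapform : Riesz.cap p K = e ^ (1 / (-p)) := by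
    rw [Riesz.cap, if_neg hp2.ne, ← hE_def, ← he_def, hexp]
  have hRHS : (2:ℝ) ^ (1/p) * (b - a) = ((b - a) ^ (-p) / 2) ^ (1 / (-p)) :=
    (RieszAux.cap_formula_aux hp2 hd).symm
  have hsinv : (0:ℝ) < 1 / (-p) := one_div_pos.2 (by linarith)
  have part1 : (2:ℝ) ^ (1/p) * (b - a) ≤ Riesz.cap p K := by
    rw [hcapform, hRHS]
    exact Real.rpow_le_rpow (by positivity) helb hsinv.le
  have part2 : Riesz.cap p K = (2:ℝ) ^ (1/p) * (b - a) ↔ ∃ u v : ℝ, u ≠ v ∧ K = {u, v} := by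
    constructor
    · intro hcap
      by_cases hKab : K = {a, b}
      · exact ⟨a, b, hab.ne, hKab⟩
      · exfalso
        have hex : ∃ c ∈ K, c ≠ a ∧ c ≠ b := by
          by_contra hcon
          push_neg at hcon
          apply hKab
          refine Set.Subset.antisymm (fun x hx => ?_) (fun x hx => ?_)
          · rcases eq_or_ne x a with rfl | hxa
            · exact Set.mem_insert _ _
            · rw [hcon x hx hxa]
              exact Set.mem_insert_iff.2 (Or.inr rfl)
          · simp only [Set.mem_insert_iff, Set.mem_singleton_iff] at hx
            rcases hx with rfl | rfl
            exacts [ha, hb]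
        obtain ⟨c, hc, hca, hcb⟩ := hex
        have hc1 : a < c := lt_of_le_of_ne (hsub hc).1 (Ne.symm hca)
        have hc2 : c < b := lt_of_le_of_ne (hsub hc).2 hcb
        have hgt := RieszAux.energy_gt_of_three hp1 hp2 ha hb hc hc1 hc2
        rw [RieszAux.ofReal_div_two, ← hE_def, heE] at hgt
        have hegt : (b - a) ^ (-p) / 2 < e :=
          (ENNReal.ofReal_lt_ofReal_iff_of_nonneg (by positivity)).1 hgt
        have hlt : (2:ℝ) ^ (1/p) * (b - a) < Riesz.cap p K := by
          rw [hcapform, hRHS]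
          exact Real.rpow_lt_rpow (by positivity) hegt hsinv
        exact absurd hcap hlt.ne'
    · rintro ⟨u, v, huv, hKuv⟩
      have hKab : K = {a, b} := by
        have ha' : a ∈ ({u, v} : Set ℝ) := hKuv ▸ ha
        have hb' : b ∈ ({u, v} : Set ℝ) := hKuv ▸ hb
        simp only [Set.mem_insert_iff, Set.mem_singleton_iff] at ha' hb'
        rcases ha' with hau | hav <;> rcases hb' with hbu | hbv
        · exact absurd (hau.trans hbu.symm) hab.ne
        · rw [hKuv, hau, hbv]
        · rw [hKuv, ← hbu, ← hav, Set.pair_comm]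
        · exact absurd (hav.trans hbv.symm) hab.ne
      have hEeq : Riesz.energy p K = ENNReal.ofReal ((b - a) ^ (-p) / 2) := by
        refine le_antisymm ?_ hElb
        have h3 := RieszAux.energy_two_point_le hp2 hab.ne (a := a) (b := b)
        rw [← hKab, hker p hp2, RieszAux.ofReal_div_two] at h3
        exact h3
      exact RieszAux.cap_eq_of_energy hp2 hd hEeq
  have part3cap : ∀ q : ℝ, q ≤ -1 → Riesz.cap q K = (2:ℝ) ^ (1/q) * (b - a) := by
    intro q hq
    have hq0 : q < 0 := by linarith
    apply RieszAux.cap_eq_of_energy hq0 hd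
    refine le_antisymm ?_ ?_
    · exact (RieszAux.energy_le_of_le_neg_one hq hab hsub).trans_eq
        (RieszAux.ofReal_div_two _)
    · rw [← RieszAux.ofReal_div_two, ← hker q hq0]
      exact RieszAux.le_energy hq0 ha hb
  have hcapP_pos : (0:ℝ) < Riesz.cap p K := lt_of_lt_of_le (by positivity) part1
  rw [hdiam]
  refine ⟨part1, part2, ?_⟩
  intro q hq
  have hcq := part3cap q hq
  have hN : (0:ℝ) < (2:ℝ) ^ (1/q) * (b - a) := by positivity
  have hPb : (0:ℝ) < (2:ℝ) ^ (1/p) * (b - a) := by positivity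
  have hratio_eq : (2:ℝ) ^ (1/q) * (b - a) / ((2:ℝ) ^ (1/p) * (b - a)) = 2 ^ (1/q - 1/p) := by
    rw [Real.rpow_sub (by norm_num : (0:ℝ) < 2), mul_div_mul_right _ _ hd.ne']
  constructor
  · rw [hcq, ← hratio_eq]
    exact (div_le_div_iff_of_pos_left hN hcapP_pos hPb).2 part1
  · rw [hcq, ← hratio_eq]
    constructor
    · intro hEq
      refine part2.1 ?_
      rw [div_eq_div_iff hcapP_pos.ne' hPb.ne'] at hEq
      exact (mul_left_cancel₀ hN.ne' hEq).symm
    · intro hex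
      rw [part2.2 hex]
end

section
/- Let p < 0 and t = |p| = −p. If T ⊂ ℝ² is a three-point set with pairwise distances a, b, c between its points, where 0 < a, b ≤ c, then cap_p(T) = 2^{−1/t} c when a^t + b^t ≤ c^t, and cap_p(T) = 2^{1/t} a b c / (4(ab)^t − (a^t + b^t − c^t)²)^{1/t} when a^t + b^t > c^t. Moreover, the p-equilibrium measure on T is unique. -/
open MeasureTheory Metric Set ENNReal Filter

noncomputable section AuxStatement6

open MeasureTheory Metric Set ENNReal

namespace Aux6

lemma quadCase1 (α β γ u v s : ℝ) (hβ : 0 < β) (hγ : 0 < γ)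
    (hsum : β + γ ≤ α) (hu : 0 ≤ u) (hv : 0 ≤ v) (hs : 0 ≤ s) (huvs : u + v + s = 1) :
    2*(α*u*v + β*v*s + γ*s*u) ≤ α/2 ∧
    (2*(α*u*v + β*v*s + γ*s*u) = α/2 → u = 1/2 ∧ v = 1/2 ∧ s = 0) := by
  have hs1 : s = 1 - u - v := by linarith
  subst hs1
  have key : α/2 - 2*(α*u*v + β*v*(1-u-v) + γ*(1-u-v)*u)
      = β/2*(u-v+(1-u-v))^2 + γ/2*(u-v-(1-u-v))^2
        + (α-β-γ)/2*((u-v)^2+(1-u-v)^2) + (α-β-γ)*((1-u-v)*(u+v)) := by ring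
  have t1 : 0 ≤ β/2*(u-v+(1-u-v))^2 := by positivity
  have t2 : 0 ≤ γ/2*(u-v-(1-u-v))^2 := by positivity
  have t3 : 0 ≤ (α-β-γ)/2*((u-v)^2+(1-u-v)^2) := by
    apply mul_nonneg (by linarith) (by positivity)
  have t4 : 0 ≤ (α-β-γ)*((1-u-v)*(u+v)) := by
    apply mul_nonneg (by linarith) (mul_nonneg hs (by linarith))
  constructor
  · linarith
  · intro heq
    rw [heq] at key
    have e1 : (u-v+(1-u-v))^2 = 0 := by nlinarith
    have e2 : (u-v-(1-u-v))^2 = 0 := by nlinarith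
    have e1' : u-v+(1-u-v) = 0 := sq_eq_zero_iff.mp e1
    have e2' : u-v-(1-u-v) = 0 := sq_eq_zero_iff.mp e2
    refine ⟨by linarith, by linarith, by linarith⟩

lemma quadCase2 (α β γ u v s : ℝ) (hα : 0 < α) (hβ : 0 < β) (hγ : 0 < γ)
    (hβα : β ≤ α) (hγα : γ ≤ α) (hsum : α < β + γ)
    (hu : 0 ≤ u) (hv : 0 ≤ v) (hs : 0 ≤ s) (huvs : u + v + s = 1) :
    0 < 4*β*γ - (β+γ-α)^2 ∧
    2*(α*u*v + β*v*s + γ*s*u) ≤ 2*α*β*γ/(4*β*γ - (β+γ-α)^2) ∧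
    (2*(α*u*v + β*v*s + γ*s*u) = 2*α*β*γ/(4*β*γ - (β+γ-α)^2) →
      u = β*(α+γ-β)/(4*β*γ - (β+γ-α)^2) ∧ v = γ*(α+β-γ)/(4*β*γ - (β+γ-α)^2)
        ∧ s = α*(β+γ-α)/(4*β*γ - (β+γ-α)^2)) := by
  set D := 4*β*γ - (β+γ-α)^2 with hD
  have hD0 : 0 < D := by rw [hD]; nlinarith [mul_pos hβ hγ]
  have hs1 : s = 1 - u - v := by linarith
  subst hs1
  set e1 := D*u - β*(α+γ-β) with he1
  set e2 := D*v - γ*(α+β-γ) with he2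
  have key : 2*β*D*(2*α*β*γ - (2*(α*u*v + β*v*(1-u-v) + γ*(1-u-v)*u))*D)
      = (2*β*e2 + (β+γ-α)*e1)^2 + D*e1^2 := by
    rw [he1, he2, hD]; ring
  have hnn : 0 ≤ 2*α*β*γ - (2*(α*u*v + β*v*(1-u-v) + γ*(1-u-v)*u))*D := by
    nlinarith [sq_nonneg (2*β*e2 + (β+γ-α)*e1), mul_nonneg hD0.le (sq_nonneg e1),
      mul_pos (mul_pos (by norm_num : (0:ℝ) < 2) hβ) hD0]
  refine ⟨hD0, ?_, ?_⟩
  · rw [le_div_iff₀ hD0]; linarith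
  · intro heq
    rw [eq_div_iff hD0.ne'] at heq
    have h0 : 2*α*β*γ - (2*(α*u*v + β*v*(1-u-v) + γ*(1-u-v)*u))*D = 0 := by linarith
    rw [h0, mul_zero] at key
    have hz := key.symm
    have he1z : e1 = 0 := by
      have hsq : e1^2 ≤ 0 := by
        by_contra h
        push_neg at h
        have h2 : 0 < e1^2 := lt_of_le_of_ne (sq_nonneg e1) (by intro hh; rw [← hh] at h; simp at h)
        linarith [sq_nonneg (2*β*e2 + (β+γ-α)*e1), mul_pos hD0 h2]
      exact pow_eq_zero_iff (by norm_num) |>.mp (le_antisymm hsq (sq_nonneg e1))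
    have he2z : e2 = 0 := by
      rw [he1z] at hz
      have h2 : (2*β*e2)^2 ≤ 0 := by
        have : (2*β*e2 + (β+γ-α)*0)^2 + D*0^2 = (2*β*e2)^2 := by ring
        linarith
      have h3 : 2*β*e2 = 0 := pow_eq_zero_iff (by norm_num) |>.mp
        (le_antisymm h2 (sq_nonneg _))
      rcases mul_eq_zero.mp h3 with h4 | h4
      · exfalso; linarith
      · exact h4
    rw [he1] at he1z
    rw [he2] at he2z
    refine ⟨?_, ?_, ?_⟩
    · rw [eq_div_iff hD0.ne']; linear_combination he1z
    · rw [eq_div_iff hD0.ne']; linear_combination he2z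
    · rw [eq_div_iff hD0.ne', hD] at *
      linear_combination -he1z - he2z

variable {E : Type*} [MeasurableSpace E] [MeasurableSingletonClass E]

lemma aux_decomp {x y z : E} (hxy : x ≠ y) (hyz : y ≠ z) (hxz : x ≠ z)
    {μ : Measure E} (hμ0 : μ (({x,y,z} : Set E)ᶜ) = 0) :
    (∀ A : Set E, MeasurableSet A →
      μ A = μ (A ∩ {x}) + μ (A ∩ {y}) + μ (A ∩ {z})) ∧
    μ = μ {x} • Measure.dirac x + μ {y} • Measure.dirac y + μ {z} • Measure.dirac z := by
  classical
  have hTm : MeasurableSet ({x,y,z} : Set E) := (Set.toFinite _).measurableSet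
  have hsplit : ∀ A : Set E, MeasurableSet A →
      μ A = μ (A ∩ {x}) + μ (A ∩ {y}) + μ (A ∩ {z}) := by
    intro A hAm
    have h1 : μ (A \ ({x,y,z} : Set E)) = 0 :=
      measure_mono_null (diff_subset_compl A _) hμ0
    have h2 : μ A = μ (A ∩ ({x,y,z} : Set E)) := by
      rw [← measure_inter_add_diff A hTm, h1, add_zero]
    have h3 : A ∩ ({x,y,z} : Set E) = (A ∩ {x}) ∪ ((A ∩ {y}) ∪ (A ∩ {z})) := by
      rw [show ({x,y,z} : Set E) = {x} ∪ ({y} ∪ {z}) by ext w; simp; tauto,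
        Set.inter_union_distrib_left, Set.inter_union_distrib_left]
    have hd1 : Disjoint (A ∩ {x}) ((A ∩ {y}) ∪ (A ∩ {z})) := by
      apply Set.disjoint_of_subset inter_subset_right
        (Set.union_subset (inter_subset_right.trans subset_union_left)
          (inter_subset_right.trans subset_union_right))
      simp [Set.disjoint_left, hxy, hxz]
    have hd2 : Disjoint (A ∩ {y}) (A ∩ {z}) := by
      apply Set.disjoint_of_subset inter_subset_right inter_subset_right
      simp [Set.disjoint_left, hyz]
    rw [h2, h3, measure_union hd1 ((hAm.inter (measurableSet_singleton y)).union
        (hAm.inter (measurableSet_singleton z))),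
      measure_union hd2 (hAm.inter (measurableSet_singleton z)), add_assoc]
  refine ⟨hsplit, ?_⟩
  ext A hAm
  rw [hsplit A hAm]
  have hpt : ∀ w : E, A ∩ ({w} : Set E) = if w ∈ A then {w} else ∅ := by
    intro w
    split_ifs with hw
    · exact Set.inter_eq_right.mpr (by simpa using hw)
    · exact Set.inter_singleton_eq_empty.mpr hw
  simp only [Measure.coe_add, Measure.coe_smul, Pi.add_apply, Pi.smul_apply,
    Measure.dirac_apply' _ hAm, smul_eq_mul]
  rw [hpt x, hpt y, hpt z]
  by_cases hx : x ∈ A <;> by_cases hy : y ∈ A <;> by_cases hz : z ∈ A <;>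
    simp [hx, hy, hz, Set.indicator_apply]

lemma aux_energy [PseudoMetricSpace E] {x y z : E} (hxy : x ≠ y) (hyz : y ≠ z) (hxz : x ≠ z)
    {p : ℝ} (hp : p < 0) {μ : Measure E} (hprob : IsProbabilityMeasure μ)
    (hμ0 : μ (({x,y,z} : Set E)ᶜ) = 0) :
    Riesz.energyOf p μ =
      2 * ((ENNReal.ofReal (dist x y)) ^ (-p) * (μ {x} * μ {y})
        + (ENNReal.ofReal (dist y z)) ^ (-p) * (μ {y} * μ {z})
        + (ENNReal.ofReal (dist z x)) ^ (-p) * (μ {z} * μ {x})) := by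
  classical
  set f : E × E → ℝ≥0∞ := fun w => (ENNReal.ofReal (dist w.1 w.2)) ^ (-p) with hf
  set ν := μ.prod μ with hν
  have hcoe : ((({x,y,z} : Finset E) ×ˢ ({x,y,z} : Finset E) : Finset (E × E)) : Set (E × E))
      = ({x,y,z} : Set E) ×ˢ ({x,y,z} : Set E) := by
    simp
  have hS0 : ν ((({x,y,z} : Set E) ×ˢ ({x,y,z} : Set E))ᶜ) = 0 :=
    Measure.measure_prod_compl_eq_zero hμ0 hμ0
  have hSm : MeasurableSet (({x,y,z} : Set E) ×ˢ ({x,y,z} : Set E)) :=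
    ((Set.toFinite _).prod (Set.toFinite _)).measurableSet
  have h1 : Riesz.energyOf p μ = ∫⁻ w in (({x,y,z} : Set E) ×ˢ ({x,y,z} : Set E)), f w ∂ν := by
    rw [Riesz.energyOf, ← lintegral_add_compl f hSm, setLIntegral_measure_zero _ _ hS0, add_zero]
  rw [h1, ← hcoe, lintegral_finset]
  have hνpt : ∀ w₁ w₂ : E, ν {(w₁, w₂)} = μ {w₁} * μ {w₂} := by
    intro w₁ w₂
    rw [show ({(w₁, w₂)} : Set (E × E)) = {w₁} ×ˢ {w₂} from (Set.singleton_prod_singleton).symm,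
      hν, Measure.prod_prod]
  have hsum3 : ∀ g : E → ℝ≥0∞, ∑ w ∈ ({x,y,z} : Finset E), g w = g x + g y + g z := by
    intro g
    rw [Finset.sum_insert (by simp [hxy, hxz]), Finset.sum_insert (by simp [hyz]),
      Finset.sum_singleton, add_assoc]
  rw [Finset.sum_product, hsum3, hsum3, hsum3, hsum3]
  simp only [hνpt]
  have hdiag : ∀ w : E, f (w, w) = 0 := by
    intro w
    simp only [hf, dist_self, ENNReal.ofReal_zero]
    exact ENNReal.zero_rpow_of_pos (by linarith)
  rw [hdiag x, hdiag y, hdiag z]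
  have hfzx : f (x, z) = (ENNReal.ofReal (dist z x)) ^ (-p) := by
    simp only [hf]; rw [dist_comm]
  have hfyx : f (y, x) = f (x, y) := by simp only [hf]; rw [dist_comm]
  have hfzx2 : f (z, x) = f (x, z) := by simp only [hf]; rw [dist_comm]
  have hfzy : f (z, y) = f (y, z) := by simp only [hf]; rw [dist_comm]
  rw [hfyx, hfzx2, hfzy, hfzx]
  ring

end Aux6

end AuxStatement6

/-- Capacity of a three-point set in the plane, for `p < 0`, `t = -p`: with distances
`a = |y-z|`, `b = |z-x|`, `c = |x-y|` and `0 < a, b ≤ c`, the `p`-capacity is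
`2^(-1/t) c` if `a^t + b^t ≤ c^t` and `2^(1/t) a b c/(4(ab)^t - (a^t+b^t-c^t)^2)^(1/t)`
otherwise; moreover the `p`-equilibrium measure on `T` is unique. -/
theorem statement6 (p t a b c : ℝ) (hp : p < 0) (ht : t = -p)
    (x y z : EuclideanSpace ℝ (Fin 2)) (T : Set (EuclideanSpace ℝ (Fin 2)))
    (hT : T = {x, y, z})
    (hc : c = dist x y) (ha : a = dist y z) (hb : b = dist z x)
    (ha0 : 0 < a) (hb0 : 0 < b) (hac : a ≤ c) (hbc : b ≤ c) :
    (a ^ t + b ^ t ≤ c ^ t → Riesz.cap p T = (2 : ℝ) ^ (-1 / t) * c) ∧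
    (c ^ t < a ^ t + b ^ t →
      Riesz.cap p T = (2 : ℝ) ^ (1 / t) * a * b * c /
        (4 * (a * b) ^ t - (a ^ t + b ^ t - c ^ t) ^ 2) ^ (1 / t)) ∧
    (∃! μ : Measure (EuclideanSpace ℝ (Fin 2)), Riesz.IsEquilibrium p T μ) := by
  classical
  have ht0 : 0 < t := by rw [ht]; linarith
  have htne : t ≠ 0 := ht0.ne'
  have hpne : p ≠ 0 := hp.ne
  have hc0 : 0 < c := lt_of_lt_of_le ha0 hac
  have hxy : x ≠ y := by rw [← dist_pos, ← hc]; exact hc0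
  have hyz : y ≠ z := by rw [← dist_pos, ← ha]; exact ha0
  have hzx : z ≠ x := by rw [← dist_pos, ← hb]; exact hb0
  have hxz : x ≠ z := hzx.symm
  have hα0 : 0 < c ^ t := Real.rpow_pos_of_pos hc0 t
  have hβ0 : 0 < a ^ t := Real.rpow_pos_of_pos ha0 t
  have hγ0 : 0 < b ^ t := Real.rpow_pos_of_pos hb0 t
  have hβα : a ^ t ≤ c ^ t := Real.rpow_le_rpow ha0.le hac ht0.le
  have hγα : b ^ t ≤ c ^ t := Real.rpow_le_rpow hb0.le hbc ht0.le
  -- kernel values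
  have kxy : (ENNReal.ofReal (dist x y)) ^ (-p) = ENNReal.ofReal (c ^ t) := by
    rw [ENNReal.ofReal_rpow_of_pos (by rw [← hc]; exact hc0), ← hc, ← ht]
  have kyz : (ENNReal.ofReal (dist y z)) ^ (-p) = ENNReal.ofReal (a ^ t) := by
    rw [ENNReal.ofReal_rpow_of_pos (by rw [← ha]; exact ha0), ← ha, ← ht]
  have kzx : (ENNReal.ofReal (dist z x)) ^ (-p) = ENNReal.ofReal (b ^ t) := by
    rw [ENNReal.ofReal_rpow_of_pos (by rw [← hb]; exact hb0), ← hb, ← ht]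
  have hTm : MeasurableSet T := by rw [hT]; exact (Set.toFinite _).measurableSet
  -- the quadratic form
  set F : ℝ → ℝ → ℝ → ℝ :=
    fun u v s => 2*((c^t)*u*v + (a^t)*v*s + (b^t)*s*u) with hF
  have hFnn : ∀ u v s : ℝ, 0 ≤ u → 0 ≤ v → 0 ≤ s → 0 ≤ F u v s := by
    intro u v s hu hv hs
    rw [hF]
    positivity
  -- every measure in probOn T has the standard form
  have key1 : ∀ μ : Measure (EuclideanSpace ℝ (Fin 2)), μ ∈ Riesz.probOn T →
      0 ≤ (μ {x}).toReal ∧ 0 ≤ (μ {y}).toReal ∧ 0 ≤ (μ {z}).toReal ∧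
      (μ {x}).toReal + (μ {y}).toReal + (μ {z}).toReal = 1 ∧
      Riesz.energyOf p μ = ENNReal.ofReal (F (μ {x}).toReal (μ {y}).toReal (μ {z}).toReal) ∧
      μ = μ {x} • Measure.dirac x + μ {y} • Measure.dirac y + μ {z} • Measure.dirac z := by
    intro μ hμ
    obtain ⟨hprob, h0⟩ := hμ
    haveI := hprob
    rw [hT] at h0
    obtain ⟨hsplit, hdec⟩ := Aux6.aux_decomp hxy hyz hxz h0
    have hfx : μ {x} ≠ ⊤ := measure_ne_top μ _
    have hfy : μ {y} ≠ ⊤ := measure_ne_top μ _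
    have hfz : μ {z} ≠ ⊤ := measure_ne_top μ _
    have hsum : (μ {x}).toReal + (μ {y}).toReal + (μ {z}).toReal = 1 := by
      have h1 : μ Set.univ = μ {x} + μ {y} + μ {z} := by
        have := hsplit Set.univ MeasurableSet.univ
        simpa using this
      rw [measure_univ] at h1
      have := congrArg ENNReal.toReal h1
      rw [ENNReal.toReal_add (by finiteness) hfz, ENNReal.toReal_add hfx hfy] at this
      simpa using this.symm
    refine ⟨ENNReal.toReal_nonneg, ENNReal.toReal_nonneg, ENNReal.toReal_nonneg, hsum, ?_, ?_⟩
    · rw [Aux6.aux_energy hxy hyz hxz hp hprob h0, kxy, kyz, kzx]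
      rw [show μ {x} = ENNReal.ofReal (μ {x}).toReal from (ENNReal.ofReal_toReal hfx).symm,
        show μ {y} = ENNReal.ofReal (μ {y}).toReal from (ENNReal.ofReal_toReal hfy).symm,
        show μ {z} = ENNReal.ofReal (μ {z}).toReal from (ENNReal.ofReal_toReal hfz).symm]
      rw [← ENNReal.ofReal_mul ENNReal.toReal_nonneg,
        ← ENNReal.ofReal_mul ENNReal.toReal_nonneg,
        ← ENNReal.ofReal_mul ENNReal.toReal_nonneg,
        ← ENNReal.ofReal_mul hα0.le, ← ENNReal.ofReal_mul hβ0.le, ← ENNReal.ofReal_mul hγ0.le,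
        ← ENNReal.ofReal_add (by positivity) (by positivity),
        ← ENNReal.ofReal_add (by positivity) (by positivity),
        show ∀ r : ℝ, (2:ℝ≥0∞) * ENNReal.ofReal r = ENNReal.ofReal (2 * r) from
          fun r => by rw [ENNReal.ofReal_mul (by norm_num)]; norm_num]
      rw [hF]
      congr 1
      simp only [ENNReal.toReal_ofReal ENNReal.toReal_nonneg]
      ring
    · exact hdec
  -- construction of measures with given weights
  have key2 : ∀ u v s : ℝ, 0 ≤ u → 0 ≤ v → 0 ≤ s → u + v + s = 1 →
      (ENNReal.ofReal u • Measure.dirac x + ENNReal.ofReal v • Measure.dirac y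
        + ENNReal.ofReal s • Measure.dirac z) ∈ Riesz.probOn T ∧
      (ENNReal.ofReal u • Measure.dirac x + ENNReal.ofReal v • Measure.dirac y
        + ENNReal.ofReal s • Measure.dirac z) {x} = ENNReal.ofReal u ∧
      (ENNReal.ofReal u • Measure.dirac x + ENNReal.ofReal v • Measure.dirac y
        + ENNReal.ofReal s • Measure.dirac z) {y} = ENNReal.ofReal v ∧
      (ENNReal.ofReal u • Measure.dirac x + ENNReal.ofReal v • Measure.dirac y
        + ENNReal.ofReal s • Measure.dirac z) {z} = ENNReal.ofReal s := by
    intro u v s hu hv hs huvs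
    have dxx : Measure.dirac x ({x} : Set (EuclideanSpace ℝ (Fin 2))) = 1 :=
      Measure.dirac_apply_of_mem rfl
    have dyy : Measure.dirac y ({y} : Set (EuclideanSpace ℝ (Fin 2))) = 1 :=
      Measure.dirac_apply_of_mem rfl
    have dzz : Measure.dirac z ({z} : Set (EuclideanSpace ℝ (Fin 2))) = 1 :=
      Measure.dirac_apply_of_mem rfl
    have dne : ∀ w₁ w₂ : EuclideanSpace ℝ (Fin 2), w₁ ≠ w₂ →
        Measure.dirac w₁ ({w₂} : Set (EuclideanSpace ℝ (Fin 2))) = 0 := by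
      intro w₁ w₂ hne
      rw [Measure.dirac_apply' _ (measurableSet_singleton w₂)]
      simp [hne]
    refine ⟨⟨⟨?_⟩, ?_⟩, ?_, ?_, ?_⟩
    · simp only [Measure.coe_add, Measure.coe_smul, Pi.add_apply, Pi.smul_apply, smul_eq_mul,
        Measure.dirac_apply_of_mem (Set.mem_univ x), Measure.dirac_apply_of_mem (Set.mem_univ y),
        Measure.dirac_apply_of_mem (Set.mem_univ z), mul_one]
      rw [← ENNReal.ofReal_add hu hv, ← ENNReal.ofReal_add (by linarith) hs, huvs,
        ENNReal.ofReal_one]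
    · have hxT : x ∉ Tᶜ := by rw [hT]; simp
      have hyT : y ∉ Tᶜ := by rw [hT]; simp
      have hzT : z ∉ Tᶜ := by rw [hT]; simp
      simp only [Measure.coe_add, Measure.coe_smul, Pi.add_apply, Pi.smul_apply, smul_eq_mul]
      rw [Measure.dirac_apply' _ hTm.compl, Measure.dirac_apply' _ hTm.compl,
        Measure.dirac_apply' _ hTm.compl]
      simp [Set.indicator_apply, hxT, hyT, hzT]
    · simp only [Measure.coe_add, Measure.coe_smul, Pi.add_apply, Pi.smul_apply, smul_eq_mul,
        dxx, dne y x (Ne.symm hxy), dne z x (Ne.symm hxz), mul_one, mul_zero, add_zero]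
    · simp only [Measure.coe_add, Measure.coe_smul, Pi.add_apply, Pi.smul_apply, smul_eq_mul,
        dyy, dne x y hxy, dne z y hyz.symm, mul_one, mul_zero, add_zero, zero_add]
    · simp only [Measure.coe_add, Measure.coe_smul, Pi.add_apply, Pi.smul_apply, smul_eq_mul,
        dzz, dne x z hxz, dne y z hyz, mul_one, mul_zero, add_zero, zero_add]
  -- the combinator
  have main : ∀ Vmax u₀ v₀ s₀ : ℝ, 0 ≤ u₀ → 0 ≤ v₀ → 0 ≤ s₀ → u₀ + v₀ + s₀ = 1 →
      (∀ u v s : ℝ, 0 ≤ u → 0 ≤ v → 0 ≤ s → u + v + s = 1 → F u v s ≤ Vmax) →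
      F u₀ v₀ s₀ = Vmax →
      (∀ u v s : ℝ, 0 ≤ u → 0 ≤ v → 0 ≤ s → u + v + s = 1 → F u v s = Vmax →
        u = u₀ ∧ v = v₀ ∧ s = s₀) →
      Riesz.energy p T = ENNReal.ofReal Vmax ∧ (∃! μ, Riesz.IsEquilibrium p T μ) := by
    intro Vmax u₀ v₀ s₀ hu₀ hv₀ hs₀ hsum₀ hub hattain huniq
    have hV0 : 0 ≤ Vmax := hattain ▸ hFnn u₀ v₀ s₀ hu₀ hv₀ hs₀
    set μ₀ : Measure (EuclideanSpace ℝ (Fin 2)) :=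
      ENNReal.ofReal u₀ • Measure.dirac x + ENNReal.ofReal v₀ • Measure.dirac y
        + ENNReal.ofReal s₀ • Measure.dirac z with hμ₀def
    obtain ⟨hmem₀, hw₀x, hw₀y, hw₀z⟩ := key2 u₀ v₀ s₀ hu₀ hv₀ hs₀ hsum₀
    have hE₀ : Riesz.energyOf p μ₀ = ENNReal.ofReal Vmax := by
      obtain ⟨_, _, _, _, hen, _⟩ := key1 μ₀ hmem₀
      rw [hen, hw₀x, hw₀y, hw₀z, ENNReal.toReal_ofReal hu₀, ENNReal.toReal_ofReal hv₀,
        ENNReal.toReal_ofReal hs₀, hattain]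
    have hE : Riesz.energy p T = ENNReal.ofReal Vmax := by
      rw [Riesz.energy, if_pos hp]
      apply le_antisymm
      · apply iSup₂_le
        intro μ hμ
        obtain ⟨hu, hv, hs, hsum, hen, _⟩ := key1 μ hμ
        rw [hen]
        exact ENNReal.ofReal_le_ofReal (hub _ _ _ hu hv hs hsum)
      · exact le_iSup₂_of_le μ₀ hmem₀ (le_of_eq hE₀.symm)
    refine ⟨hE, ⟨μ₀, ⟨hmem₀, by rw [hE₀, hE]⟩, ?_⟩⟩
    intro μ hμeq
    obtain ⟨hμmem, hμen⟩ := hμeq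
    haveI := hμmem.1
    obtain ⟨hu, hv, hs, hsum, hen, hdec⟩ := key1 μ hμmem
    have hFeq : F (μ {x}).toReal (μ {y}).toReal (μ {z}).toReal = Vmax := by
      rw [hen, hE] at hμen
      exact (ENNReal.ofReal_eq_ofReal_iff (hFnn _ _ _ hu hv hs) hV0).mp hμen
    obtain ⟨hux, hvy, hsz⟩ := huniq _ _ _ hu hv hs hsum hFeq
    have hfx : μ {x} ≠ ⊤ := measure_ne_top μ _
    have hfy : μ {y} ≠ ⊤ := measure_ne_top μ _
    have hfz : μ {z} ≠ ⊤ := measure_ne_top μ _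
    have ex : μ {x} = ENNReal.ofReal u₀ := by
      rw [← hux, ENNReal.ofReal_toReal hfx]
    have ey : μ {y} = ENNReal.ofReal v₀ := by
      rw [← hvy, ENNReal.ofReal_toReal hfy]
    have ez : μ {z} = ENNReal.ofReal s₀ := by
      rw [← hsz, ENNReal.ofReal_toReal hfz]
    rw [hdec, ex, ey, ez]
  -- exponent simplification for cap
  have hexp : -1 / p = 1 / t := by
    have hpt : p = -t := by rw [ht]; ring
    rw [hpt, neg_div_neg_eq]
  rcases le_or_gt (a ^ t + b ^ t) (c ^ t) with hcase | hcase
  · -- case 1 : a^t + b^t ≤ c^t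
    have halg : ∀ u v s : ℝ, 0 ≤ u → 0 ≤ v → 0 ≤ s → u + v + s = 1 →
        F u v s ≤ (c^t)/2 ∧ (F u v s = (c^t)/2 → u = 1/2 ∧ v = 1/2 ∧ s = 0) := by
      intro u v s hu hv hs huvs
      exact Aux6.quadCase1 (c^t) (a^t) (b^t) u v s hβ0 hγ0 hcase hu hv hs huvs
    obtain ⟨hE, huni⟩ := main ((c^t)/2) (1/2) (1/2) 0 (by norm_num) (by norm_num) le_rfl
      (by norm_num)
      (fun u v s hu hv hs huvs => (halg u v s hu hv hs huvs).1)
      (by rw [hF]; ring)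
      (fun u v s hu hv hs huvs heq => (halg u v s hu hv hs huvs).2 heq)
    refine ⟨fun _ => ?_, fun hlt => absurd hlt (not_lt.mpr hcase), huni⟩
    rw [Riesz.cap, if_neg hpne, hE, ENNReal.toReal_ofReal (by positivity), hexp]
    rw [Real.div_rpow (by positivity) (by norm_num)]
    have h1 : (c^t)^(1/t) = c := by
      rw [← Real.rpow_mul hc0.le, mul_one_div, div_self htne, Real.rpow_one]
    have h2 : (2:ℝ)^(-1/t) = ((2:ℝ)^(1/t))⁻¹ := by
      rw [neg_div, Real.rpow_neg (by norm_num)]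
    rw [h1, h2, div_eq_mul_inv, mul_comm]
  · -- case 2 : c^t < a^t + b^t
    set D : ℝ := 4*(a^t)*(b^t) - ((a^t)+(b^t)-(c^t))^2 with hDdef
    have halg : ∀ u v s : ℝ, 0 ≤ u → 0 ≤ v → 0 ≤ s → u + v + s = 1 →
        0 < D ∧ F u v s ≤ 2*(c^t)*(a^t)*(b^t)/D ∧
        (F u v s = 2*(c^t)*(a^t)*(b^t)/D →
          u = (a^t)*((c^t)+(b^t)-(a^t))/D ∧ v = (b^t)*((c^t)+(a^t)-(b^t))/D
            ∧ s = (c^t)*((a^t)+(b^t)-(c^t))/D) := by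
      intro u v s hu hv hs huvs
      have := Aux6.quadCase2 (c^t) (a^t) (b^t) u v s hα0 hβ0 hγ0 hβα hγα hcase hu hv hs huvs
      convert this using 3 <;> rw [hDdef] <;> ring_nf
    have hD0 : 0 < D := (halg 1 0 0 (by norm_num) le_rfl le_rfl (by norm_num)).1
    set u₀ : ℝ := (a^t)*((c^t)+(b^t)-(a^t))/D with hu₀def
    set v₀ : ℝ := (b^t)*((c^t)+(a^t)-(b^t))/D with hv₀def
    set s₀ : ℝ := (c^t)*((a^t)+(b^t)-(c^t))/D with hs₀def
    have hu₀ : 0 ≤ u₀ := by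
      apply div_nonneg _ hD0.le
      apply mul_nonneg hβ0.le
      linarith
    have hv₀ : 0 ≤ v₀ := by
      apply div_nonneg _ hD0.le
      apply mul_nonneg hγ0.le
      linarith
    have hs₀ : 0 ≤ s₀ := by
      apply div_nonneg _ hD0.le
      apply mul_nonneg hα0.le
      linarith
    have hsum₀ : u₀ + v₀ + s₀ = 1 := by
      rw [hu₀def, hv₀def, hs₀def]
      have hDne : D ≠ 0 := hD0.ne'
      field_simp
      rw [hDdef]
      ring
    have hattain : F u₀ v₀ s₀ = 2*(c^t)*(a^t)*(b^t)/D := by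
      rw [hF, hu₀def, hv₀def, hs₀def]
      have hDne : D ≠ 0 := hD0.ne'
      field_simp
      rw [hDdef]
      ring
    obtain ⟨hE, huni⟩ := main (2*(c^t)*(a^t)*(b^t)/D) u₀ v₀ s₀ hu₀ hv₀ hs₀ hsum₀
      (fun u v s hu hv hs huvs => (halg u v s hu hv hs huvs).2.1)
      hattain
      (fun u v s hu hv hs huvs heq => (halg u v s hu hv hs huvs).2.2 heq)
    refine ⟨fun hle => absurd hcase (not_lt.mpr hle), fun _ => ?_, huni⟩
    rw [Riesz.cap, if_neg hpne, hE, ENNReal.toReal_ofReal (by positivity), hexp]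
    have hDrw : 4*(a*b)^t - ((a^t)+(b^t)-(c^t))^2 = D := by
      rw [hDdef, Real.mul_rpow ha0.le hb0.le]
      ring
    rw [hDrw]
    rw [Real.div_rpow (by positivity) hD0.le,
      Real.mul_rpow (by positivity) hγ0.le,
      Real.mul_rpow (by positivity) hβ0.le,
      Real.mul_rpow (by norm_num) hα0.le]
    have hcc : (c^t)^(1/t) = c := by
      rw [← Real.rpow_mul hc0.le, mul_one_div, div_self htne, Real.rpow_one]
    have haa : (a^t)^(1/t) = a := by
      rw [← Real.rpow_mul ha0.le, mul_one_div, div_self htne, Real.rpow_one]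
    have hbb : (b^t)^(1/t) = b := by
      rw [← Real.rpow_mul hb0.le, mul_one_div, div_self htne, Real.rpow_one]
    rw [hcc, haa, hbb]
    rw [show (2:ℝ)^(1/t)*c*a*b = 2^(1/t)*a*b*c by ring]
end

section
/- Assume p < q < 0. If T ⊂ ℝ² is a two-point set or a three-point set, then (1/2)^{1/p − 1/q} ≤ cap_q(T)/cap_p(T) ≤ (2/3)^{1/p − 1/q}. The lower bound is attained in particular by every two-point set, and the upper bound is attained if and only if T is a regular three-point set. -/
open MeasureTheory Metric Set ENNReal Filter

noncomputable section

namespace RieszAux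

abbrev E2 := EuclideanSpace ℝ (Fin 2)

local instance : DecidableEq E2 := Classical.decEq _

variable {n : ℕ}

/-- quadratic energy form -/
def Q (r : ℝ) (P : Fin n → E2) (w : Fin n → ℝ) : ℝ :=
  ∑ i, ∑ j, w i * w j * dist (P i) (P j) ^ r

lemma Q_nonneg {r : ℝ} {P : Fin n → E2} {w : Fin n → ℝ} (hw : ∀ i, 0 ≤ w i) :
    0 ≤ Q r P w := by
  refine Finset.sum_nonneg fun i _ => Finset.sum_nonneg fun j _ => ?_
  exact mul_nonneg (mul_nonneg (hw i) (hw j)) (Real.rpow_nonneg dist_nonneg _)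

lemma Q_continuous (r : ℝ) (P : Fin n → E2) : Continuous fun w : Fin n → ℝ => Q r P w := by
  refine continuous_finset_sum _ fun i _ => continuous_finset_sum _ fun j _ => ?_
  exact ((continuous_apply i).mul (continuous_apply j)).mul continuous_const

lemma lintegral_eq_sum_of_null_compl (μ : Measure E2) (A : Finset E2)
    (hμ : μ (↑A : Set E2)ᶜ = 0) (g : E2 → ℝ≥0∞) :
    ∫⁻ x, g x ∂μ = ∑ a ∈ A, μ {a} * g a := by
  rw [← lintegral_add_compl g A.measurableSet,
    setLIntegral_measure_zero _ _ hμ, add_zero, lintegral_finset]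
  exact Finset.sum_congr rfl fun a _ => mul_comm _ _

lemma sum_weights (μ : Measure E2) (A : Finset E2) [IsProbabilityMeasure μ]
    (hμ : μ (↑A : Set E2)ᶜ = 0) : ∑ a ∈ A, μ {a} = 1 := by
  have := lintegral_eq_sum_of_null_compl μ A hμ 1
  simp only [Pi.one_apply, mul_one, lintegral_one, measure_univ] at this
  exact this.symm

lemma energyOf_eq (p : ℝ) (μ : Measure E2) (A : Finset E2) [IsProbabilityMeasure μ]
    (hμ : μ (↑A : Set E2)ᶜ = 0) :
    Riesz.energyOf p μ = ∑ a ∈ A, ∑ b ∈ A, μ {a} * μ {b} *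
      (ENNReal.ofReal (dist a b)) ^ (-p) := by
  have hker : Measurable fun z : E2 × E2 => (ENNReal.ofReal (dist z.1 z.2)) ^ (-p) :=
    measurable_dist.ennreal_ofReal.pow_const _
  rw [Riesz.energyOf, lintegral_prod _ hker.aemeasurable]
  rw [lintegral_eq_sum_of_null_compl μ A hμ]
  refine Finset.sum_congr rfl fun a _ => ?_
  rw [lintegral_eq_sum_of_null_compl μ A hμ, Finset.mul_sum]
  exact Finset.sum_congr rfl fun b _ => by ring

lemma range_eq_coe_image (P : Fin n → E2) :
    Set.range P = (↑(Finset.image P Finset.univ) : Set E2) := by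
  simp

/-- For a measure supported on the range of an injective tuple, the energy equals
`ofReal` of the quadratic form at the weight vector. -/
lemma energyOf_eq_ofReal_Q {p r : ℝ} (hr : r = -p) (hr0 : 0 < r)
    (P : Fin n → E2) (hP : Function.Injective P)
    (μ : Measure E2) [IsProbabilityMeasure μ] (hμ : μ (Set.range P)ᶜ = 0) :
    (fun i => (μ {P i}).toReal) ∈ stdSimplex ℝ (Fin n) ∧
    Riesz.energyOf p μ = ENNReal.ofReal (Q r P (fun i => (μ {P i}).toReal)) := by
  set A : Finset E2 := Finset.image P Finset.univ with hA
  have hμA : μ (↑A : Set E2)ᶜ = 0 := by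
    rw [hA, ← range_eq_coe_image]; exact hμ
  have hfin : ∀ a : E2, μ {a} ≠ ∞ := fun a => measure_ne_top μ _
  constructor
  · constructor
    · intro i; exact ENNReal.toReal_nonneg
    · have h1 : ∑ a ∈ A, μ {a} = 1 := sum_weights μ A hμA
      have h2 : ∑ a ∈ A, μ {a} = ∑ i : Fin n, μ {P i} := by
        rw [hA, Finset.sum_image (fun a _ b _ h => hP h)]
      rw [h2] at h1
      have := congrArg ENNReal.toReal h1
      rwa [ENNReal.toReal_sum (fun i _ => hfin _), ENNReal.toReal_one] at this
  · rw [energyOf_eq p μ A hμA, hA, Finset.sum_image (fun a _ b _ h => hP h)]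
    have : ∀ i : Fin n, (∑ b ∈ Finset.image P Finset.univ,
        μ {P i} * μ {b} * (ENNReal.ofReal (dist (P i) b)) ^ (-p)) =
        ∑ j : Fin n, μ {P i} * μ {P j} * (ENNReal.ofReal (dist (P i) (P j))) ^ (-p) := by
      intro i; rw [Finset.sum_image (fun a _ b _ h => hP h)]
    rw [Finset.sum_congr rfl fun i _ => this i]
    rw [Q, ENNReal.ofReal_sum_of_nonneg]
    · refine Finset.sum_congr rfl fun i _ => ?_
      rw [ENNReal.ofReal_sum_of_nonneg]
      · refine Finset.sum_congr rfl fun j _ => ?_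
        rw [ENNReal.ofReal_mul (by positivity), ENNReal.ofReal_mul ENNReal.toReal_nonneg,
          ENNReal.ofReal_toReal (hfin _), ENNReal.ofReal_toReal (hfin _),
          ← ENNReal.ofReal_rpow_of_nonneg dist_nonneg hr0.le, hr]
      · intro j _
        exact mul_nonneg (mul_nonneg ENNReal.toReal_nonneg ENNReal.toReal_nonneg)
          (Real.rpow_nonneg dist_nonneg _)
    · intro i _
      exact Finset.sum_nonneg fun j _ => mul_nonneg
        (mul_nonneg ENNReal.toReal_nonneg ENNReal.toReal_nonneg)
        (Real.rpow_nonneg dist_nonneg _)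

end RieszAux

end
namespace RieszAux

/-- Construct the discrete measure with given weights on the points of `P`. -/
lemma measure_of_weights (P : Fin n → E2) (hP : Function.Injective P)
    {w : Fin n → ℝ} (hw : w ∈ stdSimplex ℝ (Fin n)) :
    ∃ μ : Measure E2, IsProbabilityMeasure μ ∧ μ (Set.range P)ᶜ = 0 ∧
      ∀ i, μ {P i} = ENNReal.ofReal (w i) := by
  classical
  refine ⟨∑ i : Fin n, (ENNReal.ofReal (w i)) • Measure.dirac (P i), ?_, ?_, ?_⟩
  · constructor
    rw [Measure.coe_finset_sum]
    simp only [Finset.sum_apply, Measure.smul_apply, measure_univ, smul_eq_mul, mul_one]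
    rw [← ENNReal.ofReal_sum_of_nonneg (fun i _ => hw.1 i), hw.2, ENNReal.ofReal_one]
  · rw [Measure.coe_finset_sum]
    simp only [Finset.sum_apply, Measure.smul_apply, smul_eq_mul]
    refine Finset.sum_eq_zero fun i _ => ?_
    have hmeas : MeasurableSet (Set.range P)ᶜ :=
      ((Set.finite_range P).measurableSet).compl
    rw [Measure.dirac_apply' _ hmeas, Set.indicator_of_notMem (by simp) _, mul_zero]
  · intro i
    rw [Measure.coe_finset_sum]
    simp only [Finset.sum_apply, Measure.smul_apply, smul_eq_mul]
    rw [Finset.sum_eq_single i]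
    · rw [Measure.dirac_apply' _ (measurableSet_singleton _)]
      simp
    · intro j _ hj
      rw [Measure.dirac_apply' _ (measurableSet_singleton _)]
      rw [Set.indicator_of_notMem]
      · simp
      · simp only [Set.mem_singleton_iff]
        exact fun h => hj (hP h)
    · intro h; exact absurd (Finset.mem_univ i) h

end RieszAux
namespace RieszAux

lemma stdSimplex_nonempty (hn : n ≠ 0) : (stdSimplex ℝ (Fin n)).Nonempty := by
  refine ⟨fun _ => (n : ℝ)⁻¹, fun i => by positivity, ?_⟩
  rw [Finset.sum_const, Finset.card_univ, Fintype.card_fin, nsmul_eq_mul]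
  field_simp

lemma energy_cap_repr (p : ℝ) (hp : p < 0) (P : Fin n → E2)
    (hP : Function.Injective P) (hn : n ≠ 0) :
    ∃ w ∈ stdSimplex ℝ (Fin n), (∀ v ∈ stdSimplex ℝ (Fin n), Q (-p) P v ≤ Q (-p) P w) ∧
      Riesz.energy p (Set.range P) = ENNReal.ofReal (Q (-p) P w) ∧
      Riesz.cap p (Set.range P) = (Q (-p) P w) ^ ((1 : ℝ)/(-p)) := by
  have hr0 : (0 : ℝ) < -p := by linarith
  obtain ⟨w, hwmem, hwmax'⟩ := (isCompact_stdSimplex ℝ (Fin n)).exists_isMaxOn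
    (stdSimplex_nonempty hn) (Q_continuous (-p) P).continuousOn
  have hwmax : ∀ v ∈ stdSimplex ℝ (Fin n), Q (-p) P v ≤ Q (-p) P w :=
    fun v hv => hwmax' hv
  have henergy : Riesz.energy p (Set.range P) = ENNReal.ofReal (Q (-p) P w) := by
    rw [Riesz.energy, if_pos hp]
    apply le_antisymm
    · refine iSup₂_le fun μ hμ => ?_
      obtain ⟨hprob, hnull⟩ := hμ
      haveI := hprob
      obtain ⟨hmem, heq⟩ := energyOf_eq_ofReal_Q rfl hr0 P hP μ hnull
      rw [heq]
      exact ENNReal.ofReal_le_ofReal (hwmax _ hmem)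
    · obtain ⟨μ, hprob, hnull, hatom⟩ := measure_of_weights P hP hwmem
      haveI := hprob
      obtain ⟨hmem, heq⟩ := energyOf_eq_ofReal_Q rfl hr0 P hP μ hnull
      have hwt : (fun i => (μ {P i}).toReal) = w := by
        funext i; rw [hatom i, ENNReal.toReal_ofReal (hwmem.1 i)]
      rw [hwt] at heq
      exact le_iSup₂_of_le μ ⟨hprob, hnull⟩ heq.ge
  refine ⟨w, hwmem, hwmax, henergy, ?_⟩
  rw [Riesz.cap, if_neg hp.ne, henergy, ENNReal.toReal_ofReal (Q_nonneg hwmem.1)]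
  congr 1
  rw [div_neg, neg_div]

end RieszAux
namespace RieszAux

/-- Weighted Jensen / Hölder inequality used for the upper capacity bound. -/
lemma jensen_sum {ι : Type*} [Fintype ι] (c z : ι → ℝ) (hc : ∀ i, 0 ≤ c i)
    (hz : ∀ i, 0 ≤ z i) {t s : ℝ} (ht : 0 < t) (hts : t < s) :
    ∑ i, c i * z i ^ t ≤ (∑ i, c i * z i ^ s) ^ (t/s) * (∑ i, c i) ^ (1 - t/s) := by
  have hs : 0 < s := ht.trans hts
  set σ := ∑ i, c i with hσdef
  by_cases hσ : σ = 0
  · have hc0 : ∀ i, c i = 0 := by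
      intro i
      exact (Finset.sum_eq_zero_iff_of_nonneg (fun i _ => hc i)).1 hσ i (Finset.mem_univ i)
    have h1 : ∑ i, c i * z i ^ t = 0 := Finset.sum_eq_zero fun i _ => by rw [hc0 i, zero_mul]
    have h2 : (1 : ℝ) - t/s ≠ 0 := by
      have : t/s < 1 := (div_lt_one hs).2 hts
      linarith
    rw [h1, hσ, Real.zero_rpow h2, mul_zero]
  · have hσpos : 0 < σ := lt_of_le_of_ne (Finset.sum_nonneg fun i _ => hc i) (Ne.symm hσ)
    have hst : (1 : ℝ) ≤ s / t := by rw [le_div_iff₀ ht]; linarith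
    have key := Real.arith_mean_le_rpow_mean Finset.univ (fun i => c i / σ)
      (fun i => z i ^ t) (fun i _ => div_nonneg (hc i) hσpos.le)
      (by rw [← Finset.sum_div, ← hσdef, div_self hσ])
      (fun i _ => Real.rpow_nonneg (hz i) t) hst
    have hzz : ∀ i : ι, (z i ^ t) ^ (s/t) = z i ^ s := fun i => by
      rw [← Real.rpow_mul (hz i)]
      congr 1
      field_simp
    simp only [hzz, one_div_div] at key
    have hl : ∀ u : ι → ℝ, ∑ i, c i / σ * u i = (∑ i, c i * u i) / σ := by
      intro u
      rw [Finset.sum_div]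
      exact Finset.sum_congr rfl fun i _ => by ring
    rw [hl, hl] at key
    have hQs : 0 ≤ ∑ i, c i * z i ^ s :=
      Finset.sum_nonneg fun i _ => mul_nonneg (hc i) (Real.rpow_nonneg (hz i) s)
    have hσexp : σ ^ (1 - t/s) = σ / σ ^ (t/s) := by
      rw [Real.rpow_sub hσpos, Real.rpow_one]
    calc ∑ i, c i * z i ^ t = ((∑ i, c i * z i ^ t) / σ) * σ := by field_simp
      _ ≤ (((∑ i, c i * z i ^ s) / σ) ^ (t/s)) * σ :=
          mul_le_mul_of_nonneg_right key hσpos.le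
      _ = ((∑ i, c i * z i ^ s) ^ (t/s) / σ ^ (t/s)) * σ := by
          rw [Real.div_rpow hQs hσpos.le]
      _ = (∑ i, c i * z i ^ s) ^ (t/s) * (σ ^ (1 - t/s)) := by
          rw [hσexp]; ring

/-- Termwise bound `d^s ≤ M^(s-t) d^t`. -/
lemma rpow_le_factor {d M t s : ℝ} (hd : 0 ≤ d) (hdM : d ≤ M) (ht : 0 < t) (hts : t < s) :
    d ^ s ≤ M ^ (s - t) * d ^ t := by
  have hs : 0 < s := ht.trans hts
  have h1 : d ^ s = d ^ t * d ^ (s - t) := by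
    rw [← Real.rpow_add' hd (by rw [add_sub_cancel]; exact hs.ne')]
    congr 1; ring
  rw [h1, mul_comm]
  exact mul_le_mul_of_nonneg_right
    (Real.rpow_le_rpow hd hdM (by linarith)) (Real.rpow_nonneg hd t)

/-- Strict three-variable Jensen for `x ^ r`, `r > 1`. -/
lemma jensen3_strict {x y z r : ℝ} (hr : 1 < r) (hx : 0 ≤ x) (hy : 0 ≤ y) (hz : 0 ≤ z)
    (hxy : x ≠ y) : ((x + y + z)/3) ^ r < (x ^ r + y ^ r + z ^ r)/3 := by
  have hconv := strictConvexOn_rpow hr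
  have hmid : (0 : ℝ) ≤ (x + y)/2 := by linarith
  have h1 : ((x + y)/2) ^ r < (x ^ r + y ^ r)/2 := by
    have := hconv.2 (Set.mem_Ici.2 hx) (Set.mem_Ici.2 hy) hxy
      (by norm_num : (0:ℝ) < 1/2) (by norm_num : (0:ℝ) < 1/2) (by norm_num)
    simpa [smul_eq_mul] using by
      have h := this
      rw [show (1/2 : ℝ) • x + (1/2 : ℝ) • y = (x + y)/2 by simp [smul_eq_mul]; ring] at h
      rw [show (1/2 : ℝ) • (x ^ r) + (1/2 : ℝ) • (y ^ r) = (x ^ r + y ^ r)/2 by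
        simp [smul_eq_mul]; ring] at h
      exact h
  have h2 : ((x + y + z)/3) ^ r ≤ (2/3) * ((x + y)/2) ^ r + (1/3) * z ^ r := by
    have := hconv.convexOn.2 (Set.mem_Ici.2 hmid) (Set.mem_Ici.2 hz)
      (by norm_num : (0:ℝ) ≤ 2/3) (by norm_num : (0:ℝ) ≤ 1/3) (by norm_num)
    have heq : (2/3 : ℝ) • ((x + y)/2) + (1/3 : ℝ) • z = (x + y + z)/3 := by
      simp [smul_eq_mul]; ring
    rw [heq] at this
    simpa [smul_eq_mul] using this
  calc ((x + y + z)/3) ^ r ≤ (2/3) * ((x + y)/2) ^ r + (1/3) * z ^ r := h2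
    _ < (2/3) * ((x ^ r + y ^ r)/2) + (1/3) * z ^ r := by nlinarith
    _ = (x ^ r + y ^ r + z ^ r)/3 := by ring

/-- Equality in the three-variable power mean inequality forces all equal. -/
lemma mean_eq_implies_eq {x y z r : ℝ} (hr : 1 < r) (hx : 0 ≤ x) (hy : 0 ≤ y) (hz : 0 ≤ z)
    (h : ((x + y + z)/3) ^ r = (x ^ r + y ^ r + z ^ r)/3) : x = y ∧ y = z := by
  have hxy : x = y := by
    by_contra hne
    exact absurd h (jensen3_strict hr hx hy hz hne).ne
  subst hxy
  refine ⟨rfl, ?_⟩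
  by_contra hne
  have h' := jensen3_strict hr hx hz hx hne
  rw [show (x + z + x)/3 = (x + x + z)/3 by ring] at h'
  rw [h] at h'
  linarith

end RieszAux
namespace RieszAux

/-- Core scalar ratio bounds. -/
lemma ratio_bounds {t s Vs Vt M : ℝ} (ht : 0 < t) (hts : t < s) (hM : 0 < M) (hVs : 0 < Vs)
    (h1 : M ^ s ≤ 2 * Vs) (h2 : Vs * M ^ (t - s) ≤ Vt)
    (h3 : Vt ≤ Vs ^ (t/s) * (2/3 : ℝ) ^ (1 - t/s)) :
    0 < Vt ∧
    Vs ^ ((1:ℝ)/s) * (1/2 : ℝ) ^ (1/t - 1/s) ≤ Vt ^ ((1:ℝ)/t) ∧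
    Vt ^ ((1:ℝ)/t) ≤ Vs ^ ((1:ℝ)/s) * (2/3 : ℝ) ^ (1/t - 1/s) := by
  have hs : 0 < s := ht.trans hts
  have hVt : 0 < Vt := lt_of_lt_of_le (by positivity) h2
  have e1 : (t/s) * (1/t) = 1/s := by field_simp
  have e2 : (1 - t/s) * (1/t) = 1/t - 1/s := by rw [sub_mul, one_mul, e1]
  refine ⟨hVt, ?_, ?_⟩
  · -- lower bound
    have hMe : M ^ (t - s) = (M ^ s) ^ ((t - s)/s) := by
      rw [← Real.rpow_mul hM.le]
      congr 1
      field_simp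
    have step1 : (2 * Vs) ^ ((t - s)/s) ≤ M ^ (t - s) := by
      rw [hMe]
      exact Real.rpow_le_rpow_of_nonpos (by positivity) h1
        (by apply div_nonpos_of_nonpos_of_nonneg <;> linarith)
    have step2 : Vs * (2 * Vs) ^ ((t - s)/s) ≤ Vt :=
      le_trans (mul_le_mul_of_nonneg_left step1 hVs.le) h2
    have step3 : Vs * (2 * Vs) ^ ((t - s)/s)
        = 2 ^ ((t - s)/s) * Vs ^ (t/s) := by
      rw [Real.mul_rpow (by norm_num) hVs.le]
      have : Vs ^ (t/s) = Vs ^ (1 + (t - s)/s) := by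
        congr 1
        field_simp
        ring
      rw [this, Real.rpow_add hVs, Real.rpow_one]
      ring
    rw [step3] at step2
    have final := Real.rpow_le_rpow (by positivity) step2 (by positivity : (0:ℝ) ≤ 1/t)
    rw [Real.mul_rpow (by positivity) (by positivity), ← Real.rpow_mul (by norm_num : (0:ℝ) ≤ 2),
      ← Real.rpow_mul hVs.le, e1] at final
    have e3 : (t - s)/s * (1/t) = -(1/t - 1/s) := by rw [neg_sub]; field_simp
    rw [e3] at final
    have h12 : (1/2 : ℝ) ^ (1/t - 1/s) = 2 ^ (-(1/t - 1/s)) := by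
      rw [Real.rpow_neg (by norm_num), one_div, Real.inv_rpow (by norm_num)]
    rw [h12, mul_comm]
    exact final
  · -- upper bound
    have final := Real.rpow_le_rpow hVt.le h3 (by positivity : (0:ℝ) ≤ 1/t)
    rw [Real.mul_rpow (Real.rpow_nonneg hVs.le _) (Real.rpow_nonneg (by norm_num) _),
      ← Real.rpow_mul hVs.le, ← Real.rpow_mul (by norm_num : (0:ℝ) ≤ 2/3), e1, e2] at final
    exact final

end RieszAux
namespace RieszAux

lemma Q2_eq {r : ℝ} (hr : 0 < r) (x y : E2) (w : Fin 2 → ℝ) :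
    Q r ![x, y] w = 2 * (w 0 * w 1) * dist x y ^ r := by
  rw [Q, Fin.sum_univ_two, Fin.sum_univ_two, Fin.sum_univ_two]
  simp only [Matrix.cons_val_zero, Matrix.cons_val_one, Matrix.head_cons]
  rw [dist_self, dist_self, Real.zero_rpow hr.ne', dist_comm y x]
  ring

lemma Q3_eq {r : ℝ} (hr : 0 < r) (x y z : E2) (w : Fin 3 → ℝ) :
    Q r ![x, y, z] w = 2 * (w 0 * w 1 * dist x y ^ r + w 1 * w 2 * dist y z ^ r
      + w 0 * w 2 * dist x z ^ r) := by
  rw [Q, Fin.sum_univ_three, Fin.sum_univ_three, Fin.sum_univ_three, Fin.sum_univ_three]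
  simp only [Matrix.cons_val_zero, Matrix.cons_val_one, Matrix.head_cons,
    Matrix.cons_val_two, Matrix.tail_cons]
  rw [dist_self, dist_self, dist_self, Real.zero_rpow hr.ne',
    dist_comm y x, dist_comm z x, dist_comm z y]
  ring

lemma mem_simplex2 {u v : ℝ} (hu : 0 ≤ u) (hv : 0 ≤ v) (huv : u + v = 1) :
    ![u, v] ∈ stdSimplex ℝ (Fin 2) := by
  refine ⟨fun i => ?_, ?_⟩
  · fin_cases i <;> simpa
  · rw [Fin.sum_univ_two]
    simpa

lemma mem_simplex3 {u v w : ℝ} (hu : 0 ≤ u) (hv : 0 ≤ v) (hw : 0 ≤ w) (huv : u + v + w = 1) :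
    ![u, v, w] ∈ stdSimplex ℝ (Fin 3) := by
  refine ⟨fun i => ?_, ?_⟩
  · fin_cases i <;> simpa
  · rw [Fin.sum_univ_three]
    simpa

lemma simplex2_facts {w : Fin 2 → ℝ} (hw : w ∈ stdSimplex ℝ (Fin 2)) :
    0 ≤ w 0 ∧ 0 ≤ w 1 ∧ w 0 + w 1 = 1 :=
  ⟨hw.1 0, hw.1 1, by have := hw.2; rwa [Fin.sum_univ_two] at this⟩

lemma simplex3_facts {w : Fin 3 → ℝ} (hw : w ∈ stdSimplex ℝ (Fin 3)) :
    0 ≤ w 0 ∧ 0 ≤ w 1 ∧ 0 ≤ w 2 ∧ w 0 + w 1 + w 2 = 1 :=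
  ⟨hw.1 0, hw.1 1, hw.1 2, by have := hw.2; rwa [Fin.sum_univ_three] at this⟩

lemma range2 (x y : E2) : Set.range ![x, y] = ({x, y} : Set E2) := by
  ext e
  simp [Matrix.range_cons, Matrix.range_empty]
  tauto

lemma range3 (x y z : E2) : Set.range ![x, y, z] = ({x, y, z} : Set E2) := by
  ext e
  simp [Matrix.range_cons, Matrix.range_empty]
  tauto

lemma inj2 {x y : E2} (hxy : x ≠ y) : Function.Injective ![x, y] := by
  intro i j h
  fin_cases i <;> fin_cases j <;> simp_all

lemma inj3 {x y z : E2} (hxy : x ≠ y) (hyz : y ≠ z) (hxz : x ≠ z) :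
    Function.Injective ![x, y, z] := by
  intro i j h
  fin_cases i <;> fin_cases j <;> simp_all

lemma rpow_eq_of_rpow_eq {a b e : ℝ} (ha : 0 ≤ a) (hb : 0 ≤ b) (he : 0 < e)
    (h : a ^ e = b ^ e) : a = b := by
  have : a ^ (e * (1/e)) = b ^ (e * (1/e)) := by
    rw [Real.rpow_mul ha, Real.rpow_mul hb, h]
  rwa [mul_one_div_cancel he.ne', Real.rpow_one, Real.rpow_one] at this

end RieszAux
namespace RieszAux

lemma sigma3_le {w : Fin 3 → ℝ} (h0 : 0 ≤ w 0) (h1 : 0 ≤ w 1) (h2 : 0 ≤ w 2)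
    (hsum : w 0 + w 1 + w 2 = 1) :
    2 * (w 0 * w 1 + w 1 * w 2 + w 0 * w 2) ≤ 2/3 := by
  nlinarith [sq_nonneg (w 0 - w 1), sq_nonneg (w 1 - w 2), sq_nonneg (w 0 - w 2)]

/-- Exact capacity of a two-point set. -/
lemma cap_two (p : ℝ) (hp : p < 0) (x y : E2) (hxy : x ≠ y) :
    Riesz.cap p ({x, y} : Set E2) = (dist x y ^ (-p) / 2) ^ ((1:ℝ)/(-p)) := by
  have hr : (0:ℝ) < -p := by linarith
  obtain ⟨w, hwmem, hwmax, _, hcap⟩ := energy_cap_repr p hp ![x, y] (inj2 hxy) (by norm_num)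
  rw [← range2 x y, hcap]
  congr 1
  obtain ⟨h0, h1, hsum⟩ := simplex2_facts hwmem
  apply le_antisymm
  · rw [Q2_eq hr]
    have h4 : w 0 * w 1 ≤ 1/4 := by nlinarith [sq_nonneg (w 0 - w 1)]
    have hd : (0:ℝ) ≤ dist x y ^ (-p) := Real.rpow_nonneg dist_nonneg _
    nlinarith
  · have hm := hwmax ![1/2, 1/2] (mem_simplex2 (by norm_num) (by norm_num) (by norm_num))
    rw [Q2_eq hr] at hm
    simp only [Matrix.cons_val_zero, Matrix.cons_val_one, Matrix.head_cons] at hm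
    linarith

lemma two_ratio {d t s : ℝ} (hd : 0 < d) (ht : 0 < t) (hts : t < s) :
    ((d ^ t / 2) ^ ((1:ℝ)/t)) / ((d ^ s / 2) ^ ((1:ℝ)/s)) = (1/2 : ℝ) ^ (1/t - 1/s) := by
  have hs : 0 < s := ht.trans hts
  have key : ∀ u : ℝ, 0 < u → (d ^ u / 2) ^ ((1:ℝ)/u) = d * (1/2 : ℝ) ^ ((1:ℝ)/u) := by
    intro u hu
    rw [div_eq_mul_inv, ← one_div,
      Real.mul_rpow (Real.rpow_nonneg hd.le _) (by norm_num),
      ← Real.rpow_mul hd.le, mul_one_div_cancel hu.ne', Real.rpow_one]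
  rw [key t ht, key s hs, Real.rpow_sub (by norm_num : (0:ℝ) < 1/2)]
  have h2s : (0:ℝ) < (1/2 : ℝ) ^ ((1:ℝ)/s) := Real.rpow_pos_of_pos (by norm_num) _
  field_simp

/-- Exact capacity of an equilateral three-point set. -/
lemma cap_equilateral (p : ℝ) (hp : p < 0) (x y z : E2) (hd : 0 < dist x y)
    (hab : dist x y = dist y z) (hac : dist x y = dist z x) :
    Riesz.cap p ({x, y, z} : Set E2) = ((2/3) * dist x y ^ (-p)) ^ ((1:ℝ)/(-p)) := by
  have hr : (0:ℝ) < -p := by linarith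
  have hxy : x ≠ y := fun h => by simp [h] at hd
  have hyz : y ≠ z := by intro h; subst h; rw [dist_self] at hab; linarith
  have hxz : x ≠ z := by intro h; subst h; rw [dist_self] at hac; linarith
  have hb : dist y z = dist x y := hab.symm
  have hc : dist x z = dist x y := by rw [dist_comm]; exact hac.symm
  obtain ⟨w, hwmem, hwmax, _, hcap⟩ := energy_cap_repr p hp ![x, y, z]
    (inj3 hxy hyz hxz) (by norm_num)
  rw [← range3 x y z, hcap]
  congr 1
  obtain ⟨h0, h1, h2, hsum⟩ := simplex3_facts hwmem
  apply le_antisymm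
  · rw [Q3_eq hr, hb, hc]
    have hσ := sigma3_le h0 h1 h2 hsum
    have hD : (0:ℝ) ≤ dist x y ^ (-p) := Real.rpow_nonneg dist_nonneg _
    nlinarith [mul_nonneg (by linarith : (0:ℝ) ≤ 2/3 - 2 * (w 0 * w 1 + w 1 * w 2 + w 0 * w 2)) hD]
  · have hm := hwmax ![1/3, 1/3, 1/3]
      (mem_simplex3 (by norm_num) (by norm_num) (by norm_num) (by norm_num))
    rw [Q3_eq hr, hb, hc] at hm
    simp only [Matrix.cons_val_zero, Matrix.cons_val_one, Matrix.head_cons,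
      Matrix.cons_val_two, Matrix.tail_cons] at hm
    linarith

lemma eq_ratio {d t s : ℝ} (hd : 0 < d) (ht : 0 < t) (hts : t < s) :
    (((2/3) * d ^ t) ^ ((1:ℝ)/t)) / (((2/3) * d ^ s) ^ ((1:ℝ)/s)) = (2/3 : ℝ) ^ (1/t - 1/s) := by
  have hs : 0 < s := ht.trans hts
  have key : ∀ u : ℝ, 0 < u → ((2/3) * d ^ u) ^ ((1:ℝ)/u) = d * (2/3 : ℝ) ^ ((1:ℝ)/u) := by
    intro u hu
    rw [Real.mul_rpow (by norm_num) (Real.rpow_nonneg hd.le _),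
      ← Real.rpow_mul hd.le, mul_one_div_cancel hu.ne', Real.rpow_one, mul_comm]
  rw [key t ht, key s hs, Real.rpow_sub (by norm_num : (0:ℝ) < 2/3)]
  have h2s : (0:ℝ) < (2/3 : ℝ) ^ ((1:ℝ)/s) := Real.rpow_pos_of_pos (by norm_num) _
  field_simp

end RieszAux
namespace RieszAux

/-- Scalar version of the Jensen inequality for our three-pair sums. -/
lemma jensen3' {a b c t s : ℝ} (ha : 0 ≤ a) (hb : 0 ≤ b) (hc : 0 ≤ c)
    {u v w : ℝ} (hu : 0 ≤ u) (hv : 0 ≤ v) (hw : 0 ≤ w) (ht : 0 < t) (hts : t < s) :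
    2*(u*v*a^t + v*w*b^t + u*w*c^t) ≤
      (2*(u*v*a^s + v*w*b^s + u*w*c^s)) ^ (t/s) * (2*(u*v + v*w + u*w)) ^ (1 - t/s) := by
  have key := jensen_sum (ι := Fin 3) ![2*u*v, 2*v*w, 2*u*w] ![a, b, c]
    (by intro i; fin_cases i <;> simp <;> positivity)
    (by intro i; fin_cases i <;> simpa) ht hts
  rw [Fin.sum_univ_three, Fin.sum_univ_three, Fin.sum_univ_three] at key
  simp only [Matrix.cons_val_zero, Matrix.cons_val_one, Matrix.head_cons,
    Matrix.cons_val_two, Matrix.tail_cons] at key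
  rw [show 2*u*v*a^s + 2*v*w*b^s + 2*u*w*c^s = 2*(u*v*a^s + v*w*b^s + u*w*c^s) by ring,
    show 2*u*v + 2*v*w + 2*u*w = 2*(u*v + v*w + u*w) by ring] at key
  linarith

lemma sq3_zero {A B C : ℝ} (h : A^2 + B^2 + C^2 = 0) : A = 0 ∧ B = 0 ∧ C = 0 := by
  refine ⟨?_, ?_, ?_⟩ <;> nlinarith [sq_nonneg A, sq_nonneg B, sq_nonneg C]

set_option maxHeartbeats 1600000 in
/-- Core three-point lemma, phrased with positive parameters `t < s`. -/
lemma three_core (t s : ℝ) (ht : 0 < t) (hts : t < s) (x y z : E2)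
    (hxy : x ≠ y) (hyz : y ≠ z) (hxz : x ≠ z) :
    (0 < Riesz.cap (-s) ({x,y,z} : Set E2)) ∧
    ((1/2 : ℝ) ^ (1/t - 1/s) ≤
        Riesz.cap (-t) ({x,y,z} : Set E2) / Riesz.cap (-s) ({x,y,z} : Set E2) ∧
     Riesz.cap (-t) ({x,y,z} : Set E2) / Riesz.cap (-s) ({x,y,z} : Set E2)
        ≤ (2/3 : ℝ) ^ (1/t - 1/s)) ∧
    (Riesz.cap (-t) ({x,y,z} : Set E2) / Riesz.cap (-s) ({x,y,z} : Set E2)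
        = (2/3 : ℝ) ^ (1/t - 1/s) →
      dist x y = dist y z ∧ dist x y = dist x z) := by
  have hs : 0 < s := ht.trans hts
  set P : Fin 3 → E2 := ![x, y, z] with hP
  have hPinj := inj3 hxy hyz hxz
  obtain ⟨ws, hwsmem, hwsmax, _, hcaps⟩ :=
    energy_cap_repr (-s) (by linarith) P hPinj (by norm_num)
  obtain ⟨wt, hwtmem, hwtmax, _, hcapt⟩ :=
    energy_cap_repr (-t) (by linarith) P hPinj (by norm_num)
  rw [neg_neg] at hcaps hwsmax hcapt hwtmax
  rw [hP, range3] at hcaps hcapt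
  obtain ⟨s0, s1, s2, ssum⟩ := simplex3_facts hwsmem
  obtain ⟨t0, t1, t2, tsum⟩ := simplex3_facts hwtmem
  set a := dist x y with hadef
  set b := dist y z with hbdef
  set c := dist x z with hcdef
  have ha : 0 < a := dist_pos.2 hxy
  have hb : 0 < b := dist_pos.2 hyz
  have hc : 0 < c := dist_pos.2 hxz
  set M := max a (max b c) with hMdef
  have hM : 0 < M := lt_of_lt_of_le ha (le_max_left _ _)
  have haM : a ≤ M := le_max_left _ _
  have hbM : b ≤ M := le_trans (le_max_left _ _) (le_max_right _ _)
  have hcM : c ≤ M := le_trans (le_max_right _ _) (le_max_right _ _)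
  set Vs := Q s P ws with hVsdef
  set Vt := Q t P wt with hVtdef
  have hQs_eq : Vs = 2*(ws 0 * ws 1 * a^s + ws 1 * ws 2 * b^s + ws 0 * ws 2 * c^s) :=
    Q3_eq hs x y z ws
  have hQt_eq : Vt = 2*(wt 0 * wt 1 * a^t + wt 1 * wt 2 * b^t + wt 0 * wt 2 * c^t) :=
    Q3_eq ht x y z wt
  -- h1 : M^s ≤ 2 * Vs
  have h1 : M ^ s ≤ 2 * Vs := by
    have key : M ^ s / 2 ≤ Vs := by
      rcases max_cases a (max b c) with ⟨hM1, _⟩ | ⟨hM1, _⟩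
      · have hmax := hwsmax ![1/2, 1/2, 0]
          (mem_simplex3 (by norm_num) (by norm_num) (by norm_num) (by norm_num))
        rw [Q3_eq hs] at hmax
        simp only [Matrix.cons_val_zero, Matrix.cons_val_one, Matrix.head_cons,
          Matrix.cons_val_two, Matrix.tail_cons] at hmax
        rw [hMdef, hM1]
        linarith
      · rcases max_cases b c with ⟨hM2, _⟩ | ⟨hM2, _⟩
        · have hmax := hwsmax ![0, 1/2, 1/2]
            (mem_simplex3 (by norm_num) (by norm_num) (by norm_num) (by norm_num))
          rw [Q3_eq hs] at hmax
          simp only [Matrix.cons_val_zero, Matrix.cons_val_one, Matrix.head_cons,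
            Matrix.cons_val_two, Matrix.tail_cons] at hmax
          rw [hMdef, hM1, hM2]
          linarith
        · have hmax := hwsmax ![1/2, 0, 1/2]
            (mem_simplex3 (by norm_num) (by norm_num) (by norm_num) (by norm_num))
          rw [Q3_eq hs] at hmax
          simp only [Matrix.cons_val_zero, Matrix.cons_val_one, Matrix.head_cons,
            Matrix.cons_val_two, Matrix.tail_cons] at hmax
          rw [hMdef, hM1, hM2]
          linarith
    linarith
  have hVs : 0 < Vs := by
    have := Real.rpow_pos_of_pos hM s
    linarith
  -- h2 : Vs * M^(t-s) ≤ Vt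
  have h2 : Vs * M ^ (t - s) ≤ Vt := by
    have ta : a ^ s ≤ M ^ (s - t) * a ^ t := rpow_le_factor ha.le haM ht hts
    have tb : b ^ s ≤ M ^ (s - t) * b ^ t := rpow_le_factor hb.le hbM ht hts
    have tc : c ^ s ≤ M ^ (s - t) * c ^ t := rpow_le_factor hc.le hcM ht hts
    have hQtws : Q t P ws ≤ Vt := hwtmax ws hwsmem
    have hstep : Vs ≤ M ^ (s - t) * Q t P ws := by
      rw [hQs_eq, Q3_eq ht x y z ws]
      nlinarith [mul_le_mul_of_nonneg_left ta (mul_nonneg s0 s1),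
        mul_le_mul_of_nonneg_left tb (mul_nonneg s1 s2),
        mul_le_mul_of_nonneg_left tc (mul_nonneg s0 s2)]
    have hMst : (0:ℝ) < M ^ (s - t) := Real.rpow_pos_of_pos hM _
    have hMM : M ^ (s - t) * M ^ (t - s) = 1 := by
      rw [← Real.rpow_add hM]
      norm_num
    have := mul_le_mul_of_nonneg_right
      (hstep.trans (mul_le_mul_of_nonneg_left hQtws hMst.le))
      (Real.rpow_nonneg hM.le (t - s))
    calc Vs * M ^ (t - s) ≤ M ^ (s - t) * Vt * M ^ (t - s) := this
      _ = Vt * (M ^ (s - t) * M ^ (t - s)) := by ring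
      _ = Vt := by rw [hMM, mul_one]
  -- h3 : Vt ≤ Vs^(t/s) * (2/3)^(1-t/s)
  have hts1 : 0 ≤ 1 - t/s := by
    have : t/s < 1 := (div_lt_one hs).2 hts
    linarith
  have hσt : 2*(wt 0 * wt 1 + wt 1 * wt 2 + wt 0 * wt 2) ≤ 2/3 := by
    have := sigma3_le t0 t1 t2 tsum
    linarith
  have hσtnn : 0 ≤ 2*(wt 0 * wt 1 + wt 1 * wt 2 + wt 0 * wt 2) := by positivity
  have hjen := jensen3' ha.le hb.le hc.le t0 t1 t2 ht hts
  have hQswt_eq : 2*(wt 0 * wt 1 * a^s + wt 1 * wt 2 * b^s + wt 0 * wt 2 * c^s)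
      = Q s P wt := (Q3_eq hs x y z wt).symm
  have hQswtnn : 0 ≤ Q s P wt := Q_nonneg hwtmem.1
  have hQswtVs : Q s P wt ≤ Vs := hwsmax wt hwtmem
  have hjen' : Vt ≤ (Q s P wt) ^ (t/s) *
      (2*(wt 0 * wt 1 + wt 1 * wt 2 + wt 0 * wt 2)) ^ (1 - t/s) := by
    rw [hQt_eq, ← hQswt_eq]
    exact hjen
  have h3 : Vt ≤ Vs ^ (t/s) * (2/3 : ℝ) ^ (1 - t/s) :=
    hjen'.trans (mul_le_mul (Real.rpow_le_rpow hQswtnn hQswtVs (by positivity))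
      (Real.rpow_le_rpow hσtnn hσt hts1) (Real.rpow_nonneg hσtnn _)
      (Real.rpow_nonneg (le_trans hQswtnn hQswtVs) _))
  obtain ⟨hVt, hlow, hup⟩ := ratio_bounds ht hts hM hVs h1 h2 h3
  have hcapspos : 0 < Vs ^ ((1:ℝ)/s) := Real.rpow_pos_of_pos hVs _
  have hcaptpos : 0 < Vt ^ ((1:ℝ)/t) := Real.rpow_pos_of_pos hVt _
  rw [hcaps, hcapt]
  refine ⟨hcapspos, ⟨?_, ?_⟩, ?_⟩
  · rw [le_div_iff₀ hcapspos, mul_comm]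
    exact hlow
  · rw [div_le_iff₀ hcapspos, mul_comm ((2/3:ℝ) ^ _) _]
    exact hup
  · -- equality analysis
    intro heq
    rw [div_eq_iff hcapspos.ne'] at heq
    -- heq : Vt ^ (1/t) = (2/3)^(1/t - 1/s) * Vs ^ (1/s)
    have hVt_eq : Vt = Vs ^ (t/s) * (2/3 : ℝ) ^ (1 - t/s) := by
      have h1' := congrArg (fun u : ℝ => u ^ t) heq
      rw [← Real.rpow_mul hVt.le, one_div_mul_cancel ht.ne', Real.rpow_one] at h1'
      rw [Real.mul_rpow (Real.rpow_nonneg (by norm_num : (0:ℝ) ≤ 2/3) _)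
          (Real.rpow_nonneg hVs.le _),
        ← Real.rpow_mul (by norm_num : (0:ℝ) ≤ 2/3), ← Real.rpow_mul hVs.le] at h1'
      rw [show (1/t - 1/s) * t = 1 - t/s by field_simp,
        show (1/s : ℝ) * t = t/s by ring] at h1'
      rw [h1']
      ring
    have h1ts : 0 < 1 - t/s := by
      have : t/s < 1 := (div_lt_one hs).2 hts
      linarith
    have hBC : Vs ^ (t/s) * (2*(wt 0 * wt 1 + wt 1 * wt 2 + wt 0 * wt 2)) ^ (1 - t/s) = Vs ^ (t/s) * (2/3:ℝ) ^ (1 - t/s) := by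
      refine le_antisymm (mul_le_mul_of_nonneg_left
        (Real.rpow_le_rpow hσtnn hσt hts1) (Real.rpow_nonneg hVs.le _)) ?_
      calc Vs^(t/s) * (2/3:ℝ)^(1-t/s) = Vt := hVt_eq.symm
        _ ≤ (Q s P wt)^(t/s) * (2*(wt 0 * wt 1 + wt 1 * wt 2 + wt 0 * wt 2))^(1-t/s) := hjen'
        _ ≤ Vs^(t/s) * (2*(wt 0 * wt 1 + wt 1 * wt 2 + wt 0 * wt 2))^(1-t/s) := mul_le_mul_of_nonneg_right
            (Real.rpow_le_rpow hQswtnn hQswtVs (by positivity))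
            (Real.rpow_nonneg hσtnn _)
    have hVsts : (0:ℝ) < Vs ^ (t/s) := Real.rpow_pos_of_pos hVs _
    have hσeq' : (2*(wt 0 * wt 1 + wt 1 * wt 2 + wt 0 * wt 2)) ^ (1 - t/s) = (2/3:ℝ) ^ (1 - t/s) := mul_left_cancel₀ hVsts.ne' hBC
    have hσeq : (2*(wt 0 * wt 1 + wt 1 * wt 2 + wt 0 * wt 2)) = 2/3 := rpow_eq_of_rpow_eq hσtnn (by norm_num) h1ts hσeq'
    have hAB : (Q s P wt) ^ (t/s) * (2*(wt 0 * wt 1 + wt 1 * wt 2 + wt 0 * wt 2)) ^ (1 - t/s) = Vs ^ (t/s) * (2*(wt 0 * wt 1 + wt 1 * wt 2 + wt 0 * wt 2)) ^ (1 - t/s) := by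
      refine le_antisymm (mul_le_mul_of_nonneg_right
        (Real.rpow_le_rpow hQswtnn hQswtVs (by positivity))
        (Real.rpow_nonneg hσtnn _)) ?_
      calc Vs^(t/s) * (2*(wt 0 * wt 1 + wt 1 * wt 2 + wt 0 * wt 2))^(1-t/s) = Vs^(t/s) * (2/3:ℝ)^(1-t/s) := by rw [hσeq']
        _ = Vt := hVt_eq.symm
        _ ≤ (Q s P wt)^(t/s) * (2*(wt 0 * wt 1 + wt 1 * wt 2 + wt 0 * wt 2))^(1-t/s) := hjen'
    have hσpow : (0:ℝ) < (2*(wt 0 * wt 1 + wt 1 * wt 2 + wt 0 * wt 2)) ^ (1-t/s) := by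
      rw [hσeq]
      positivity
    have hQsVs' : (Q s P wt) ^ (t/s) = Vs ^ (t/s) := mul_right_cancel₀ hσpow.ne' hAB
    have hQsVs : Q s P wt = Vs := rpow_eq_of_rpow_eq hQswtnn hVs.le (by positivity) hQsVs'
    -- wt is the uniform weight
    have hσ2 : wt 0 * wt 1 + wt 1 * wt 2 + wt 0 * wt 2 = 1/3 := by
      linear_combination hσeq / 2
    have keysq : (wt 0 - wt 1)^2 + (wt 1 - wt 2)^2 + (wt 0 - wt 2)^2 = 0 := by
      linear_combination (2*(wt 0 + wt 1 + wt 2) + 2) * tsum - 6 * hσ2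
    obtain ⟨h01, h12, _⟩ := sq3_zero keysq
    have hw0 : wt 0 = 1/3 := by linear_combination (2*h01 + h12 + tsum)/3
    have hw1 : wt 1 = 1/3 := by linear_combination (-h01 + h12 + tsum)/3
    have hw2 : wt 2 = 1/3 := by linear_combination (-h01 - 2*h12 + tsum)/3
    have hVt3 : Vt = 2/9 * (a^t + b^t + c^t) := by
      rw [hQt_eq, hw0, hw1, hw2]
      ring
    have hVs3 : Vs = 2/9 * (a^s + b^s + c^s) := by
      rw [← hQsVs, Q3_eq hs x y z wt, hw0, hw1, hw2]
      ring
    have hmain : (a^t + b^t + c^t)/3 = ((a^s + b^s + c^s)/3) ^ (t/s) := by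
      have h := hVt_eq
      rw [hVt3, hVs3] at h
      rw [show (2/9 : ℝ) * (a^s + b^s + c^s) = (2/3) * ((a^s + b^s + c^s)/3) by ring] at h
      rw [Real.mul_rpow (by norm_num : (0:ℝ) ≤ 2/3) (by positivity)] at h
      have h23 : ((2:ℝ)/3)^(t/s) * ((2:ℝ)/3)^(1-t/s) = 2/3 := by
        rw [← Real.rpow_add (by norm_num : (0:ℝ) < 2/3)]
        norm_num
      rw [show ((2:ℝ)/3)^(t/s) * (((a^s+b^s+c^s)/3):ℝ)^(t/s) * ((2:ℝ)/3)^(1-t/s)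
        = (((2:ℝ)/3)^(t/s) * ((2:ℝ)/3)^(1-t/s)) * ((a^s+b^s+c^s)/3)^(t/s) by ring, h23] at h
      linear_combination (3/2 : ℝ) * h
    have hmean : ((a^t + b^t + c^t)/3) ^ (s/t) = (a^s + b^s + c^s)/3 := by
      rw [hmain, ← Real.rpow_mul (by positivity),
        show (t/s)*(s/t) = 1 by field_simp, Real.rpow_one]
    have hr1 : 1 < s/t := (one_lt_div ht).2 hts
    have hXa : (a^t)^(s/t) = a^s := by
      rw [← Real.rpow_mul ha.le]
      congr 1
      field_simp
    have hXb : (b^t)^(s/t) = b^s := by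
      rw [← Real.rpow_mul hb.le]
      congr 1
      field_simp
    have hXc : (c^t)^(s/t) = c^s := by
      rw [← Real.rpow_mul hc.le]
      congr 1
      field_simp
    rw [← hXa, ← hXb, ← hXc] at hmean
    obtain ⟨hXY, hYZ⟩ := mean_eq_implies_eq hr1 (Real.rpow_nonneg ha.le t)
      (Real.rpow_nonneg hb.le t) (Real.rpow_nonneg hc.le t) hmean
    have hab' : a = b := rpow_eq_of_rpow_eq ha.le hb.le ht hXY
    have hbc' : b = c := rpow_eq_of_rpow_eq hb.le hc.le ht hYZ
    exact ⟨hab', hab'.trans hbc'⟩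

end RieszAux
/-- A regular three-point set in the plane: three points with equal positive
pairwise distances. -/
def IsRegularThreePoint (S : Set (EuclideanSpace ℝ (Fin 2))) : Prop :=
  ∃ x y z : EuclideanSpace ℝ (Fin 2), S = {x, y, z} ∧ 0 < dist x y ∧
    dist x y = dist y z ∧ dist x y = dist z x

namespace RieszAux

lemma delta_pos {p q : ℝ} (hpq : p < q) (hq : q < 0) : 0 < 1/p - 1/q := by
  have hp : p < 0 := hpq.trans hq
  have hpq0 : 0 < p*q := mul_pos_of_neg_of_neg hp hq
  rw [div_sub_div _ _ (ne_of_lt hp) (ne_of_lt hq), one_mul, mul_one]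
  exact div_pos (by linarith) hpq0

lemma two_main (p q : ℝ) (hpq : p < q) (hq : q < 0) (x y : E2) (hxy : x ≠ y) :
    Riesz.cap q ({x,y} : Set E2) / Riesz.cap p ({x,y} : Set E2)
      = (1/2 : ℝ) ^ (1/p - 1/q) := by
  have hp : p < 0 := hpq.trans hq
  rw [cap_two q hq x y hxy, cap_two p hp x y hxy,
    show (1/p - 1/q : ℝ) = 1/(-q) - 1/(-p) by ring]
  exact two_ratio (dist_pos.2 hxy) (by linarith) (by linarith)

lemma equilateral_main (p q : ℝ) (hpq : p < q) (hq : q < 0) (x y z : E2)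
    (hd : 0 < dist x y) (hab : dist x y = dist y z) (hac : dist x y = dist z x) :
    Riesz.cap q ({x,y,z} : Set E2) / Riesz.cap p ({x,y,z} : Set E2)
      = (2/3 : ℝ) ^ (1/p - 1/q) := by
  have hp : p < 0 := hpq.trans hq
  rw [cap_equilateral q hq x y z hd hab hac, cap_equilateral p hp x y z hd hab hac,
    show (1/p - 1/q : ℝ) = 1/(-q) - 1/(-p) by ring]
  exact eq_ratio hd (by linarith) (by linarith)

lemma not_regular_two {x y : E2} (hxy : x ≠ y) :
    ¬ IsRegularThreePoint ({x, y} : Set E2) := by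
  rintro ⟨x', y', z', hS, hd, hab, hac⟩
  have hx'y' : x' ≠ y' := fun h => by rw [h, dist_self] at hd; exact lt_irrefl _ hd
  have hy'z' : y' ≠ z' := by intro h; subst h; rw [dist_self] at hab; linarith
  have hx'z' : x' ≠ z' := by intro h; rw [← h] at hac; rw [dist_self] at hac; linarith
  have h3 : ({x', y', z'} : Set E2).encard = 3 := by
    rw [Set.encard_insert_of_notMem (by simp [hx'y', hx'z']), Set.encard_pair hy'z']
    rfl
  have h2 : ({x, y} : Set E2).encard = 2 := Set.encard_pair hxy
  rw [hS, h3] at h2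
  norm_num at h2

lemma three_glue (p q : ℝ) (hpq : p < q) (hq : q < 0) (x y z : E2)
    (hxy : x ≠ y) (hyz : y ≠ z) (hxz : x ≠ z) :
    (0 < Riesz.cap p ({x,y,z} : Set E2)) ∧
    ((1/2 : ℝ) ^ (1/p - 1/q) ≤
        Riesz.cap q ({x,y,z} : Set E2) / Riesz.cap p ({x,y,z} : Set E2) ∧
     Riesz.cap q ({x,y,z} : Set E2) / Riesz.cap p ({x,y,z} : Set E2)
        ≤ (2/3 : ℝ) ^ (1/p - 1/q)) ∧
    (Riesz.cap q ({x,y,z} : Set E2) / Riesz.cap p ({x,y,z} : Set E2)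
        = (2/3 : ℝ) ^ (1/p - 1/q) →
      dist x y = dist y z ∧ dist x y = dist x z) := by
  have hp : p < 0 := hpq.trans hq
  have h := three_core (-q) (-p) (by linarith) (by linarith) x y z hxy hyz hxz
  simp only [neg_neg] at h
  rwa [show (1/(-q) - 1/(-p) : ℝ) = 1/p - 1/q by ring] at h

end RieszAux
/-- For `p < q < 0` and `T ⊂ ℝ²` a two-point or three-point set:
`(1/2)^(1/p-1/q) ≤ cap_q(T)/cap_p(T) ≤ (2/3)^(1/p-1/q)`; the lower bound is attained by
every two-point set, and the upper bound is attained iff `T` is a regular three-point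
set. -/
theorem statement7 (p q : ℝ) (hpq : p < q) (hq : q < 0)
    (T : Set (EuclideanSpace ℝ (Fin 2)))
    (hT : (∃ x y : EuclideanSpace ℝ (Fin 2), x ≠ y ∧ T = {x, y}) ∨
          (∃ x y z : EuclideanSpace ℝ (Fin 2),
            x ≠ y ∧ y ≠ z ∧ x ≠ z ∧ T = {x, y, z})) :
    ((1 / 2 : ℝ) ^ (1 / p - 1 / q) ≤ Riesz.cap q T / Riesz.cap p T ∧
      Riesz.cap q T / Riesz.cap p T ≤ (2 / 3 : ℝ) ^ (1 / p - 1 / q)) ∧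
    ((∃ x y : EuclideanSpace ℝ (Fin 2), x ≠ y ∧ T = {x, y}) →
      Riesz.cap q T / Riesz.cap p T = (1 / 2 : ℝ) ^ (1 / p - 1 / q)) ∧
    (Riesz.cap q T / Riesz.cap p T = (2 / 3 : ℝ) ^ (1 / p - 1 / q) ↔
      IsRegularThreePoint T) := by
  have hδ : 0 < 1/p - 1/q := RieszAux.delta_pos hpq hq
  have hhalf_lt : ((1:ℝ)/2) ^ (1/p - 1/q) < ((2:ℝ)/3) ^ (1/p - 1/q) :=
    Real.rpow_lt_rpow (by norm_num) (by norm_num) hδ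
  rcases hT with ⟨x, y, hxy, rfl⟩ | ⟨x, y, z, hxy, hyz, hxz, rfl⟩
  · -- two-point case
    have hratio := RieszAux.two_main p q hpq hq x y hxy
    refine ⟨⟨hratio.ge, by rw [hratio]; exact hhalf_lt.le⟩, fun _ => hratio, ?_, ?_⟩
    · intro h
      rw [hratio] at h
      exact absurd h hhalf_lt.ne
    · intro hreg
      exact absurd hreg (RieszAux.not_regular_two hxy)
  · -- three-point case
    obtain ⟨hcappos, ⟨hl, hu⟩, himp⟩ := RieszAux.three_glue p q hpq hq x y z hxy hyz hxz
    refine ⟨⟨hl, hu⟩, ?_, ?_, ?_⟩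
    · rintro ⟨x', y', hxy', hTeq⟩
      rw [hTeq]
      exact RieszAux.two_main p q hpq hq x' y' hxy'
    · intro h
      obtain ⟨hab, hac⟩ := himp h
      exact ⟨x, y, z, rfl, dist_pos.2 hxy, hab, by rw [hac, dist_comm]⟩
    · rintro ⟨x', y', z', hTeq, hd, hab, hac⟩
      rw [hTeq]
      exact RieszAux.equilateral_main p q hpq hq x' y' z' hd hab hac
end
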